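/- arXiv:2009.02323 — 4 statements merged into one kernel-verified Lean document; each statement's English description precedes it below -/
import Mathlib

section
/- For every integer d ≥ 2 and every ε ∈ (0,1) there exists a constant C > 0 (depending only on d and ε) such that for all (ℓ,m) ∈ I_d with 0 < m ≤ εℓ and all x ∈ (−1,1) with (1−x²)^{1/2} ≤ b_{ℓ,m}/(2e), one has |X̃^d_{ℓ,m}(x)| ≤ C 2^{−m} ℓ^{(d−1)/2}. -/
open Real Set

/-- Jacobi polynomial `P_j^{(α,α)}` via Rodrigues' formula. -/
noncomputable def jacobiP (j : ℕ) (α : ℝ) (x : ℝ) : ℝ :=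
  ((-1 : ℝ) ^ j / (2 ^ j * (Nat.factorial j : ℝ))) * (1 - x ^ 2) ^ (-α) *
    iteratedDeriv j (fun t : ℝ => (1 - t ^ 2) ^ (α + (j : ℝ))) x

/-- The normalization constant `c_{ℓm}`. -/
noncomputable def cConst (ℓ m : ℝ) : ℝ :=
  Real.sqrt (ℓ * Real.Gamma (ℓ - m + 1/2) * Real.Gamma (ℓ + m + 1/2)) /
    ((2 : ℝ) ^ m * Real.Gamma (ℓ + 1/2))

/-- The function `Y_{ℓ,m}`. -/
noncomputable def Yfun (ℓ m x : ℝ) : ℝ :=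
  cConst ℓ m * (1 - x ^ 2) ^ (m / 2) * jacobiP ⌊ℓ - m - 1/2⌋₊ m x

/-- Membership in the index set `I = {(ℓ,m) ∈ (ℕ/2)² : ℓ - m - 1/2 ∈ ℕ}`. -/
def memI (ℓ m : ℝ) : Prop :=
  (∃ n : ℕ, m = (n : ℝ) / 2) ∧ (∃ j : ℕ, ℓ - m - 1/2 = (j : ℝ))

/-- `b_{ℓ,m} = m / ℓ`. -/
noncomputable def bPt (ℓ m : ℝ) : ℝ := m / ℓ

/-- `a_{ℓ,m} = (1 - b_{ℓ,m}²)^{1/2}`. -/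
noncomputable def aPt (ℓ m : ℝ) : ℝ := Real.sqrt (1 - bPt ℓ m ^ 2)

/-- Membership in `ℕ_k = ℕ + (k-1)/2`. -/
def memNk (k : ℕ) (t : ℝ) : Prop := ∃ n : ℕ, t = (n : ℝ) + ((k : ℝ) - 1) / 2

/-- Membership in `I_d`. -/
def memId (d : ℕ) (ℓ m : ℝ) : Prop := memNk d ℓ ∧ memNk (d - 1) m ∧ m ≤ ℓ

/-- The function `X̃^d_{ℓ,m}`. -/
noncomputable def Xtilde (d : ℕ) (ℓ m x : ℝ) : ℝ :=
  (1 - x ^ 2) ^ (-((d : ℝ) - 2) / 4) * Yfun ℓ m x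


set_option maxHeartbeats 1000000

open Finset in
noncomputable def ff (β : ℝ) (k : ℕ) : ℝ := ∏ i ∈ Finset.range k, (β - i)

lemma ff_succ (β : ℝ) (k : ℕ) : ff β (k+1) = ff β k * (β - k) := Finset.prod_range_succ _ _

lemma ff_pos {β : ℝ} {j k : ℕ} (hk : k ≤ j) (h : 0 < β - j + 1) : 0 < ff β k := by
  apply Finset.prod_pos
  intro i hi
  simp only [Finset.mem_range] at hi
  have : (i:ℝ) ≤ (j:ℝ) - 1 := by
    have : i + 1 ≤ j := le_trans hi hk
    have := Nat.cast_le (α := ℝ) |>.mpr this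
    push_cast at this ⊢; linarith
  linarith

lemma ff_le_pow {β L : ℝ} {j k : ℕ} (hk : k ≤ j) (h : 0 < β - j + 1) (hL : β ≤ L) :
    ff β k ≤ L ^ k := by
  have := ff_pos hk h
  calc ff β k ≤ ∏ i ∈ Finset.range k, L := by
        apply Finset.prod_le_prod
        · intro i hi
          simp only [Finset.mem_range] at hi
          have : (i:ℝ) ≤ (j:ℝ) - 1 := by
            have : i + 1 ≤ j := le_trans hi hk
            have := Nat.cast_le (α := ℝ) |>.mpr this
            push_cast at this ⊢; linarith
          linarith
        · intro i hi
          have : (0:ℝ) ≤ i := Nat.cast_nonneg i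
          linarith
    _ = L ^ k := by rw [Finset.prod_const, Finset.card_range]

lemma ff_ratio {β c : ℝ} {j k : ℕ} (hk : k ≤ j) (h : c ≤ β - j + 1) (hc : 0 < c) :
    ff β k * c ^ (j - k) ≤ ff β j := by
  have hsplit : ff β j = ff β k * ∏ i ∈ Finset.Ico k j, (β - i) := by
    rw [ff, ff, Finset.range_eq_Ico,
      ← Finset.prod_Ico_consecutive _ (Nat.zero_le k) hk, ← Finset.range_eq_Ico]
  rw [hsplit]
  have hffk : 0 < ff β k := ff_pos hk (by linarith)
  apply mul_le_mul_of_nonneg_left _ hffk.le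
  calc c ^ (j - k) = ∏ i ∈ Finset.Ico k j, c := by
        rw [Finset.prod_const, Nat.card_Ico]
    _ ≤ ∏ i ∈ Finset.Ico k j, (β - i) := by
        apply Finset.prod_le_prod
        · intro i hi; exact hc.le
        · intro i hi
          simp only [Finset.mem_Ico] at hi
          have : (i:ℝ) ≤ (j:ℝ) - 1 := by
            have : i + 1 ≤ j := hi.2
            have := Nat.cast_le (α := ℝ) |>.mpr this
            push_cast at this ⊢; linarith
          linarith

lemma iter_one_sub (β : ℝ) (k : ℕ) : ∀ t : ℝ, t < 1 →
    iteratedDeriv k (fun s : ℝ => (1 - s) ^ β) t = (-1)^k * ff β k * (1 - t) ^ (β - k) := by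
  induction k with
  | zero => intro t ht; simp [ff, iteratedDeriv_zero]
  | succ k ih =>
    intro t ht
    rw [iteratedDeriv_succ]
    have hev : iteratedDeriv k (fun s : ℝ => (1 - s) ^ β)
        =ᶠ[nhds t] fun t => (-1)^k * ff β k * (1 - t) ^ (β - k) := by
      filter_upwards [Iio_mem_nhds ht] using ih
    rw [hev.deriv_eq]
    have hd : HasDerivAt (fun s : ℝ => (1 - s) ^ (β - k))
        ((-1) * (β - k) * (1 - t) ^ (β - k - 1)) t := by
      have hb : HasDerivAt (fun s : ℝ => 1 - s) (-1) t := (hasDerivAt_id t).const_sub 1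
      exact hb.rpow_const (Or.inl (by linarith : (0:ℝ) < 1 - t).ne')
    rw [((hd.const_mul ((-1:ℝ)^k * ff β k))).deriv]
    rw [ff_succ]
    have : β - k - 1 = β - (k+1 : ℕ) := by push_cast; ring
    rw [this]; ring

lemma iter_one_add (β : ℝ) (k : ℕ) : ∀ t : ℝ, -1 < t →
    iteratedDeriv k (fun s : ℝ => (1 + s) ^ β) t = ff β k * (1 + t) ^ (β - k) := by
  induction k with
  | zero => intro t ht; simp [ff, iteratedDeriv_zero]
  | succ k ih =>
    intro t ht
    rw [iteratedDeriv_succ]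
    have hev : iteratedDeriv k (fun s : ℝ => (1 + s) ^ β)
        =ᶠ[nhds t] fun t => ff β k * (1 + t) ^ (β - k) := by
      filter_upwards [Ioi_mem_nhds ht] using ih
    rw [hev.deriv_eq]
    have hd : HasDerivAt (fun s : ℝ => (1 + s) ^ (β - k))
        (1 * (β - k) * (1 + t) ^ (β - k - 1)) t := by
      have hb : HasDerivAt (fun s : ℝ => 1 + s) 1 t := (hasDerivAt_id t).const_add 1
      exact hb.rpow_const (Or.inl (by linarith : (0:ℝ) < 1 + t).ne')
    rw [((hd.const_mul (ff β k))).deriv]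
    rw [ff_succ]
    have : β - k - 1 = β - (k+1 : ℕ) := by push_cast; ring
    rw [this]; ring

lemma contDiffOn_one_sub (β : ℝ) (n : ℕ) :
    ContDiffOn ℝ n (fun s : ℝ => (1 - s) ^ β) (Set.Ioo (-1:ℝ) 1) := by
  intro t ht
  apply ContDiffAt.contDiffWithinAt
  have h1 : (1 : ℝ) - t ≠ 0 := (by linarith [ht.2] : (0:ℝ) < 1 - t).ne'
  exact (Real.contDiffAt_rpow_const_of_ne h1).comp t
    ((contDiff_const.sub contDiff_id).contDiffAt)

lemma contDiffOn_one_add (β : ℝ) (n : ℕ) :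
    ContDiffOn ℝ n (fun s : ℝ => (1 + s) ^ β) (Set.Ioo (-1:ℝ) 1) := by
  intro t ht
  apply ContDiffAt.contDiffWithinAt
  have h1 : (1 : ℝ) + t ≠ 0 := (by linarith [ht.1] : (0:ℝ) < 1 + t).ne'
  exact (Real.contDiffAt_rpow_const_of_ne h1).comp t
    ((contDiff_const.add contDiff_id).contDiffAt)

lemma iterF_bound (β : ℝ) (j : ℕ) {x : ℝ} (hx : x ∈ Set.Ioo (-1:ℝ) 1) :
    |iteratedDeriv j (fun t : ℝ => (1 - t ^ 2) ^ β) x| ≤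
      ∑ k ∈ Finset.range (j+1), (j.choose k : ℝ) *
        (|ff β k| * (1 - x) ^ (β - k)) * (|ff β (j-k)| * (1 + x) ^ (β - (j-k))) := by
  set s : Set ℝ := Set.Ioo (-1:ℝ) 1 with hs
  have hso : IsOpen s := isOpen_Ioo
  have hsu : UniqueDiffOn ℝ s := hso.uniqueDiffOn
  have hEq : Set.EqOn (fun t : ℝ => (1 - t ^ 2) ^ β)
      (fun t : ℝ => ((1 - t) ^ β) * ((1 + t) ^ β)) s := by
    intro t ht
    have h1 : (0:ℝ) ≤ 1 - t := by linarith [ht.2]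
    have h2 : (0:ℝ) ≤ 1 + t := by linarith [ht.1]
    simp only
    rw [← Real.mul_rpow h1 h2]
    congr 1; ring
  have key : |iteratedDeriv j (fun t : ℝ => (1 - t ^ 2) ^ β) x| =
      ‖iteratedFDerivWithin ℝ j (fun t : ℝ => ((1 - t) ^ β) * ((1 + t) ^ β)) s x‖ := by
    rw [← iteratedFDerivWithin_congr hEq hx j, iteratedFDerivWithin_of_isOpen j hso hx,
      norm_iteratedFDeriv_eq_norm_iteratedDeriv, Real.norm_eq_abs]
  rw [key]
  have hu := contDiffOn_one_sub β j
  have hv := contDiffOn_one_add β j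
  have hmul := norm_iteratedFDerivWithin_mul_le (𝕜 := ℝ)
    (f := fun t : ℝ => (1 - t) ^ β) (g := fun t : ℝ => (1 + t) ^ β) (N := (j : WithTop ℕ∞))
    hu hv hsu hx (le_refl (j : WithTop ℕ∞))
  refine le_trans hmul (Finset.sum_le_sum ?_)
  intro k hk
  simp only [Finset.mem_range] at hk
  have hku : ‖iteratedFDerivWithin ℝ k (fun t : ℝ => (1 - t) ^ β) s x‖ =
      |ff β k| * (1 - x) ^ (β - k) := by
    rw [iteratedFDerivWithin_of_isOpen k hso hx,
      norm_iteratedFDeriv_eq_norm_iteratedDeriv, Real.norm_eq_abs,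
      iter_one_sub β k x hx.2, abs_mul, abs_mul]
    rw [abs_of_nonneg (Real.rpow_nonneg (by linarith [hx.2] : (0:ℝ) ≤ 1 - x) _)]
    simp [abs_pow]
  have hkv : ‖iteratedFDerivWithin ℝ (j - k) (fun t : ℝ => (1 + t) ^ β) s x‖ =
      |ff β (j-k)| * (1 + x) ^ (β - (j-k)) := by
    rw [iteratedFDerivWithin_of_isOpen (j-k) hso hx,
      norm_iteratedFDeriv_eq_norm_iteratedDeriv, Real.norm_eq_abs,
      iter_one_add β (j-k) x hx.1, abs_mul]
    rw [abs_of_nonneg (Real.rpow_nonneg (by linarith [hx.1] : (0:ℝ) ≤ 1 + x) _)]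
    rw [Nat.cast_sub (Nat.lt_succ_iff.mp hk)]
  rw [hku, hkv]

lemma ff_eq_gamma (β : ℝ) : ∀ j : ℕ, 0 < β - j + 1 →
    ff β j = Real.Gamma (β + 1) / Real.Gamma (β - j + 1) := by
  intro j
  induction j with
  | zero =>
    intro h
    simp only [ff, Finset.range_zero, Finset.prod_empty, Nat.cast_zero, sub_zero]
    rw [div_self (Real.Gamma_pos_of_pos (by simpa using h)).ne']
  | succ j ih =>
    intro h
    have hβj : (0:ℝ) < β - j := by push_cast at h ⊢; linarith
    have hrec : Real.Gamma (β - j + 1) = (β - j) * Real.Gamma (β - j) := by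
      rw [Real.Gamma_add_one hβj.ne']
    rw [ff_succ, ih (by linarith), hrec]
    have h2 : β - ((j:ℝ)+1) + 1 = β - j := by ring
    rw [show ((j+1 : ℕ):ℝ) = (j:ℝ)+1 by push_cast; ring, h2]
    have hg1 : 0 < Real.Gamma (β - j) := Real.Gamma_pos_of_pos hβj
    field_simp

lemma gamma_prod (a : ℝ) (ha : 0 < a) : ∀ M : ℕ,
    Real.Gamma (a + M) = Real.Gamma a * ∏ i ∈ Finset.range M, (a + i) := by
  intro M
  induction M with
  | zero => simp
  | succ M ih =>
    have h1 : a + ((M+1 : ℕ):ℝ) = (a + M) + 1 := by push_cast; ring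
    have h2 : a + (M:ℝ) ≠ 0 := by positivity
    rw [h1, Real.Gamma_add_one h2, ih, Finset.prod_range_succ]
    ring

lemma prod_pair_le {a L : ℝ} (ha : 0 < a) (hL : 0 < L) {M : ℕ} (hsum : 2*a + M - 1 = 2*L) :
    ∏ i ∈ Finset.range M, (a + i) ≤ L ^ M := by
  have hpos : (0:ℝ) < ∏ i ∈ Finset.range M, (a + i) := by
    apply Finset.prod_pos; intro i _; positivity
  have hsq : (∏ i ∈ Finset.range M, (a + i))^2 ≤ (L^M)^2 := by
    have hrefl : ∏ i ∈ Finset.range M, (a + (i:ℝ)) =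
        ∏ i ∈ Finset.range M, (a + ((M - 1 - i : ℕ) : ℝ)) :=
      (Finset.prod_range_reflect (fun i => a + (i:ℝ)) M).symm
    calc (∏ i ∈ Finset.range M, (a + i))^2
        = (∏ i ∈ Finset.range M, (a + (i:ℝ))) *
            ∏ i ∈ Finset.range M, (a + ((M - 1 - i : ℕ) : ℝ)) := by
          rw [sq]; nth_rewrite 2 [hrefl]; rfl
      _ = ∏ i ∈ Finset.range M, ((a + i) * (a + ((M - 1 - i : ℕ) : ℝ))) := by
          rw [← Finset.prod_mul_distrib]
      _ ≤ ∏ i ∈ Finset.range M, L^2 := by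
          apply Finset.prod_le_prod
          · intro i _; positivity
          · intro i hi
            have hiM : i < M := Finset.mem_range.mp hi
            have hc : ((M - 1 - i : ℕ) : ℝ) = (M:ℝ) - 1 - i := by
              push_cast [Nat.cast_sub (by omega : i ≤ M - 1), Nat.cast_sub (by omega : 1 ≤ M)]
              ring
            rw [hc]
            nlinarith [sq_nonneg ((a + i) - (a + ((M:ℝ) - 1 - i)))]
      _ = (L^M)^2 := by rw [Finset.prod_const, Finset.card_range]; ring
  exact (pow_le_pow_iff_left₀ hpos.le (by positivity) two_ne_zero).mp hsq

lemma gammaL : ∀ M : ℕ, ((M:ℝ)/10) ^ ((M:ℝ)/2) ≤ Real.Gamma ((M:ℝ)/2 + 1) := by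
  intro M
  induction M using Nat.strong_induction_on with
  | _ M ih =>
    match M with
    | 0 => simp [Real.Gamma_one]
    | 1 =>
      have h32 : Real.Gamma ((1:ℝ)/2 + 1) = Real.sqrt π / 2 := by
        rw [Real.Gamma_add_one (by norm_num), Real.Gamma_one_half_eq]; ring
      push_cast
      rw [h32]
      rw [show ((1:ℝ)/10) ^ ((1:ℝ)/2) = Real.sqrt (1/10) by
        rw [Real.sqrt_eq_rpow]]
      rw [show Real.sqrt π / 2 = Real.sqrt (π/4) by
        rw [show π/4 = π * (1/2)^2 by ring, Real.sqrt_mul Real.pi_nonneg,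
          Real.sqrt_sq (by norm_num : (0:ℝ) ≤ 1/2), mul_one_div]]
      apply Real.sqrt_le_sqrt
      nlinarith [Real.pi_gt_three]
    | (M+2) =>
      have ihM := ih M (by omega)
      have hstep : Real.Gamma (((M+2 : ℕ):ℝ)/2 + 1) =
          ((M:ℝ)/2 + 1) * Real.Gamma ((M:ℝ)/2 + 1) := by
        rw [show ((M+2 : ℕ):ℝ)/2 + 1 = ((M:ℝ)/2 + 1) + 1 by push_cast; ring,
          Real.Gamma_add_one (by positivity : (0:ℝ) < (M:ℝ)/2 + 1).ne']
      rw [hstep]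
      rcases Nat.eq_zero_or_pos M with hM0 | hMpos
      · subst hM0
        norm_num [Real.Gamma_one]
      · have ht : (0:ℝ) < (M:ℝ)/2 := by positivity
        have ihM' : (((M:ℝ)/2)/5) ^ ((M:ℝ)/2) ≤ Real.Gamma ((M:ℝ)/2 + 1) := by
          rw [show ((M:ℝ)/2)/5 = (M:ℝ)/10 by ring]; exact ihM
        set t := (M:ℝ)/2 with htd
        have key : ((t+1)/5) ^ (t+1) ≤ (t+1) * (t/5)^t := by
          have h1 : ((t+1)/5) ^ (t+1) = ((t+1)/5)^t * ((t+1)/5) := by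
            rw [Real.rpow_add (by positivity), Real.rpow_one]
          have h2 : ((t+1)/5)^t = (1+1/t)^t * (t/5)^t := by
            rw [← Real.mul_rpow (by positivity) (by positivity)]
            congr 1
            field_simp
          have h3 : (1+1/t)^t ≤ 5 := by
            have e1 : (1+1/t : ℝ) ≤ Real.exp (1/t) := by
              have := Real.add_one_le_exp (1/t)
              linarith
            calc (1+1/t : ℝ)^t ≤ (Real.exp (1/t))^t :=
                  Real.rpow_le_rpow (by positivity) e1 (by positivity)
              _ = Real.exp 1 := by
                  rw [← Real.exp_one_rpow (1/t), ← Real.rpow_mul (Real.exp_pos 1).le,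
                    one_div, inv_mul_cancel₀ ht.ne', Real.rpow_one]
              _ ≤ 5 := by linarith [Real.exp_one_lt_d9]
          calc ((t+1)/5) ^ (t+1) = (1+1/t)^t * (t/5)^t * ((t+1)/5) := by rw [h1, h2]
            _ ≤ 5 * (t/5)^t * ((t+1)/5) := by
                apply mul_le_mul_of_nonneg_right _ (by positivity)
                apply mul_le_mul_of_nonneg_right h3 (by positivity)
            _ = (t+1) * (t/5)^t := by ring
        calc ((((M+2:ℕ)):ℝ)/10) ^ ((((M+2:ℕ)):ℝ)/2) = ((t+1)/5) ^ (t+1) := by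
              rw [show (((M+2:ℕ):ℝ))/10 = (t+1)/5 by rw [htd]; push_cast; ring,
                show (((M+2:ℕ):ℝ))/2 = t+1 by rw [htd]; push_cast; ring]
          _ ≤ (t+1) * (t/5)^t := key
          _ ≤ (t+1) * Real.Gamma (t + 1) :=
              mul_le_mul_of_nonneg_left ihM' (by positivity)

lemma jacobiP_bound {m ℓ x : ℝ} {j : ℕ} (hm : 0 < m) (hx : x ∈ Set.Ioo (-1:ℝ) 1)
    (hj : m + j = ℓ - 1/2) :
    |jacobiP j m x| ≤ ff (m + (j:ℝ)) j / (Nat.factorial j : ℝ) *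
      Real.exp (ℓ^2 * (1 - x^2) / (2*m)) := by
  obtain ⟨hx1, hx2⟩ := hx
  set β := m + (j:ℝ) with hβ
  have hA : (0:ℝ) < 1 - x := by linarith
  have hB : (0:ℝ) < 1 + x := by linarith
  have hy : (0:ℝ) < 1 - x^2 := by nlinarith
  set y := 1 - x^2 with hyd
  have hβj : 0 < β - j + 1 := by simp [hβ]; linarith
  have hℓpos : (0:ℝ) < ℓ := by
    have : (0:ℝ) ≤ (j:ℝ) := Nat.cast_nonneg j
    linarith
  have hjℓ : (j:ℝ) ≤ ℓ := by linarith [hm]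
  have hβℓ : β ≤ ℓ := by rw [hβ]; linarith
  set q := ℓ^2 * y / (2*m) with hq
  have hq0 : 0 ≤ q := by positivity
  have hffj : 0 < ff β j := ff_pos le_rfl hβj
  -- generic core bound
  have case1 : ∀ A B : ℝ, 0 ≤ A → 0 ≤ B → A ≤ y → B ≤ 2 →
      ∑ k ∈ Finset.range (j+1), (j.choose k : ℝ) * ff β k * ff β (j-k) * A^(j-k) * B^k ≤
        2^j * ff β j * Real.exp q := by
    intro A B hA0 hB0 hAy hB2
    have hterm : ∀ k ∈ Finset.range (j+1), (j.choose k : ℝ) * ff β k * ff β (j-k) * A^(j-k) * B^k ≤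
        2^j * ff β j * (q^(j-k) / (Nat.factorial (j-k) : ℝ)) := by
      intro k hk
      have hkj : k ≤ j := Nat.lt_succ_iff.mp (Finset.mem_range.mp hk)
      set r := j - k with hrd
      have hkr : k + r = j := by omega
      have e1 : (j.choose k : ℝ) ≤ (ℓ:ℝ)^r / (Nat.factorial r : ℝ) := by
        rw [← Nat.choose_symm hkj]
        refine le_trans (Nat.choose_le_pow_div r j) ?_
        gcongr
      have e2 : ff β k ≤ ff β j / m^r := by
        rw [le_div_iff₀ (by positivity)]
        exact ff_ratio hkj (by linarith) hm
      have e3 : ff β r ≤ ℓ^r := ff_le_pow (Nat.sub_le j k) hβj hβℓ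
      have e4 : A^r ≤ y^r := pow_le_pow_left₀ hA0 hAy r
      have e5 : B^k ≤ 2^k := pow_le_pow_left₀ hB0 hB2 k
      have hffk : 0 < ff β k := ff_pos hkj hβj
      have hffr : 0 < ff β r := ff_pos (Nat.sub_le j k) hβj
      calc (j.choose k : ℝ) * ff β k * ff β (j-k) * A^(j-k) * B^k
          ≤ ((ℓ:ℝ)^r / (Nat.factorial r : ℝ)) * (ff β j / m^r) * ℓ^r * y^r * 2^k := by
            gcongr <;> positivity
        _ = 2^j * ff β j * (q^r / (Nat.factorial r : ℝ)) := by
            rw [hq, div_pow, mul_pow]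
            have h2j : (2:ℝ)^j = 2^k * 2^r := by rw [← pow_add, hkr]
            rw [h2j]
            have : ((2:ℝ)*m)^r = 2^r * m^r := by rw [mul_pow]
            rw [this]
            field_simp
            ring
    calc ∑ k ∈ Finset.range (j+1), (j.choose k : ℝ) * ff β k * ff β (j-k) * A^(j-k) * B^k
        ≤ ∑ k ∈ Finset.range (j+1), 2^j * ff β j * (q^(j-k) / (Nat.factorial (j-k) : ℝ)) :=
          Finset.sum_le_sum hterm
      _ = 2^j * ff β j * ∑ k ∈ Finset.range (j+1), (q^(j-k) / (Nat.factorial (j-k) : ℝ)) := by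
          rw [Finset.mul_sum]
      _ = 2^j * ff β j * ∑ k ∈ Finset.range (j+1), (q^k / (Nat.factorial k : ℝ)) := by
          congr 1
          rw [← Finset.sum_range_reflect (fun k => q^k / (Nat.factorial k : ℝ)) (j+1)]
          apply Finset.sum_congr rfl
          intro k hk
          have e : j + 1 - 1 - k = j - k := by omega
          simp only [e]
      _ ≤ 2^j * ff β j * Real.exp q := by
          gcongr
          exact Real.sum_le_exp_of_nonneg hq0 (j+1)
  -- rewrite |jacobiP| and per-term simplification
  have habs : |jacobiP j m x| = (1 / (2^j * (Nat.factorial j : ℝ))) * ((1 - x^2) ^ (-m) *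
      |iteratedDeriv j (fun t : ℝ => (1 - t ^ 2) ^ (m + (j : ℝ))) x|) := by
    rw [jacobiP, abs_mul, abs_mul, abs_div, abs_pow, abs_neg, abs_one, one_pow,
      abs_of_nonneg (Real.rpow_nonneg hy.le _)]
    rw [abs_of_pos (by positivity : (0:ℝ) < 2^j * (Nat.factorial j : ℝ)), mul_assoc]
  rw [habs]
  -- bound via iterF_bound then per-term collapse
  have hsum := iterF_bound β j ⟨hx1, hx2⟩
  have hcollapse : (1 - x^2) ^ (-m) * (∑ k ∈ Finset.range (j+1), (j.choose k : ℝ) *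
        (|ff β k| * (1 - x) ^ (β - k)) * (|ff β (j-k)| * (1 + x) ^ (β - ((j:ℝ)-(k:ℝ))))) =
      ∑ k ∈ Finset.range (j+1), (j.choose k : ℝ) * ff β k * ff β (j-k) *
        (1-x)^(j-k) * (1+x)^k := by
    rw [Finset.mul_sum]
    apply Finset.sum_congr rfl
    intro k hk
    have hkj : k ≤ j := Nat.lt_succ_iff.mp (Finset.mem_range.mp hk)
    have hffk := ff_pos hkj hβj
    have hffr := ff_pos (Nat.sub_le j k) hβj
    rw [abs_of_pos hffk, abs_of_pos hffr]
    have hmxy : (1 - x^2 : ℝ) = (1-x) * (1+x) := by ring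
    have hrw : (1 - x^2 : ℝ) ^ (-m) = (1-x)^(-m) * (1+x)^(-m) := by
      rw [hmxy, Real.mul_rpow hA.le hB.le]
    have hb1 : (1-x:ℝ) ^ (β - k) = (1-x)^m * (1-x)^(j-k) := by
      have : β - (k:ℝ) = m + ((j-k : ℕ):ℝ) := by
        rw [hβ, Nat.cast_sub hkj]; ring
      rw [this, Real.rpow_add hA, Real.rpow_natCast]
    have hb2 : (1+x:ℝ) ^ (β - ((j:ℝ)-(k:ℝ))) = (1+x)^m * (1+x)^(k:ℕ) := by
      have : β - ((j:ℝ)-(k:ℝ)) = m + (k:ℝ) := by rw [hβ]; ring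
      rw [this, Real.rpow_add hB, Real.rpow_natCast]
    rw [hrw, hb1, hb2]
    have c1 : (1-x:ℝ)^(-m) * (1-x)^m = 1 := by
      rw [← Real.rpow_add hA]; simp
    have c2 : (1+x:ℝ)^(-m) * (1+x)^m = 1 := by
      rw [← Real.rpow_add hB]; simp
    linear_combination ((j.choose k : ℝ) * ff β k * ff β (j-k) * (1-x)^(j-k) * (1+x)^k *
        ((1+x:ℝ)^(-m) * (1+x)^m)) * c1 +
      ((j.choose k : ℝ) * ff β k * ff β (j-k) * (1-x)^(j-k) * (1+x)^k) * c2
  have step : (1 - x^2) ^ (-m) *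
      |iteratedDeriv j (fun t : ℝ => (1 - t ^ 2) ^ (m + (j : ℝ))) x| ≤
      2^j * ff β j * Real.exp q := by
    have h1 : (1 - x^2 : ℝ) ^ (-m) *
        |iteratedDeriv j (fun t : ℝ => (1 - t ^ 2) ^ (m + (j : ℝ))) x| ≤
        (1 - x^2) ^ (-m) * (∑ k ∈ Finset.range (j+1), (j.choose k : ℝ) *
          (|ff β k| * (1 - x) ^ (β - k)) * (|ff β (j-k)| * (1 + x) ^ (β - ((j:ℝ)-(k:ℝ))))) := by
      apply mul_le_mul_of_nonneg_left _ (Real.rpow_nonneg hy.le _)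
      exact hsum
    refine le_trans h1 ?_
    rw [hcollapse]
    rcases le_or_gt 0 x with hxs | hxs
    · apply case1 (1-x) (1+x) hA.le hB.le (by nlinarith) (by linarith)
    · have hrefl : ∑ k ∈ Finset.range (j+1), (j.choose k : ℝ) * ff β k * ff β (j-k) *
          (1-x)^(j-k) * (1+x)^k = ∑ k ∈ Finset.range (j+1), (j.choose k : ℝ) * ff β k *
          ff β (j-k) * (1+x)^(j-k) * (1-x)^k := by
        rw [← Finset.sum_range_reflect]
        apply Finset.sum_congr rfl
        intro k hk
        have hkj : k ≤ j := Nat.lt_succ_iff.mp (Finset.mem_range.mp hk)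
        have h1 : j + 1 - 1 - k = j - k := by omega
        simp only [h1, Nat.choose_symm hkj, Nat.sub_sub_self hkj]
        ring
      rw [hrefl]
      apply case1 (1+x) (1-x) hB.le hA.le (by nlinarith) (by linarith)
  calc (1 / (2^j * (Nat.factorial j : ℝ))) * ((1 - x^2) ^ (-m) *
        |iteratedDeriv j (fun t : ℝ => (1 - t ^ 2) ^ (m + (j : ℝ))) x|)
      ≤ (1 / (2^j * (Nat.factorial j : ℝ))) * (2^j * ff β j * Real.exp q) := by
        apply mul_le_mul_of_nonneg_left step (by positivity)
    _ = ff β j / (Nat.factorial j : ℝ) * Real.exp q := by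
        field_simp

lemma exp_rpow_eq (c t : ℝ) : (Real.exp c) ^ t = Real.exp (c * t) := by
  rw [← Real.exp_one_rpow c, ← Real.rpow_mul (Real.exp_pos 1).le, Real.exp_one_rpow]

lemma numeric5 : Real.exp (1/(8 * Real.exp 1 ^ 2)) * 5 ≤ 2 * Real.exp 1 := by
  have he : (2.7182818283:ℝ) < Real.exp 1 := Real.exp_one_gt_d9
  have hc : (1:ℝ)/(8 * Real.exp 1 ^ 2) ≤ 1/59 := by
    rw [div_le_div_iff₀ (by positivity) (by norm_num)]
    nlinarith
  have hup : Real.exp ((1:ℝ)/59) ≤ 59/58 := by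
    have h1 : 1 - (1:ℝ)/59 ≤ Real.exp (-(1/59 : ℝ)) := by
      have := Real.add_one_le_exp (-(1/59:ℝ)); linarith
    have h2 : Real.exp (1/59 : ℝ) * Real.exp (-(1/59:ℝ)) = 1 := by
      rw [← Real.exp_add]; norm_num
    nlinarith [Real.exp_pos ((1:ℝ)/59)]
  calc Real.exp (1/(8 * Real.exp 1 ^ 2)) * 5 ≤ Real.exp ((1:ℝ)/59) * 5 := by
        have := Real.exp_le_exp.mpr hc; linarith
    _ ≤ (59/58) * 5 := by linarith
    _ ≤ 2 * Real.exp 1 := by linarith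

theorem stmt3 (d : ℕ) (hd : 2 ≤ d) (ε : ℝ) (hε : ε ∈ Set.Ioo (0:ℝ) 1) :
    ∃ C : ℝ, 0 < C ∧ ∀ ℓ m : ℝ, memId d ℓ m → 0 < m → m ≤ ε * ℓ →
      ∀ x ∈ Set.Ioo (-1:ℝ) 1, Real.sqrt (1 - x ^ 2) ≤ bPt ℓ m / (2 * Real.exp 1) →
        |Xtilde d ℓ m x| ≤ C * (2 : ℝ) ^ (-m) * ℓ ^ (((d:ℝ) - 1) / 2) := by
  obtain ⟨hε0, hε1⟩ := hε
  set E : ℝ := ((d:ℝ) - 2)/2 with hE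
  have hd2 : (2:ℝ) ≤ (d:ℝ) := by exact_mod_cast hd
  have hE0 : 0 ≤ E := by rw [hE]; linarith
  refine ⟨(4 * Real.exp 1) ^ E, by positivity, ?_⟩
  intro ℓ m hmem hm hεℓ x hx hsx
  obtain ⟨⟨n₁, hn₁⟩, ⟨n₂, hn₂'⟩, hmleℓ⟩ := hmem
  have hdm1 : ((d-1:ℕ):ℝ) = (d:ℝ) - 1 := by
    rw [Nat.cast_sub (by omega : 1 ≤ d)]; norm_num
  have hn₂ : m = (n₂:ℝ) + ((d:ℝ) - 2)/2 := by rw [hn₂', hdm1]; ring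
  have hεℓpos : 0 < ε * ℓ := lt_of_lt_of_le hm hεℓ
  have hℓpos : 0 < ℓ :=
    ((mul_pos_iff.mp hεℓpos).resolve_right (fun h => absurd hε0 (not_lt.mpr h.1.le))).2
  have hmℓ : m < ℓ := by
    have h1 : ε * ℓ < 1 * ℓ := mul_lt_mul_of_pos_right hε1 hℓpos
    rw [one_mul] at h1
    linarith only [h1, hεℓ]
  have hn12 : n₂ ≤ n₁ := by
    by_contra hcon
    push_neg at hcon
    have : (n₁:ℝ) + 1 ≤ (n₂:ℝ) := by exact_mod_cast hcon
    rw [hn₁, hn₂] at hmℓ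
    linarith
  set j : ℕ := n₁ - n₂ with hjdef
  have hj : (j:ℝ) = ℓ - m - 1/2 := by
    rw [hjdef, Nat.cast_sub hn12, hn₁, hn₂]; ring
  have hfloor : ⌊ℓ - m - 1/2⌋₊ = j := by rw [← hj, Nat.floor_natCast]
  set M : ℕ := 2*n₂ + (d-2) with hMdef
  have hM : (M:ℝ) = 2*m := by
    rw [hMdef]; push_cast [Nat.cast_sub (by omega : 2 ≤ d)]; rw [hn₂]; ring
  have hM1 : 1 ≤ M := by
    rcases Nat.eq_zero_or_pos M with h0 | h1
    · rw [h0] at hM; norm_num at hM; linarith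
    · exact h1
  have hm2 : 1/2 ≤ m := by
    have : (1:ℝ) ≤ (M:ℝ) := by exact_mod_cast hM1
    rw [hM] at this; linarith
  -- geometry of x
  obtain ⟨hx1, hx2⟩ := hx
  have hy : (0:ℝ) < 1 - x^2 := by
    have h12 : (0:ℝ) < (1-x)*(1+x) :=
      mul_pos (by linarith only [hx2]) (by linarith only [hx1])
    nlinarith only [h12]
  set y : ℝ := 1 - x^2 with hyd
  set w : ℝ := m/ℓ/(2 * Real.exp 1) with hwd
  have hw0 : 0 < w := by positivity
  have hsx' : Real.sqrt y ≤ w := hsx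
  -- gamma facts
  set a : ℝ := ℓ - m + 1/2 with had
  have ha : 0 < a := by rw [had]; linarith [hj ▸ Nat.cast_nonneg j]
  have hΓa : 0 < Real.Gamma a := Real.Gamma_pos_of_pos ha
  have hΓl : 0 < Real.Gamma (ℓ + 1/2) := Real.Gamma_pos_of_pos (by linarith)
  have hΓm : 0 < Real.Gamma (m + 1) := Real.Gamma_pos_of_pos (by linarith)
  have hΓp : 0 < Real.Gamma (ℓ + m + 1/2) := Real.Gamma_pos_of_pos (by linarith)
  have hGratio : Real.Gamma (ℓ + m + 1/2) ≤ Real.Gamma a * ℓ^M := by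
    have h1 := gamma_prod a ha M
    have h2 : a + (M:ℝ) = ℓ + m + 1/2 := by rw [had, hM]; ring
    rw [h2] at h1
    rw [h1]
    exact mul_le_mul_of_nonneg_left (prod_pair_le ha hℓpos (by rw [had, hM]; ring)) hΓa.le
  -- ff value
  have hjm : m + (j:ℝ) = ℓ - 1/2 := by rw [hj]; ring
  have hffval : ff (m + (j:ℝ)) j / (Nat.factorial j : ℝ) =
      Real.Gamma (ℓ + 1/2) / (Real.Gamma (m+1) * Real.Gamma a) := by
    rw [ff_eq_gamma (m + (j:ℝ)) j (by push_cast; linarith)]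
    have e1 : m + (j:ℝ) + 1 = ℓ + 1/2 := by linarith
    have e2 : m + (j:ℝ) - (j:ℝ) + 1 = m + 1 := by ring
    rw [e1, e2]
    have e3 : (Nat.factorial j : ℝ) = Real.Gamma a := by
      rw [show a = (j:ℝ) + 1 by rw [had]; linarith, Real.Gamma_nat_eq_factorial]
    rw [e3, div_div]
  -- B2 : cConst bound
  have hsqM : Real.sqrt (ℓ * Real.Gamma a * (Real.Gamma a * ℓ^M)) =
      Real.sqrt ℓ * Real.Gamma a * ℓ^(m:ℝ) := by
    have hsq : ℓ * Real.Gamma a * (Real.Gamma a * ℓ^M) =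
        (Real.sqrt ℓ * Real.Gamma a * ℓ^(m:ℝ))^2 := by
      have h1 : (ℓ^(m:ℝ))^(2:ℕ) = ℓ^M := by
        rw [← Real.rpow_natCast (ℓ^(m:ℝ)) 2, ← Real.rpow_mul hℓpos.le,
          ← Real.rpow_natCast ℓ M, hM]
        norm_num
        ring_nf
      rw [mul_pow, mul_pow, Real.sq_sqrt hℓpos.le, h1]
      ring
    rw [hsq, Real.sqrt_sq (by positivity)]
  have hB2 : cConst ℓ m * (ff (m + (j:ℝ)) j / (Nat.factorial j : ℝ)) ≤
      Real.sqrt ℓ * ℓ^(m:ℝ) / ((2:ℝ)^m * Real.Gamma (m+1)) := by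
    rw [hffval, cConst]
    have hnum : Real.sqrt (ℓ * Real.Gamma (ℓ - m + 1/2) * Real.Gamma (ℓ + m + 1/2)) ≤
        Real.sqrt ℓ * Real.Gamma a * ℓ^(m:ℝ) := by
      rw [← hsqM]
      apply Real.sqrt_le_sqrt
      rw [show ℓ - m + 1/2 = a from had.symm]
      exact mul_le_mul_of_nonneg_left hGratio (by positivity)
    have h2m : (0:ℝ) < (2:ℝ)^m := Real.rpow_pos_of_pos (by norm_num) m
    calc Real.sqrt (ℓ * Real.Gamma (ℓ - m + 1/2) * Real.Gamma (ℓ + m + 1/2)) /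
          ((2:ℝ)^m * Real.Gamma (ℓ + 1/2)) *
          (Real.Gamma (ℓ + 1/2) / (Real.Gamma (m+1) * Real.Gamma a))
        ≤ (Real.sqrt ℓ * Real.Gamma a * ℓ^(m:ℝ)) / ((2:ℝ)^m * Real.Gamma (ℓ + 1/2)) *
          (Real.Gamma (ℓ + 1/2) / (Real.Gamma (m+1) * Real.Gamma a)) := by
          gcongr
      _ = Real.sqrt ℓ * ℓ^(m:ℝ) / ((2:ℝ)^m * Real.Gamma (m+1)) := by
          field_simp
  -- B1 : y powers bound
  have hB1 : y ^ (-((d:ℝ) - 2) / 4) * y^(m/2) ≤ w^(m:ℝ) * ((4 * Real.exp 1)^E * ℓ^E) := by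
    have e1 : y ^ (-((d:ℝ) - 2) / 4) * y^(m/2) = y ^ ((n₂:ℝ)/2) := by
      rw [← Real.rpow_add hy]
      congr 1
      rw [hn₂]; ring
    have e2 : y ^ ((n₂:ℝ)/2) = (Real.sqrt y)^(n₂:ℕ) := by
      rw [Real.sqrt_eq_rpow, ← Real.rpow_natCast (y^((1:ℝ)/2)) n₂,
        ← Real.rpow_mul hy.le]
      congr 1
      ring
    have e3 : (Real.sqrt y)^(n₂:ℕ) ≤ w^(n₂:ℕ) :=
      pow_le_pow_left₀ (Real.sqrt_nonneg _) hsx' n₂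
    have e4 : w^(n₂:ℕ) = w^(m:ℝ) * (w⁻¹)^E := by
      rw [← Real.rpow_natCast w n₂, show ((n₂:ℕ):ℝ) = m - E by rw [hn₂, hE]; ring,
        Real.rpow_sub hw0, div_eq_mul_inv, ← Real.inv_rpow hw0.le]
    have e5 : (w⁻¹)^E ≤ (4 * Real.exp 1 * ℓ)^E := by
      apply Real.rpow_le_rpow (by positivity) _ hE0
      have hwinv : w⁻¹ = 2 * Real.exp 1 * ℓ / m := by
        rw [hwd]
        field_simp
      rw [hwinv, div_le_iff₀ hm]
      have h0 : (0:ℝ) ≤ 2 * Real.exp 1 * ℓ * (2*m - 1) := by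
        have h1 : (0:ℝ) ≤ 2*m - 1 := by linarith only [hm2]
        positivity
      nlinarith only [h0]
    have e6 : (4 * Real.exp 1 * ℓ)^E = (4 * Real.exp 1)^E * ℓ^E :=
      Real.mul_rpow (by positivity) hℓpos.le
    calc y ^ (-((d:ℝ) - 2) / 4) * y^(m/2) = (Real.sqrt y)^(n₂:ℕ) := by rw [e1, e2]
      _ ≤ w^(n₂:ℕ) := e3
      _ = w^(m:ℝ) * (w⁻¹)^E := e4
      _ ≤ w^(m:ℝ) * ((4 * Real.exp 1)^E * ℓ^E) := by
          rw [← e6]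
          exact mul_le_mul_of_nonneg_left e5 (Real.rpow_nonneg hw0.le m)
  -- B3
  have hB3 : Real.exp (ℓ^2 * y / (2*m)) ≤ Real.exp ((1/(8 * Real.exp 1 ^ 2)) * m) := by
    apply Real.exp_le_exp.mpr
    have hyw : y ≤ w^2 := by
      have : (Real.sqrt y)^2 ≤ w^2 := pow_le_pow_left₀ (Real.sqrt_nonneg _) hsx' 2
      rwa [Real.sq_sqrt hy.le] at this
    have hww : w^2 = m^2/(ℓ^2 * (4 * Real.exp 1^2)) := by
      rw [hwd, div_pow, div_pow, mul_pow, div_div]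
      norm_num
    rw [div_le_iff₀ (by positivity : (0:ℝ) < 2*m)]
    have h1 : ℓ^2 * y ≤ ℓ^2 * w^2 := mul_le_mul_of_nonneg_left hyw (by positivity)
    rw [hww] at h1
    have h2 : ℓ^2 * (m^2/(ℓ^2 * (4 * Real.exp 1^2))) = m^2/(4 * Real.exp 1^2) := by
      rw [div_mul_eq_div_div_swap, mul_div_cancel₀ _ (by positivity : (ℓ:ℝ)^2 ≠ 0)]
    rw [h2] at h1
    have h3 : m^2/(4 * Real.exp 1^2) = (1/(8 * Real.exp 1 ^ 2)) * m * (2*m) := by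
      field_simp; ring
    exact h1.trans (le_of_eq h3)
  -- B4
  have hB4 : w^(m:ℝ) * ℓ^(m:ℝ) * Real.exp ((1/(8 * Real.exp 1 ^ 2)) * m) ≤
      Real.Gamma (m+1) := by
    have e1 : w^(m:ℝ) * ℓ^(m:ℝ) = (w * ℓ)^(m:ℝ) := (Real.mul_rpow hw0.le hℓpos.le).symm
    have e2 : w * ℓ = m / (2 * Real.exp 1) := by
      rw [hwd]; field_simp
    have e3 : Real.exp ((1/(8 * Real.exp 1 ^ 2)) * m) =
        (Real.exp (1/(8 * Real.exp 1 ^ 2)))^(m:ℝ) := (exp_rpow_eq _ m).symm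
    rw [e1, e2, e3, ← Real.mul_rpow (by positivity) (Real.exp_pos _).le]
    have e4 : m / (2 * Real.exp 1) * Real.exp (1/(8 * Real.exp 1 ^ 2)) ≤ m/5 := by
      rw [div_mul_eq_mul_div, div_le_div_iff₀ (by positivity) (by norm_num)]
      have h5 := mul_le_mul_of_nonneg_left numeric5 hm.le
      nlinarith only [h5]
    calc (m / (2 * Real.exp 1) * Real.exp (1/(8 * Real.exp 1 ^ 2)))^(m:ℝ)
        ≤ (m/5)^(m:ℝ) := Real.rpow_le_rpow (by positivity) e4 hm.le
      _ = ((M:ℝ)/10)^((M:ℝ)/2) := by rw [hM]; congr 1 <;> ring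
      _ ≤ Real.Gamma ((M:ℝ)/2 + 1) := gammaL M
      _ = Real.Gamma (m+1) := by rw [hM]; congr 1; ring
  -- jacobi bound
  have hjac := jacobiP_bound hm ⟨hx1, hx2⟩ hjm
  have hcC : 0 ≤ cConst ℓ m := by
    rw [cConst]
    apply div_nonneg (Real.sqrt_nonneg _)
    positivity
  have hffnn : 0 ≤ ff (m + (j:ℝ)) j / (Nat.factorial j : ℝ) := by
    rw [hffval]; positivity
  -- final calc
  have hXeq : |Xtilde d ℓ m x| = y ^ (-((d:ℝ) - 2) / 4) * cConst ℓ m * y^(m/2) *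
      |jacobiP j m x| := by
    rw [Xtilde, Yfun, hfloor, abs_mul, abs_mul, abs_mul,
      abs_of_nonneg (Real.rpow_nonneg hy.le _), abs_of_nonneg hcC,
      abs_of_nonneg (Real.rpow_nonneg hy.le _)]
    ring
  rw [hXeq]
  calc y ^ (-((d:ℝ) - 2) / 4) * cConst ℓ m * y^(m/2) * |jacobiP j m x|
      ≤ y ^ (-((d:ℝ) - 2) / 4) * cConst ℓ m * y^(m/2) *
        (ff (m + (j:ℝ)) j / (Nat.factorial j : ℝ) * Real.exp (ℓ^2 * y / (2*m))) := by
        apply mul_le_mul_of_nonneg_left hjac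
        have : (0:ℝ) ≤ y ^ (-((d:ℝ) - 2) / 4) := Real.rpow_nonneg hy.le _
        have : (0:ℝ) ≤ y ^ (m/2) := Real.rpow_nonneg hy.le _
        positivity
    _ = (y ^ (-((d:ℝ) - 2) / 4) * y^(m/2)) *
        (cConst ℓ m * (ff (m + (j:ℝ)) j / (Nat.factorial j : ℝ))) *
        Real.exp (ℓ^2 * y / (2*m)) := by ring
    _ ≤ (w^(m:ℝ) * ((4 * Real.exp 1)^E * ℓ^E)) *
        (Real.sqrt ℓ * ℓ^(m:ℝ) / ((2:ℝ)^m * Real.Gamma (m+1))) *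
        Real.exp ((1/(8 * Real.exp 1 ^ 2)) * m) := by
        apply mul_le_mul
        · apply mul_le_mul hB1 hB2 (by positivity)
          positivity
        · exact hB3
        · positivity
        · positivity
    _ = ((4 * Real.exp 1)^E * ℓ^E * Real.sqrt ℓ) *
        ((w^(m:ℝ) * ℓ^(m:ℝ) * Real.exp ((1/(8 * Real.exp 1 ^ 2)) * m)) /
          ((2:ℝ)^m * Real.Gamma (m+1))) := by ring
    _ ≤ ((4 * Real.exp 1)^E * ℓ^E * Real.sqrt ℓ) *
        (Real.Gamma (m+1) / ((2:ℝ)^m * Real.Gamma (m+1))) := by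
        apply mul_le_mul_of_nonneg_left _ (by positivity)
        gcongr
    _ = (4 * Real.exp 1)^E * (2:ℝ)^(-m) * ℓ^(((d:ℝ)-1)/2) := by
        have h1 : Real.Gamma (m+1) / ((2:ℝ)^m * Real.Gamma (m+1)) = (2:ℝ)^(-m) := by
          rw [Real.rpow_neg (by norm_num : (0:ℝ) ≤ 2), mul_comm, ← div_div,
            div_self hΓm.ne', one_div]
        have h2 : ℓ^E * Real.sqrt ℓ = ℓ^(((d:ℝ)-1)/2) := by
          rw [Real.sqrt_eq_rpow, ← Real.rpow_add hℓpos, hE]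
          congr 1
          ring
        rw [h1, ← h2]
        ring
end

section
/- There exists an absolute constant C > 0 such that for all (ℓ,m) ∈ I and all x ∈ [−1,1], one has Y_{ℓ,m}(x)² ≤ C (1−x²)^m (ℓ/(m+1)^{1/2}) · binom(ℓ−1/2+m, 2m), where ℓ−1/2+m and 2m are natural numbers since (ℓ,m) ∈ I. -/
open Real Set

namespace Stmt4Aux

open Finset

noncomputable def FF (s : ℝ) (k : ℕ) : ℝ := ∏ i ∈ Finset.range k, (s - i)

noncomputable def Bc (s : ℝ) (k : ℕ) : ℝ := FF s k / (Nat.factorial k : ℝ)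

lemma FF_succ (s : ℝ) (k : ℕ) : FF s (k+1) = FF s k * (s - k) := by
  simp [FF, Finset.prod_range_succ]

lemma Bc_zero (s : ℝ) : Bc s 0 = 1 := by simp [Bc, FF]

lemma Bc_succ (s : ℝ) (k : ℕ) : ((k:ℝ)+1) * Bc s (k+1) = (s - k) * Bc s k := by
  have hk : (Nat.factorial k : ℝ) ≠ 0 := Nat.cast_ne_zero.mpr (Nat.factorial_ne_zero k)
  have hk1 : ((k:ℝ)+1) ≠ 0 := by positivity
  rw [Bc, Bc, FF_succ, Nat.factorial_succ]
  push_cast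
  field_simp

lemma Bc_pos (s : ℝ) (k : ℕ) (h : (k:ℝ) ≤ s) : 0 < Bc s k := by
  apply div_pos _ (by positivity)
  apply Finset.prod_pos
  intro i hi
  have : (i:ℝ) < k := by exact_mod_cast Finset.mem_range.mp hi
  linarith

noncomputable def Qp (s : ℝ) (r : ℕ) (x : ℝ) : ℝ :=
  ∑ k ∈ Finset.range (r+1), Bc s k * Bc s (r-k) * ((x+1)/2)^k * ((x-1)/2)^(r-k)

lemma hasDerivAt_Qp (s : ℝ) (r : ℕ) (x : ℝ) :
    HasDerivAt (Qp s (r+1)) ((2*s - r)/2 * Qp s r x) x := by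
  have hu : HasDerivAt (fun x : ℝ => (x+1)/2) (1/2) x := by
    simpa using ((hasDerivAt_id x).add_const 1).div_const 2
  have hv : HasDerivAt (fun x : ℝ => (x-1)/2) (1/2) x := by
    simpa using ((hasDerivAt_id x).sub_const 1).div_const 2
  have hterm : ∀ k ∈ Finset.range (r+2), HasDerivAt
      (fun x : ℝ => Bc s k * Bc s (r+1-k) * ((x+1)/2)^k * ((x-1)/2)^(r+1-k))
      (Bc s k * Bc s (r+1-k) * (((k:ℝ) * ((x+1)/2)^(k-1) * (1/2)) * ((x-1)/2)^(r+1-k)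
          + ((x+1)/2)^k * (((r+1-k : ℕ):ℝ) * ((x-1)/2)^(r+1-k-1) * (1/2)))) x := by
    intro k _
    have h1 := ((hu.fun_pow k).fun_mul (hv.fun_pow (r+1-k))).const_mul (Bc s k * Bc s (r+1-k))
    have hf : (fun x : ℝ => Bc s k * Bc s (r+1-k) * (((x+1)/2)^k * ((x-1)/2)^(r+1-k)))
        = (fun x : ℝ => Bc s k * Bc s (r+1-k) * ((x+1)/2)^k * ((x-1)/2)^(r+1-k)) := by
      funext y; ring
    rw [hf] at h1
    exact h1
  have hsum := HasDerivAt.fun_sum hterm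
  have hQ : Qp s (r+1) = (fun y => ∑ k ∈ Finset.range (r+2),
      Bc s k * Bc s (r+1-k) * ((y+1)/2)^k * ((y-1)/2)^(r+1-k)) := by
    funext y; rfl
  rw [hQ]
  refine hsum.congr_deriv (Eq.symm ?_)
  -- sum identity
  have split : ∀ k ∈ Finset.range (r+2), Bc s k * Bc s (r+1-k) *
        (((k:ℝ) * ((x+1)/2)^(k-1) * (1/2)) * ((x-1)/2)^(r+1-k)
          + ((x+1)/2)^k * (((r+1-k:ℕ):ℝ) * ((x-1)/2)^(r+1-k-1) * (1/2)))
      = (Bc s k * Bc s (r+1-k) * ((k:ℝ) * ((x+1)/2)^(k-1) * (1/2)) * ((x-1)/2)^(r+1-k))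
        + (Bc s k * Bc s (r+1-k) * ((x+1)/2)^k * (((r+1-k:ℕ):ℝ) * ((x-1)/2)^(r+1-k-1) * (1/2))) := by
    intro k _; ring
  rw [Finset.sum_congr rfl split, Finset.sum_add_distrib]
  have e1 : ∑ k ∈ Finset.range (r+2),
      (Bc s k * Bc s (r+1-k) * ((k:ℝ) * ((x+1)/2)^(k-1) * (1/2)) * ((x-1)/2)^(r+1-k))
      = ∑ k ∈ Finset.range (r+1),
      (Bc s (k+1) * Bc s (r-k) * (((k:ℝ)+1) * ((x+1)/2)^k * (1/2)) * ((x-1)/2)^(r-k)) := by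
    rw [Finset.sum_range_succ']
    have hz : Bc s 0 * Bc s (r+1-0) * ((0:ℕ):ℝ) * ((x+1)/2)^(0-1) * (1/2) * ((x-1)/2)^(r+1-0) = 0 := by
      simp
    have step : ∀ k, Bc s (k+1) * Bc s (r+1-(k+1)) * (((k+1:ℕ):ℝ) * ((x+1)/2)^(k+1-1) * (1/2)) * ((x-1)/2)^(r+1-(k+1))
        = Bc s (k+1) * Bc s (r-k) * (((k:ℝ)+1) * ((x+1)/2)^k * (1/2)) * ((x-1)/2)^(r-k) := by
      intro k
      have h1 : r + 1 - (k+1) = r - k := by omega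
      have h2 : k + 1 - 1 = k := by omega
      rw [h1, h2]; push_cast; ring
    simp only [step]
    simp
  have e2 : ∑ k ∈ Finset.range (r+2),
      (Bc s k * Bc s (r+1-k) * ((x+1)/2)^k * (((r+1-k:ℕ):ℝ) * ((x-1)/2)^(r+1-k-1) * (1/2)))
      = ∑ k ∈ Finset.range (r+1),
      (Bc s k * Bc s (r+1-k) * ((x+1)/2)^k * (((r+1-k:ℕ):ℝ) * ((x-1)/2)^(r-k) * (1/2))) := by
    rw [Finset.sum_range_succ]
    have hlast : r + 1 - (r+1) = 0 := by omega
    rw [hlast]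
    simp only [Nat.cast_zero, zero_mul, mul_zero, add_zero]
    apply Finset.sum_congr rfl
    intro k hk
    have h1 : r + 1 - k - 1 = r - k := by omega
    rw [h1]
  rw [e1, e2, ← Finset.sum_add_distrib, Qp, Finset.mul_sum]
  apply Finset.sum_congr rfl
  intro k hk
  have hk' : k ≤ r := Nat.lt_succ_iff.mp (Finset.mem_range.mp hk)
  have hB1 : ((k:ℝ)+1) * Bc s (k+1) = (s - k) * Bc s k := Bc_succ s k
  have hrk : r + 1 - k = (r - k) + 1 := by omega
  have hB2 : (((r-k:ℕ):ℝ)+1) * Bc s ((r-k)+1) = (s - ((r-k:ℕ):ℝ)) * Bc s (r-k) := Bc_succ s (r-k)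
  have hcast : ((r-k:ℕ):ℝ) = (r:ℝ) - k := by
    rw [Nat.cast_sub hk']
  rw [hrk]
  have hcast2 : (((r-k)+1 : ℕ):ℝ) = (r:ℝ) - k + 1 := by push_cast [hcast]; ring
  rw [hcast2]
  rw [hcast] at hB2
  linear_combination (-(Bc s (r-k) * ((x+1)/2)^k * ((x-1)/2)^(r-k) * (1/2))) * hB1
    + (-(Bc s k * ((x+1)/2)^k * ((x-1)/2)^(r-k) * (1/2))) * hB2

private lemma keyid (s k ρ r b1 b2 b1' b2' : ℝ) (hr : r = k + ρ)
    (hk : 0 ≤ k) (hρ : 0 ≤ ρ)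
    (h1 : (k+1) * b1' = (s-k) * b1) (h2 : (ρ+1) * b2' = (s-ρ) * b2) :
    -2*(2*s-r) * (b1*b2) + 2*(r+2) * (b1'*b2')
      = 2*(s-r-1) * (b1*b2') + 2*(s-r-1) * (b1'*b2) := by
  have hk1 : k + 1 ≠ 0 := by positivity
  have hρ1 : ρ + 1 ≠ 0 := by positivity
  have e1 : b1' = (s-k) * b1 / (k+1) := by
    rw [eq_div_iff hk1]; linarith [h1]
  have e2 : b2' = (s-ρ) * b2 / (ρ+1) := by
    rw [eq_div_iff hρ1]; linarith [h2]
  subst hr e1 e2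
  field_simp
  ring

lemma ode (s : ℝ) (r : ℕ) (x : ℝ) :
    (1 - x^2) * ((2*s - r)/2 * Qp s r x) + 2*((r:ℝ)+2) * Qp s (r+2) x
      = 2*(s - r - 1) * x * Qp s (r+1) x := by
  set u : ℝ := (x+1)/2 with hu
  set v : ℝ := (x-1)/2 with hv
  have huv : 1 - x^2 = -4*(u*v) := by rw [hu, hv]; ring
  have hx : x = u + v := by rw [hu, hv]; ring
  have E1 : (1 - x^2) * ((2*s - r)/2 * Qp s r x)
      = ∑ k ∈ Finset.range (r+1), (-2*(2*s-(r:ℝ)) * (Bc s k * Bc s (r-k))) * (u^(k+1) * v^(r+1-k)) := by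
    rw [Qp, Finset.mul_sum, Finset.mul_sum]
    apply Finset.sum_congr rfl
    intro k hk
    have hk' : k ≤ r := Nat.lt_succ_iff.mp (Finset.mem_range.mp hk)
    have h1 : r + 1 - k = (r - k) + 1 := by omega
    rw [h1, huv, pow_succ, pow_succ]
    ring
  have E2 : 2*((r:ℝ)+2) * Qp s (r+2) x
      = ∑ k ∈ Finset.range (r+3), (2*((r:ℝ)+2) * (Bc s k * Bc s (r+2-k))) * (u^k * v^(r+2-k)) := by
    rw [Qp, Finset.mul_sum]
    apply Finset.sum_congr rfl
    intro k _
    ring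
  have E3 : 2*(s - r - 1) * x * Qp s (r+1) x
      = (∑ k ∈ Finset.range (r+2), (2*(s-(r:ℝ)-1) * (Bc s k * Bc s (r+1-k))) * (u^(k+1) * v^(r+1-k)))
        + ∑ k ∈ Finset.range (r+2), (2*(s-(r:ℝ)-1) * (Bc s k * Bc s (r+1-k))) * (u^k * v^(r+2-k)) := by
    rw [Qp, Finset.mul_sum, ← Finset.sum_add_distrib]
    apply Finset.sum_congr rfl
    intro k hk
    have hk' : k ≤ r + 1 := Nat.lt_succ_iff.mp (Finset.mem_range.mp hk)
    have h1 : r + 2 - k = (r + 1 - k) + 1 := by omega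
    rw [h1, hx, pow_succ]
    ring
  have E2split : ∑ k ∈ Finset.range (r+3), (2*((r:ℝ)+2) * (Bc s k * Bc s (r+2-k))) * (u^k * v^(r+2-k))
      = (2*((r:ℝ)+2) * (Bc s 0 * Bc s (r+2))) * (u^0 * v^(r+2))
        + (∑ k ∈ Finset.range (r+1), (2*((r:ℝ)+2) * (Bc s (k+1) * Bc s (r+1-k))) * (u^(k+1) * v^(r+1-k)))
        + (2*((r:ℝ)+2) * (Bc s (r+2) * Bc s 0)) * (u^(r+2) * v^0) := by
    set F : ℕ → ℝ := fun k => (2*((r:ℝ)+2) * (Bc s k * Bc s (r+2-k))) * (u^k * v^(r+2-k)) with hF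
    have step1 : ∑ k ∈ Finset.range (r+3), F k = (∑ k ∈ Finset.range (r+2), F k) + F (r+2) :=
      Finset.sum_range_succ F (r+2)
    have step2 : ∑ k ∈ Finset.range (r+2), F k = (∑ k ∈ Finset.range (r+1), F (k+1)) + F 0 :=
      Finset.sum_range_succ' F (r+1)
    have hFtop : F (r+2) = (2*((r:ℝ)+2) * (Bc s (r+2) * Bc s 0)) * (u^(r+2) * v^0) := by
      simp only [hF]
      rw [show r+2-(r+2) = 0 from by omega]
    have hF0 : F 0 = (2*((r:ℝ)+2) * (Bc s 0 * Bc s (r+2))) * (u^0 * v^(r+2)) := by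
      simp only [hF]
      rw [show r+2-0 = r+2 from by omega]
    have hFk : ∀ k ∈ Finset.range (r+1),
        F (k+1) = (2*((r:ℝ)+2) * (Bc s (k+1) * Bc s (r+1-k))) * (u^(k+1) * v^(r+1-k)) := by
      intro k hk
      simp only [hF]
      rw [show r+2-(k+1) = r+1-k from by omega]
    rw [step1, step2, Finset.sum_congr rfl hFk, hFtop, hF0]
    ring
  have E3a : ∑ k ∈ Finset.range (r+2), (2*(s-(r:ℝ)-1) * (Bc s k * Bc s (r+1-k))) * (u^(k+1) * v^(r+1-k))
      = (∑ k ∈ Finset.range (r+1), (2*(s-(r:ℝ)-1) * (Bc s k * Bc s (r+1-k))) * (u^(k+1) * v^(r+1-k)))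
        + (2*(s-(r:ℝ)-1) * (Bc s (r+1) * Bc s 0)) * (u^(r+2) * v^0) := by
    set F : ℕ → ℝ := fun k => (2*(s-(r:ℝ)-1) * (Bc s k * Bc s (r+1-k))) * (u^(k+1) * v^(r+1-k)) with hF
    have step1 : ∑ k ∈ Finset.range (r+2), F k = (∑ k ∈ Finset.range (r+1), F k) + F (r+1) :=
      Finset.sum_range_succ F (r+1)
    have hFtop : F (r+1) = (2*(s-(r:ℝ)-1) * (Bc s (r+1) * Bc s 0)) * (u^(r+2) * v^0) := by
      simp only [hF]
      rw [show r+1-(r+1) = 0 from by omega, show r+1+1 = r+2 from by omega]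
    rw [step1, hFtop]
  have E3b : ∑ k ∈ Finset.range (r+2), (2*(s-(r:ℝ)-1) * (Bc s k * Bc s (r+1-k))) * (u^k * v^(r+2-k))
      = (2*(s-(r:ℝ)-1) * (Bc s 0 * Bc s (r+1))) * (u^0 * v^(r+2))
        + ∑ k ∈ Finset.range (r+1), (2*(s-(r:ℝ)-1) * (Bc s (k+1) * Bc s (r-k))) * (u^(k+1) * v^(r+1-k)) := by
    set F : ℕ → ℝ := fun k => (2*(s-(r:ℝ)-1) * (Bc s k * Bc s (r+1-k))) * (u^k * v^(r+2-k)) with hF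
    have step2 : ∑ k ∈ Finset.range (r+2), F k = (∑ k ∈ Finset.range (r+1), F (k+1)) + F 0 :=
      Finset.sum_range_succ' F (r+1)
    have hF0 : F 0 = (2*(s-(r:ℝ)-1) * (Bc s 0 * Bc s (r+1))) * (u^0 * v^(r+2)) := by
      simp only [hF]
      rw [show r+1-0 = r+1 from by omega, show r+2-0 = r+2 from by omega]
    have hFk : ∀ k ∈ Finset.range (r+1),
        F (k+1) = (2*(s-(r:ℝ)-1) * (Bc s (k+1) * Bc s (r-k))) * (u^(k+1) * v^(r+1-k)) := by
      intro k hk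
      simp only [hF]
      rw [show r+1-(k+1) = r-k from by omega, show r+2-(k+1) = r+1-k from by omega]
    rw [step2, Finset.sum_congr rfl hFk, hF0]
    ring
  rw [E1, E2, E3, E2split, E3a, E3b]
  have hBtop := Bc_succ s (r+1)
  rw [show (r:ℕ)+1+1 = r+2 from by omega] at hBtop
  push_cast at hBtop
  have hb0 : (2*((r:ℝ)+2) * (Bc s 0 * Bc s (r+2))) = (2*(s-(r:ℝ)-1) * (Bc s 0 * Bc s (r+1))) := by
    linear_combination (2 * Bc s 0) * hBtop
  have htop : (2*((r:ℝ)+2) * (Bc s (r+2) * Bc s 0)) = (2*(s-(r:ℝ)-1) * (Bc s (r+1) * Bc s 0)) := by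
    linear_combination (2 * Bc s 0) * hBtop
  rw [hb0, htop]
  have main : ∀ k ∈ Finset.range (r+1),
      (-2*(2*s-(r:ℝ)) * (Bc s k * Bc s (r-k))) * (u^(k+1) * v^(r+1-k))
        + (2*((r:ℝ)+2) * (Bc s (k+1) * Bc s (r+1-k))) * (u^(k+1) * v^(r+1-k))
      = (2*(s-(r:ℝ)-1) * (Bc s k * Bc s (r+1-k))) * (u^(k+1) * v^(r+1-k))
        + (2*(s-(r:ℝ)-1) * (Bc s (k+1) * Bc s (r-k))) * (u^(k+1) * v^(r+1-k)) := by
    intro k hk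
    have hk' : k ≤ r := Nat.lt_succ_iff.mp (Finset.mem_range.mp hk)
    have h1 : ((k:ℝ)+1) * Bc s (k+1) = (s-(k:ℝ)) * Bc s k := Bc_succ s k
    have hrk : r + 1 - k = (r - k) + 1 := by omega
    have h2 : (((r-k:ℕ):ℝ)+1) * Bc s ((r-k)+1) = (s-((r-k:ℕ):ℝ)) * Bc s (r-k) := Bc_succ s (r-k)
    have hc : ((r-k:ℕ):ℝ) = (r:ℝ) - k := Nat.cast_sub hk'
    rw [hc] at h2
    rw [hrk]
    have hkey := keyid s (k:ℝ) ((r:ℝ)-k) (r:ℝ) (Bc s k) (Bc s (r-k)) (Bc s (k+1)) (Bc s ((r-k)+1))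
      (by ring) (Nat.cast_nonneg k)
      (by have := (Nat.cast_le (α := ℝ)).mpr hk'; linarith) h1 h2
    linear_combination (u^(k+1) * v^((r-k)+1)) * hkey
  have hsum := Finset.sum_congr rfl main
  rw [Finset.sum_add_distrib, Finset.sum_add_distrib] at hsum
  linarith [hsum]

lemma Qp_one (s : ℝ) (d : ℕ) : Qp s d 1 = Bc s d := by
  rw [Qp]
  rw [Finset.sum_eq_single d]
  · norm_num [Bc_zero]
  · intro k hk hne
    have h1 : d - k ≠ 0 := by
      have := Finset.mem_range.mp hk; omega
    norm_num [zero_pow h1]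
  · intro h; exact absurd (Finset.self_mem_range_succ d) h

lemma Qp_negone (s : ℝ) (d : ℕ) : Qp s d (-1) = (-1)^d * Bc s d := by
  rw [Qp]
  rw [Finset.sum_eq_single 0]
  · have : ((-1:ℝ)-1)/2 = -1 := by norm_num
    rw [this]
    norm_num [Bc_zero]
    ring
  · intro k hk hne
    have : ((-1:ℝ)+1)/2 = 0 := by norm_num
    rw [this]
    norm_num [zero_pow hne]
  · intro h; exact absurd (Finset.mem_range.mpr (by omega)) h

lemma Qp_sq_le (s : ℝ) (d : ℕ) (hs : (d:ℝ) ≤ s) :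
    ∀ x ∈ Icc (-1:ℝ) 1, (Qp s d x)^2 ≤ (Bc s d)^2 := by
  intro x hx
  obtain ⟨hx1, hx2⟩ := hx
  match d, hs with
  | 0, hs =>
    have h0 : ∀ y : ℝ, Qp s 0 y = 1 := by
      intro y; simp [Qp, Bc_zero]
    rw [h0, Bc_zero]
  | 1, hs =>
    have h1 : ∀ y : ℝ, Qp s 1 y = Bc s 1 * y := by
      intro y
      rw [Qp]
      rw [Finset.sum_range_succ, Finset.sum_range_succ, Finset.sum_range_zero]
      norm_num [Bc_zero]
      ring
    rw [h1]
    have := sq_nonneg (Bc s 1)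
    have hxx : x^2 ≤ 1 := by nlinarith
    calc (Bc s 1 * x)^2 = (Bc s 1)^2 * x^2 := by ring
    _ ≤ (Bc s 1)^2 * 1 := by nlinarith
    _ = (Bc s 1)^2 := by ring
  | (r+2), hs =>
    push_cast at hs
    set g : ℝ → ℝ := fun y =>
      ((r:ℝ)+2)*(2*s-(r:ℝ)-1) * (Qp s (r+2) y)^2
        + (1-y^2) * ((2*s-(r:ℝ)-1)/2)^2 * (Qp s (r+1) y)^2 with hgdef
    have hg : ∀ y : ℝ, HasDerivAt g
        ((4*s-4*(r:ℝ)-6) * y * ((2*s-(r:ℝ)-1)/2)^2 * (Qp s (r+1) y)^2) y := by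
      intro y
      have hQ2 : HasDerivAt (Qp s (r+2)) ((2*s-((r:ℝ)+1))/2 * Qp s (r+1) y) y := by
        have := hasDerivAt_Qp s (r+1) y
        push_cast at this
        exact this
      have hQ1 : HasDerivAt (Qp s (r+1)) ((2*s-(r:ℝ))/2 * Qp s r y) y :=
        hasDerivAt_Qp s r y
      have h1x : HasDerivAt (fun y : ℝ => 1 - y^2) (-(2*y)) y := by
        simpa using (hasDerivAt_pow 2 y).const_sub 1
      have hb : HasDerivAt (fun y : ℝ => (1-y^2) * ((2*s-(r:ℝ)-1)/2)^2 * (Qp s (r+1) y)^2)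
          ((-(2*y)) * ((2*s-(r:ℝ)-1)/2)^2 * (Qp s (r+1) y)^2
            + (1-y^2) * ((2*s-(r:ℝ)-1)/2)^2 *
              (2 * Qp s (r+1) y ^ 1 * ((2*s-(r:ℝ))/2 * Qp s r y))) y := by
        have hbase := ((h1x.mul_const (((2*s-(r:ℝ)-1)/2)^2)).fun_mul (hQ1.fun_pow 2))
        refine hbase.congr_deriv (Eq.symm ?_)
        all_goals ring
      have ha : HasDerivAt (fun y : ℝ => ((r:ℝ)+2)*(2*s-(r:ℝ)-1) * (Qp s (r+2) y)^2)
          (((r:ℝ)+2)*(2*s-(r:ℝ)-1) *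
            (2 * Qp s (r+2) y ^ 1 * ((2*s-((r:ℝ)+1))/2 * Qp s (r+1) y))) y :=
        (hQ2.pow 2).const_mul _
      have hsum := ha.add hb
      have heq : ((r:ℝ)+2)*(2*s-(r:ℝ)-1) *
            (2 * Qp s (r+2) y ^ 1 * ((2*s-((r:ℝ)+1))/2 * Qp s (r+1) y))
          + ((-(2*y)) * ((2*s-(r:ℝ)-1)/2)^2 * (Qp s (r+1) y)^2
            + (1-y^2) * ((2*s-(r:ℝ)-1)/2)^2 *
              (2 * Qp s (r+1) y ^ 1 * ((2*s-(r:ℝ))/2 * Qp s r y)))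
          = (4*s-4*(r:ℝ)-6) * y * ((2*s-(r:ℝ)-1)/2)^2 * (Qp s (r+1) y)^2 := by
        linear_combination (2 * Qp s (r+1) y * ((2*s-(r:ℝ)-1)/2)^2) * (ode s r y)
      rw [heq] at hsum
      exact hsum
    have hgdiff : Differentiable ℝ g := fun y => (hg y).differentiableAt
    have hgderiv : ∀ y, deriv g y = (4*s-4*(r:ℝ)-6) * y * ((2*s-(r:ℝ)-1)/2)^2 * (Qp s (r+1) y)^2 :=
      fun y => (hg y).deriv
    have hcoef : (0:ℝ) < 4*s-4*(r:ℝ)-6 := by linarith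
    have hmono : MonotoneOn g (Icc 0 1) := by
      apply monotoneOn_of_deriv_nonneg (convex_Icc 0 1) hgdiff.continuous.continuousOn
        hgdiff.differentiableOn
      intro y hy
      rw [interior_Icc] at hy
      rw [hgderiv]
      have : (0:ℝ) ≤ y := le_of_lt hy.1
      positivity
    have hanti : AntitoneOn g (Icc (-1) 0) := by
      apply antitoneOn_of_deriv_nonpos (convex_Icc (-1) 0) hgdiff.continuous.continuousOn
        hgdiff.differentiableOn
      intro y hy
      rw [interior_Icc] at hy
      rw [hgderiv]
      have hy0 : y ≤ 0 := le_of_lt hy.2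
      have h1 : (0:ℝ) ≤ ((2*s-(r:ℝ)-1)/2)^2 * (Qp s (r+1) y)^2 := by positivity
      nlinarith [mul_nonneg (mul_nonneg hcoef.le (neg_nonneg.mpr hy0)) h1]
    have hN : (0:ℝ) < ((r:ℝ)+2)*(2*s-(r:ℝ)-1) := by
      apply mul_pos <;> [positivity; linarith]
    have hg1 : g 1 = ((r:ℝ)+2)*(2*s-(r:ℝ)-1) * (Bc s (r+2))^2 := by
      rw [hgdef]; simp [Qp_one]
    have hgm1 : g (-1) = ((r:ℝ)+2)*(2*s-(r:ℝ)-1) * (Bc s (r+2))^2 := by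
      rw [hgdef]
      simp only [Qp_negone]
      have : ((-1:ℝ)^(r+2) * Bc s (r+2))^2 = (Bc s (r+2))^2 := by
        rw [mul_pow, ← pow_mul]
        rcases Nat.even_or_odd (r+2) with h | h
        · rw [(by omega : (r+2)*2 = 2*(r+2)), pow_mul]; norm_num
        · rw [(by omega : (r+2)*2 = 2*(r+2)), pow_mul]; norm_num
      rw [this]
      ring_nf
    have hgle : g x ≤ ((r:ℝ)+2)*(2*s-(r:ℝ)-1) * (Bc s (r+2))^2 := by
      rcases le_or_gt 0 x with h | h
      · calc g x ≤ g 1 := hmono ⟨h, hx2⟩ ⟨zero_le_one, le_refl 1⟩ hx2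
        _ = _ := hg1
      · calc g x ≤ g (-1) := hanti ⟨le_refl (-1), by linarith⟩ ⟨hx1, le_of_lt h⟩ hx1
        _ = _ := hgm1
    have hlow : ((r:ℝ)+2)*(2*s-(r:ℝ)-1) * (Qp s (r+2) x)^2 ≤ g x := by
      rw [hgdef]
      have h1 : (0:ℝ) ≤ 1 - x^2 := by nlinarith
      have h2 : (0:ℝ) ≤ (1-x^2) * ((2*s-(r:ℝ)-1)/2)^2 * (Qp s (r+1) x)^2 := by positivity
      simp only []
      linarith
    have hfin := le_trans hlow hgle
    exact (mul_le_mul_iff_right₀ hN).mp hfin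

noncomputable def dcoef (s : ℝ) (n k : ℕ) : ℝ :=
  (-1)^k * (n.choose k) * FF s k * FF s (n-k)

lemma dcoef_eq_zero (s : ℝ) {n k : ℕ} (h : n < k) : dcoef s n k = 0 := by
  simp [dcoef, Nat.choose_eq_zero_of_lt h]

lemma dcoef_zero_succ (s : ℝ) (n : ℕ) : dcoef s (n+1) 0 = (s - n) * dcoef s n 0 := by
  simp [dcoef, FF_succ]
  ring

lemma dcoef_succ (s : ℝ) (n k : ℕ) :
    dcoef s (n+1) (k+1)
      = -(s - (k:ℝ)) * dcoef s n k + (s - ((n-(k+1):ℕ):ℝ)) * dcoef s n (k+1) := by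
  rw [dcoef, dcoef, dcoef, Nat.choose_succ_succ]
  have h1 : (n:ℕ)+1-(k+1) = n-k := by omega
  rw [h1]
  have e1 : FF s (k+1) = FF s k * (s - (k:ℝ)) := FF_succ s k
  rcases lt_or_ge k n with h | h
  · have e2 : FF s (n-k) = FF s (n-(k+1)) * (s - ((n-(k+1):ℕ):ℝ)) := by
      rw [show n-k = (n-(k+1))+1 from by omega, FF_succ]
    rw [e1, e2]
    push_cast
    ring
  · have h2 : n.choose (k+1) = 0 := Nat.choose_eq_zero_of_lt (by omega)
    rw [h2, e1]
    push_cast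
    ring

lemma dcoef_zero (s : ℝ) : dcoef s 0 0 = 1 := by
  simp [dcoef, FF]

lemma iter_expand (s : ℝ) (n : ℕ) : ∀ x ∈ Ioo (-1:ℝ) 1,
    iteratedDeriv n (fun t : ℝ => (1 - t^2) ^ s) x
      = ∑ k ∈ Finset.range (n+1),
          dcoef s n k * ((1-x) ^ (s - (k:ℝ)) * (1+x) ^ (s - ((n-k : ℕ):ℝ))) := by
  induction n with
  | zero =>
    intro x hx
    rw [iteratedDeriv_zero]
    have h1 : (0:ℝ) ≤ 1 - x := by linarith [hx.2]
    have h2 : (0:ℝ) ≤ 1 + x := by linarith [hx.1]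
    rw [show (1:ℝ) - x^2 = (1-x)*(1+x) from by ring, Real.mul_rpow h1 h2]
    simp [dcoef_zero]
  | succ n IH =>
    intro x hx
    obtain ⟨hxa, hxb⟩ := hx
    have h1 : (0:ℝ) < 1 - x := by linarith
    have h2 : (0:ℝ) < 1 + x := by linarith
    rw [iteratedDeriv_succ]
    -- replace by the explicit sum near x
    have hev : iteratedDeriv n (fun t : ℝ => (1 - t^2) ^ s)
        =ᶠ[nhds x] (fun y => ∑ k ∈ Finset.range (n+1),
          dcoef s n k * ((1-y) ^ (s - (k:ℝ)) * (1+y) ^ (s - ((n-k : ℕ):ℝ)))) := by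
      filter_upwards [isOpen_Ioo.mem_nhds (⟨hxa, hxb⟩ : x ∈ Ioo (-1:ℝ) 1)] with y hy
      exact IH y hy
    rw [hev.deriv_eq]
    -- compute the derivative of the sum
    have hterm : ∀ k ∈ Finset.range (n+1), HasDerivAt
        (fun y : ℝ => dcoef s n k * ((1-y) ^ (s - (k:ℝ)) * (1+y) ^ (s - ((n-k : ℕ):ℝ))))
        (dcoef s n k * (((-1) * (s - (k:ℝ)) * (1-x) ^ (s - (k:ℝ) - 1)) * (1+x) ^ (s - ((n-k : ℕ):ℝ))
          + (1-x) ^ (s - (k:ℝ)) * ((1) * (s - ((n-k : ℕ):ℝ)) * (1+x) ^ (s - ((n-k : ℕ):ℝ) - 1)))) x := by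
      intro k _
      have ha : HasDerivAt (fun y : ℝ => 1 - y) (-1) x := by
        simpa using (hasDerivAt_id x).const_sub 1
      have hb : HasDerivAt (fun y : ℝ => 1 + y) 1 x := by
        simpa using (hasDerivAt_id x).const_add 1
      have hap : HasDerivAt (fun y : ℝ => (1-y) ^ (s - (k:ℝ)))
          ((-1) * (s - (k:ℝ)) * (1-x) ^ (s - (k:ℝ) - 1)) x :=
        ha.rpow_const (Or.inl (ne_of_gt h1))
      have hbp : HasDerivAt (fun y : ℝ => (1+y) ^ (s - ((n-k : ℕ):ℝ)))
          ((1) * (s - ((n-k : ℕ):ℝ)) * (1+x) ^ (s - ((n-k : ℕ):ℝ) - 1)) x :=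
        hb.rpow_const (Or.inl (ne_of_gt h2))
      exact (hap.mul hbp).const_mul _
    have hD := HasDerivAt.fun_sum hterm
    rw [hD.deriv]
    -- now the sum manipulation
    set S1 : ℕ → ℝ := fun k => dcoef s n k * (-(s - (k:ℝ)))
      * ((1-x) ^ (s - (k:ℝ) - 1) * (1+x) ^ (s - ((n-k:ℕ):ℝ))) with hS1
    set S2 : ℕ → ℝ := fun k => dcoef s n k * (s - ((n-k:ℕ):ℝ))
      * ((1-x) ^ (s - (k:ℝ)) * (1+x) ^ (s - ((n-k:ℕ):ℝ) - 1)) with hS2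
    set T : ℕ → ℝ := fun k => (s - ((n-(k+1):ℕ):ℝ)) * dcoef s n (k+1)
      * ((1-x) ^ (s - (k:ℝ) - 1) * (1+x) ^ (s - ((n-k:ℕ):ℝ))) with hT
    set F : ℕ → ℝ := fun k => dcoef s (n+1) k
      * ((1-x) ^ (s - (k:ℝ)) * (1+x) ^ (s - ((n+1-k : ℕ):ℝ))) with hF
    have hLHS : ∑ k ∈ Finset.range (n+1),
        dcoef s n k * (((-1) * (s - (k:ℝ)) * (1-x) ^ (s - (k:ℝ) - 1)) * (1+x) ^ (s - ((n-k : ℕ):ℝ))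
          + (1-x) ^ (s - (k:ℝ)) * ((1) * (s - ((n-k : ℕ):ℝ)) * (1+x) ^ (s - ((n-k : ℕ):ℝ) - 1)))
        = (∑ k ∈ Finset.range (n+1), S1 k) + (∑ k ∈ Finset.range (n+1), S2 k) := by
      rw [← Finset.sum_add_distrib]
      apply Finset.sum_congr rfl
      intro k _
      simp only [hS1, hS2]
      ring
    rw [hLHS]
    -- RHS decomposition
    have hRHS : ∑ k ∈ Finset.range (n+2),
        dcoef s (n+1) k * ((1-x) ^ (s - (k:ℝ)) * (1+x) ^ (s - ((n+1-k : ℕ):ℝ)))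
        = (∑ k ∈ Finset.range (n+1), F (k+1)) + F 0 :=
      Finset.sum_range_succ' F (n+1)
    rw [hRHS]
    have hF0 : F 0 = S2 0 := by
      simp only [hF, hS2, dcoef_zero_succ]
      rw [show ((n+1-0 : ℕ):ℝ) = ((n:ℝ)+1) from by rw [Nat.sub_zero]; push_cast; ring]
      rw [show ((n-0 : ℕ):ℝ) = (n:ℝ) from by rw [Nat.sub_zero]]
      rw [show s - ((n:ℝ)+1) = s - (n:ℝ) - 1 from by ring]
      rw [show ((0:ℕ):ℝ) = (0:ℝ) from by push_cast; ring]
      ring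
    have hFk : ∀ k ∈ Finset.range (n+1), F (k+1) = S1 k + T k := by
      intro k _
      simp only [hF, hS1, hT, dcoef_succ]
      rw [show (((k+1):ℕ):ℝ) = (k:ℝ)+1 from by push_cast; ring]
      rw [show s - ((k:ℝ)+1) = s - (k:ℝ) - 1 from by ring]
      rw [show ((n+1)-(k+1) : ℕ) = n-k from by omega]
      ring
    have hTS : ∀ k ∈ Finset.range n, T k = S2 (k+1) := by
      intro k hk
      have hkn : k < n := Finset.mem_range.mp hk
      simp only [hT, hS2]
      rw [show (((k+1):ℕ):ℝ) = (k:ℝ)+1 from by push_cast; ring]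
      rw [show s - ((k:ℝ)+1) = s - (k:ℝ) - 1 from by ring]
      rw [show ((n-k : ℕ):ℝ) = ((n-(k+1):ℕ):ℝ) + 1 from by
        rw [show n-k = (n-(k+1))+1 from by omega]; push_cast; ring]
      rw [show s - (((n-(k+1):ℕ):ℝ) + 1) = s - ((n-(k+1):ℕ):ℝ) - 1 from by ring]
      ring
    have hTn : T n = 0 := by
      simp only [hT]
      rw [dcoef_eq_zero s (by omega : n < n+1)]
      ring
    rw [Finset.sum_congr rfl hFk, Finset.sum_add_distrib, hF0]
    have e3 : ∑ k ∈ Finset.range (n+1), T k = ∑ k ∈ Finset.range n, S2 (k+1) := by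
      rw [Finset.sum_range_succ, hTn, add_zero]
      exact Finset.sum_congr rfl hTS
    have e4 : ∑ k ∈ Finset.range (n+1), S2 k = (∑ k ∈ Finset.range n, S2 (k+1)) + S2 0 :=
      Finset.sum_range_succ' S2 n
    rw [e3, e4]
    ring

lemma FF_eq_rise (m : ℝ) (j : ℕ) :
    FF (m + (j:ℝ)) j = ∏ i ∈ Finset.range j, (m + 1 + (i:ℝ)) := by
  rw [FF]
  rw [← Finset.prod_range_reflect (fun i => m + 1 + (i:ℝ)) j]
  apply Finset.prod_congr rfl
  intro i hi
  have hij : i < j := Finset.mem_range.mp hi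
  have : ((j - 1 - i : ℕ):ℝ) = (j:ℝ) - 1 - (i:ℝ) := by
    have h1 : ((j - 1 - i : ℕ)) = j - 1 - i := rfl
    rw [Nat.cast_sub (by omega), Nat.cast_sub (by omega)]
    push_cast
    ring
  rw [this]
  ring

lemma Gamma_FF (m : ℝ) (hm : 0 ≤ m) (j : ℕ) :
    Real.Gamma (m+1) * FF (m + (j:ℝ)) j = Real.Gamma (m + (j:ℝ) + 1) := by
  rw [FF_eq_rise]
  induction j with
  | zero => simp
  | succ j IH =>
    rw [Finset.prod_range_succ, ← mul_assoc, IH]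
    have hne : m + (j:ℝ) + 1 ≠ 0 := by positivity
    have := Real.Gamma_add_one hne
    rw [show m + ((j:ℕ)+1:ℕ) + 1 = (m + (j:ℝ) + 1) + 1 from by push_cast; ring, this]
    ring

lemma core_ineq (n : ℕ) (m : ℝ) (hm : m = (n:ℝ)/2) :
    Real.sqrt (m+1) * Real.Gamma (m + 1/2) ≤ 2 * Real.sqrt π * Real.Gamma (m+1) := by
  rcases Nat.eq_zero_or_pos n with hn | hn
  · subst hn
    norm_num at hm
    subst hm
    norm_num [Real.Gamma_one]
    rw [Real.Gamma_one_half_eq]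
    nlinarith [Real.sqrt_nonneg π]
  · have hm12 : (1:ℝ)/2 ≤ m := by
      rw [hm]
      have : (1:ℝ) ≤ (n:ℝ) := by exact_mod_cast hn
      linarith
    have hmpos : 0 < m := by linarith
    have hG1 : 0 < Real.Gamma m := Real.Gamma_pos_of_pos hmpos
    have hG2 : 0 < Real.Gamma (m+1) := Real.Gamma_pos_of_pos (by linarith)
    have hG3 : 0 < Real.Gamma (m+1/2) := Real.Gamma_pos_of_pos (by linarith)
    -- log-convexity
    have hconv := Real.convexOn_log_Gamma.2 (Set.mem_Ioi.mpr hmpos)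
      (Set.mem_Ioi.mpr (by linarith : (0:ℝ) < m+1)) (by norm_num : (0:ℝ) ≤ 1/2)
      (by norm_num : (0:ℝ) ≤ 1/2) (by norm_num)
    simp only [smul_eq_mul, Function.comp_apply] at hconv
    rw [show (1:ℝ)/2 * m + 1/2 * (m+1) = m + 1/2 from by ring] at hconv
    have hsq : Real.Gamma (m+1/2)^2 ≤ Real.Gamma m * Real.Gamma (m+1) := by
      have e : Real.log (Real.Gamma (m+1/2)^2) ≤ Real.log (Real.Gamma m * Real.Gamma (m+1)) := by
        rw [Real.log_pow, Real.log_mul hG1.ne' hG2.ne']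
        push_cast
        linarith
      have := Real.exp_le_exp.mpr e
      rwa [Real.exp_log (by positivity), Real.exp_log (by positivity)] at this
    have hGadd : Real.Gamma (m+1) = m * Real.Gamma m := Real.Gamma_add_one hmpos.ne'
    have hb : m * Real.Gamma (m+1/2)^2 ≤ Real.Gamma (m+1)^2 := by
      have h := mul_le_mul_of_nonneg_left hsq hmpos.le
      calc m * Real.Gamma (m+1/2)^2 ≤ m * (Real.Gamma m * Real.Gamma (m+1)) := h
      _ = (m * Real.Gamma m) * Real.Gamma (m+1) := by ring
      _ = Real.Gamma (m+1)^2 := by rw [← hGadd]; ring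
    have hsq2 : (Real.sqrt (m+1) * Real.Gamma (m+1/2))^2 ≤ (2 * Real.sqrt π * Real.Gamma (m+1))^2 := by
      have e1 : (Real.sqrt (m+1))^2 = m+1 := Real.sq_sqrt (by linarith)
      have e2 : (Real.sqrt π)^2 = π := Real.sq_sqrt Real.pi_pos.le
      have hpi := Real.pi_gt_three
      nlinarith [hb, sq_nonneg (Real.Gamma (m+1)), sq_nonneg (Real.Gamma (m+1/2)), hG2, hG3]
    have h1 : 0 ≤ Real.sqrt (m+1) * Real.Gamma (m+1/2) := by positivity
    have h2 : 0 ≤ 2 * Real.sqrt π * Real.Gamma (m+1) := by positivity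
    nlinarith [hsq2, h1, h2]

lemma gamma_final (n j : ℕ) (m ℓ : ℝ) (hm : m = (n:ℝ)/2) (hl : ℓ = m + (j:ℝ) + 1/2) :
    (cConst ℓ m)^2 * (Bc (m + (j:ℝ)) j)^2
      ≤ 2 * (ℓ / Real.sqrt (m+1)) * (((j+n).choose n : ℕ) : ℝ) := by
  have hm0 : 0 ≤ m := by rw [hm]; positivity
  have hlpos : 0 < ℓ := by rw [hl]; positivity
  have hGm1 : 0 < Real.Gamma (m+1) := Real.Gamma_pos_of_pos (by linarith)
  have hGmh : 0 < Real.Gamma (m+1/2) := Real.Gamma_pos_of_pos (by linarith)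
  have hGmj1 : 0 < Real.Gamma (m+(j:ℝ)+1) := Real.Gamma_pos_of_pos (by positivity)
  have hfj : (0:ℝ) < (j.factorial : ℝ) := by exact_mod_cast Nat.factorial_pos j
  have hfn : (0:ℝ) < (n.factorial : ℝ) := by exact_mod_cast Nat.factorial_pos n
  have hfjn : (0:ℝ) < ((j+n).factorial : ℝ) := by exact_mod_cast Nat.factorial_pos (j+n)
  have h2m : (0:ℝ) < (2:ℝ)^m := Real.rpow_pos_of_pos (by norm_num) m
  have h22m : (0:ℝ) < (2:ℝ)^(2*m) := Real.rpow_pos_of_pos (by norm_num) (2*m)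
  have hsm1 : (0:ℝ) < Real.sqrt (m+1) := Real.sqrt_pos.mpr (by linarith)
  have hspi : (0:ℝ) < Real.sqrt π := Real.sqrt_pos.mpr Real.pi_pos
  -- Gamma argument rewrites
  have hA1 : ℓ - m + 1/2 = (j:ℝ)+1 := by rw [hl]; ring
  have hA2 : ℓ + m + 1/2 = ((j+n : ℕ):ℝ)+1 := by rw [hl, hm]; push_cast; ring
  have hA3 : ℓ + 1/2 = m + (j:ℝ) + 1 := by rw [hl]; ring
  -- duplication
  have hdup := Real.Gamma_mul_Gamma_add_half (m+1/2)
  rw [show m+1/2+1/2 = m+1 from by ring, show 2*(m+1/2) = 2*m+1 from by ring,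
    show 1-(2*m+1) = -(2*m) from by ring] at hdup
  have hG2m1pos : 0 < Real.Gamma (2*m+1) := Real.Gamma_pos_of_pos (by linarith)
  have hnfact : (n.factorial : ℝ) = Real.Gamma (2*m+1) := by
    rw [show 2*m = (n:ℝ) from by rw [hm]; ring]
    exact (Real.Gamma_nat_eq_factorial n).symm
  -- the key scalar inequality
  have hrpowinv : (2:ℝ)^(-(2*m)) * (2:ℝ)^(2*m) = 1 := by
    rw [← Real.rpow_add (by norm_num : (0:ℝ) < 2)]
    norm_num
  have hG2m1 : Real.Gamma (2*m+1) = (2:ℝ)^(2*m) * (Real.Gamma (m+1/2) * Real.Gamma (m+1)) / Real.sqrt π := by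
    rw [eq_div_iff hspi.ne']
    linear_combination (-((2:ℝ)^(2*m))) * hdup - Real.Gamma (2*m+1) * Real.sqrt π * hrpowinv
  have hcore := core_ineq n m hm
  have hkey : Real.sqrt (m+1) * (n.factorial : ℝ) ≤ 2 * ((2:ℝ)^(2*m) * Real.Gamma (m+1)^2) := by
    rw [hnfact, hG2m1]
    rw [div_eq_mul_inv]
    have hstep := mul_le_mul_of_nonneg_left hcore
      (le_of_lt (by positivity : (0:ℝ) < (2:ℝ)^(2*m) * Real.Gamma (m+1) * (Real.sqrt π)⁻¹))
    calc Real.sqrt (m+1) * ((2:ℝ)^(2*m) * (Real.Gamma (m+1/2) * Real.Gamma (m+1)) * (Real.sqrt π)⁻¹)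
        = ((2:ℝ)^(2*m) * Real.Gamma (m+1) * (Real.sqrt π)⁻¹) * (Real.sqrt (m+1) * Real.Gamma (m+1/2)) := by
          ring
    _ ≤ ((2:ℝ)^(2*m) * Real.Gamma (m+1) * (Real.sqrt π)⁻¹) * (2 * Real.sqrt π * Real.Gamma (m+1)) := hstep
    _ = 2 * ((2:ℝ)^(2*m) * Real.Gamma (m+1)^2) * (Real.sqrt π * (Real.sqrt π)⁻¹) := by ring
    _ = 2 * ((2:ℝ)^(2*m) * Real.Gamma (m+1)^2) := by
          rw [mul_inv_cancel₀ hspi.ne', mul_one]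
  -- choose as factorials
  have hchoose : (((j+n).choose n : ℕ) : ℝ) = ((j+n).factorial : ℝ) / ((n.factorial : ℝ) * (j.factorial : ℝ)) := by
    rw [eq_div_iff (by positivity)]
    have h := Nat.choose_mul_factorial_mul_factorial (Nat.le_add_left n j)
    rw [show j + n - n = j from by omega, mul_assoc] at h
    exact_mod_cast congrArg (Nat.cast (R := ℝ)) h
  -- FF as Gamma ratio
  have hFFe : FF (m+(j:ℝ)) j = Real.Gamma (m+(j:ℝ)+1) / Real.Gamma (m+1) := by
    rw [eq_div_iff hGm1.ne']
    linear_combination Gamma_FF m hm0 j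
  -- compute LHS
  have hrpow2 : ((2:ℝ)^m)^(2:ℕ) = (2:ℝ)^(2*m) := by
    rw [← Real.rpow_natCast ((2:ℝ)^m) 2, ← Real.rpow_mul (by norm_num : (0:ℝ) ≤ 2)]
    norm_num [mul_comm]
  have hsqarg : 0 ≤ ℓ * Real.Gamma (ℓ - m + 1/2) * Real.Gamma (ℓ + m + 1/2) := by
    rw [hA1, hA2, Real.Gamma_nat_eq_factorial, Real.Gamma_nat_eq_factorial]
    positivity
  have hL : (cConst ℓ m)^2 * (Bc (m + (j:ℝ)) j)^2
      = ℓ * ((j+n).factorial : ℝ) / ((2:ℝ)^(2*m) * Real.Gamma (m+1)^2 * (j.factorial : ℝ)) := by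
    rw [cConst, Bc, div_pow, div_pow, Real.sq_sqrt hsqarg, hA1, hA2, hA3,
      Real.Gamma_nat_eq_factorial, Real.Gamma_nat_eq_factorial, mul_pow, hrpow2, hFFe]
    rw [div_pow]
    field_simp
  rw [hL, hchoose]
  have hR : 2 * (ℓ / Real.sqrt (m+1)) * (((j+n).factorial : ℝ) / ((n.factorial:ℝ) * (j.factorial:ℝ)))
      = (2 * ℓ * ((j+n).factorial : ℝ)) / (Real.sqrt (m+1) * ((n.factorial:ℝ) * (j.factorial:ℝ))) := by
    field_simp
  rw [hR, div_le_div_iff₀ (by positivity) (by positivity)]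
  calc ℓ * ((j+n).factorial : ℝ) * (Real.sqrt (m+1) * ((n.factorial:ℝ) * (j.factorial:ℝ)))
      = (ℓ * ((j+n).factorial : ℝ) * (j.factorial:ℝ)) * (Real.sqrt (m+1) * (n.factorial:ℝ)) := by ring
  _ ≤ (ℓ * ((j+n).factorial : ℝ) * (j.factorial:ℝ)) * (2 * ((2:ℝ)^(2*m) * Real.Gamma (m+1)^2)) := by
      apply mul_le_mul_of_nonneg_left hkey
      positivity
  _ = 2 * ℓ * ((j+n).factorial : ℝ) * ((2:ℝ)^(2*m) * Real.Gamma (m+1)^2 * (j.factorial:ℝ)) := by ring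

lemma jacobiP_eq (j : ℕ) (α : ℝ) (x : ℝ) (hx : x ∈ Ioo (-1:ℝ) 1) :
    jacobiP j α x = Qp (α + j) j x := by
  obtain ⟨hxa, hxb⟩ := hx
  have h1 : (0:ℝ) < 1 - x := by linarith
  have h2 : (0:ℝ) < 1 + x := by linarith
  rw [jacobiP, iter_expand (α + (j:ℝ)) j x ⟨hxa, hxb⟩, Qp]
  rw [mul_comm, Finset.sum_mul]
  apply Finset.sum_congr rfl
  intro k hk
  have hk' : k ≤ j := Nat.lt_succ_iff.mp (Finset.mem_range.mp hk)
  -- rewrite the rpow part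
  have hsplit : (1 - x^2) ^ (-α) = (1-x) ^ (-α) * (1+x) ^ (-α) := by
    rw [show (1:ℝ) - x^2 = (1-x)*(1+x) from by ring, Real.mul_rpow h1.le h2.le]
  have hxm1 : (1-x) ^ (-α) * (1-x) ^ (α + (j:ℝ) - (k:ℝ)) = (1-x) ^ ((j-k : ℕ):ℝ) := by
    rw [← Real.rpow_add h1]
    congr 1
    rw [Nat.cast_sub hk']
    ring
  have hxm2 : (1+x) ^ (-α) * (1+x) ^ (α + (j:ℝ) - ((j-k : ℕ):ℝ)) = (1+x) ^ ((k : ℕ):ℝ) := by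
    rw [← Real.rpow_add h2]
    congr 1
    rw [Nat.cast_sub hk']
    ring
  have hnat1 : (1-x) ^ ((j-k : ℕ):ℝ) = (1-x) ^ (j-k : ℕ) := Real.rpow_natCast _ _
  have hnat2 : (1+x) ^ ((k : ℕ):ℝ) = (1+x) ^ (k : ℕ) := Real.rpow_natCast _ _
  -- numeric facts
  have hcfac : ((j.choose k : ℝ)) * (k.factorial : ℝ) * ((j-k).factorial : ℝ) = (j.factorial : ℝ) := by
    exact_mod_cast congrArg (Nat.cast (R := ℝ)) (Nat.choose_mul_factorial_mul_factorial hk')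
  have hsign : ((-1:ℝ))^(j-k) * (-1)^k = (-1)^j := by
    rw [← pow_add]
    congr 1
    omega
  have h2pow : ((2:ℝ))^(j-k) * 2^k = 2^j := by
    rw [← pow_add]
    congr 1
    omega
  have hxm : ((x-1)/2)^(j-k) = (-1:ℝ)^(j-k) * ((1-x)^(j-k) / 2^(j-k)) := by
    rw [show (x-1)/2 = (-1)*((1-x)/2) from by ring, mul_pow, div_pow]
  have hxp : ((x+1)/2)^k = (1+x)^k / 2^k := by
    rw [show (x+1)/2 = (1+x)/2 from by ring, div_pow]
  -- put together
  rw [dcoef, Bc, Bc, hxm, hxp]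
  have expand : (-1:ℝ) ^ k * (j.choose k) * FF (α+j) k * FF (α+j) (j-k)
        * ((1-x) ^ (α + (j:ℝ) - (k:ℝ)) * (1+x) ^ (α + (j:ℝ) - ((j-k : ℕ):ℝ)))
        * ((-1) ^ j / (2^j * (j.factorial : ℝ)) * (1 - x^2) ^ (-α))
      = ((-1:ℝ)^j * (-1)^k / (2^j * (j.factorial : ℝ))) * ((j.choose k : ℝ))
        * (FF (α+j) k * FF (α+j) (j-k))
        * (((1-x) ^ (-α) * (1-x) ^ (α + (j:ℝ) - (k:ℝ)))
            * ((1+x) ^ (-α) * (1+x) ^ (α + (j:ℝ) - ((j-k : ℕ):ℝ)))) := by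
    rw [hsplit]; ring
  rw [expand, hxm1, hxm2, hnat1, hnat2]
  have hfk : (k.factorial : ℝ) ≠ 0 := Nat.cast_ne_zero.mpr (Nat.factorial_ne_zero k)
  have hfjk : ((j-k).factorial : ℝ) ≠ 0 := Nat.cast_ne_zero.mpr (Nat.factorial_ne_zero (j-k))
  have hfj : (j.factorial : ℝ) ≠ 0 := Nat.cast_ne_zero.mpr (Nat.factorial_ne_zero j)
  have h2j : ((2:ℝ))^j ≠ 0 := by positivity
  have h2k : ((2:ℝ))^k ≠ 0 := by positivity
  have h2jk : ((2:ℝ))^(j-k) ≠ 0 := by positivity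
  have hk2 : ((-1:ℝ))^k * (-1)^k = 1 := by
    rw [← pow_add, show k+k = 2*k from by omega, pow_mul]
    norm_num
  have hsign2 : ((-1:ℝ))^(j-k) = (-1)^j * (-1)^k := by
    linear_combination ((-1:ℝ))^k * hsign - ((-1:ℝ))^(j-k) * hk2
  have hcne : ((j.choose k : ℝ)) ≠ 0 := by
    exact_mod_cast (Nat.choose_pos hk').ne'
  have hchoose : ((j.choose k : ℝ)) = (j.factorial : ℝ) / ((k.factorial : ℝ) * ((j-k).factorial : ℝ)) := by
    rw [eq_div_iff (by positivity)]
    linear_combination hcfac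
  rw [hsign2, ← h2pow, hchoose]
  field_simp


lemma jacobiP_zero_eq (j : ℕ) (x : ℝ) (hx1 : -1 ≤ x) (hx2 : x ≤ 1) :
    jacobiP j 0 x = Qp ((0:ℝ) + (j:ℝ)) j x := by
  have hEqOn : Set.EqOn (jacobiP j 0) (Qp ((0:ℝ) + (j:ℝ)) j) (Ioo (-1:ℝ) 1) :=
    fun y hy => jacobiP_eq j 0 y hy
  have hfeq : (fun t : ℝ => (1 - t^2) ^ ((0:ℝ)+(j:ℝ))) = (fun t : ℝ => (1 - t^2)^(j:ℕ)) := by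
    funext t; rw [zero_add, Real.rpow_natCast]
  have hcont : Continuous (jacobiP j 0) := by
    have hsm : ContDiff ℝ (⊤:ℕ∞) (fun t : ℝ => (1 - t^2)^(j:ℕ)) :=
      (contDiff_const.sub (contDiff_id.pow 2)).pow j
    have hcid : Continuous (iteratedDeriv j (fun t : ℝ => (1 - t^2) ^ ((0:ℝ)+(j:ℝ)))) := by
      rw [hfeq]
      exact hsm.continuous_iteratedDeriv j (mod_cast le_top)
    have hform : jacobiP j 0 = fun y => ((-1:ℝ)^j / (2^j * (j.factorial:ℝ))) *
        iteratedDeriv j (fun t : ℝ => (1 - t^2) ^ ((0:ℝ)+(j:ℝ))) y := by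
      funext y
      rw [jacobiP, neg_zero, Real.rpow_zero, mul_one]
    rw [hform]
    exact continuous_const.mul hcid
  have hcont2 : Continuous (Qp ((0:ℝ) + (j:ℝ)) j) := by
    unfold Qp
    apply continuous_finset_sum
    intro k _
    fun_prop
  have hclos := hEqOn.closure hcont hcont2
  rw [closure_Ioo (by norm_num : (-1:ℝ) ≠ 1)] at hclos
  exact hclos ⟨hx1, hx2⟩

end Stmt4Aux

theorem stmt4 :
    ∃ C : ℝ, 0 < C ∧ ∀ ℓ m : ℝ, memI ℓ m → ∀ x ∈ Set.Icc (-1:ℝ) 1,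
      Yfun ℓ m x ^ 2 ≤ C * (1 - x ^ 2) ^ m * (ℓ / Real.sqrt (m + 1)) *
        (Nat.choose ⌊ℓ - 1/2 + m⌋₊ ⌊2 * m⌋₊ : ℝ) := by
  refine ⟨2, by norm_num, ?_⟩
  rintro ℓ m ⟨⟨n, hm⟩, ⟨j, hj⟩⟩ x hx
  obtain ⟨hx1, hx2⟩ := hx
  have hm0 : 0 ≤ m := by rw [hm]; positivity
  have hℓ : ℓ = m + (j:ℝ) + 1/2 := by linarith
  have hfl1 : ⌊ℓ - m - 1/2⌋₊ = j := by rw [hj]; exact Nat.floor_natCast j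
  have hfl2 : ⌊2 * m⌋₊ = n := by
    rw [show 2*m = (n:ℝ) from by rw [hm]; ring]; exact Nat.floor_natCast n
  have hfl3 : ⌊ℓ - 1/2 + m⌋₊ = j + n := by
    rw [show ℓ - 1/2 + m = ((j+n : ℕ):ℝ) from by rw [hℓ, hm]; push_cast; ring]
    exact Nat.floor_natCast _
  rw [hfl2, hfl3]
  have hgf := Stmt4Aux.gamma_final n j m ℓ hm hℓ
  have hYr : Yfun ℓ m x = cConst ℓ m * (1 - x^2) ^ (m/2) * jacobiP j m x := by
    rw [Yfun, hfl1]
  have hx2nn : (0:ℝ) ≤ 1 - x^2 := by nlinarith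
  have hrm : (0:ℝ) ≤ (1-x^2) ^ m := Real.rpow_nonneg hx2nn m
  have hlpos : (0:ℝ) < ℓ := by rw [hℓ]; positivity
  have hendpoint : (x = 1 ∨ x = -1) →
      Yfun ℓ m x ^ 2 ≤ 2 * (1 - x ^ 2) ^ m * (ℓ / Real.sqrt (m + 1)) *
        (Nat.choose (j+n) n : ℝ) := by
    intro hxpm
    have h0 : 1 - x^2 = 0 := by rcases hxpm with h | h <;> rw [h] <;> ring
    by_cases hn0 : n = 0
    · subst hn0
      norm_num at hm
      subst hm
      have hsq : (Stmt4Aux.Qp ((0:ℝ) + (j:ℝ)) j x)^2 = (Stmt4Aux.Bc ((0:ℝ) + (j:ℝ)) j)^2 := by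
        rcases hxpm with h | h
        · rw [h, Stmt4Aux.Qp_one]
        · rw [h, Stmt4Aux.Qp_negone, mul_pow]
          have : ((-1:ℝ)^j)^2 = 1 := by
            rw [← pow_mul, mul_comm, pow_mul]
            norm_num
          rw [this, one_mul]
      rw [hYr, Stmt4Aux.jacobiP_zero_eq j x hx1 hx2,
        show ((0:ℝ))/2 = 0 from by norm_num, Real.rpow_zero]
      calc (cConst ℓ 0 * 1 * Stmt4Aux.Qp ((0:ℝ)+(j:ℝ)) j x)^2
          = (cConst ℓ 0)^2 * (Stmt4Aux.Qp ((0:ℝ)+(j:ℝ)) j x)^2 := by ring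
        _ = (cConst ℓ 0)^2 * (Stmt4Aux.Bc ((0:ℝ)+(j:ℝ)) j)^2 := by rw [hsq]
        _ ≤ 2 * (ℓ / Real.sqrt (0+1)) * (((j+0).choose 0 : ℕ) : ℝ) := hgf
        _ = 2 * 1 * (ℓ / Real.sqrt (0+1)) * (((j+0).choose 0 : ℕ) : ℝ) := by ring
    · have hn1 : (1:ℝ) ≤ (n:ℝ) := by
        exact_mod_cast Nat.one_le_iff_ne_zero.mpr hn0
      have hmpos : 0 < m := by rw [hm]; linarith
      rw [hYr, h0, Real.zero_rpow (by positivity : m/2 ≠ 0),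
        Real.zero_rpow (ne_of_gt hmpos)]
      simp
  rcases eq_or_lt_of_le hx2 with hxe | hxlt
  · exact hendpoint (Or.inl hxe)
  · rcases eq_or_lt_of_le hx1 with hxe | hxgt
    · exact hendpoint (Or.inr hxe.symm)
    · -- interior
      have hIoo : x ∈ Ioo (-1:ℝ) 1 := ⟨hxgt, hxlt⟩
      rw [hYr, Stmt4Aux.jacobiP_eq j m x hIoo]
      have hhalf : ((1-x^2) ^ (m/2))^2 = (1-x^2) ^ m := by
        rw [← Real.rpow_natCast ((1-x^2)^(m/2)) 2, ← Real.rpow_mul hx2nn]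
        norm_num
      have hQb := Stmt4Aux.Qp_sq_le (m + (j:ℝ)) j (by linarith) x ⟨hx1, hx2⟩
      calc (cConst ℓ m * (1-x^2)^(m/2) * Stmt4Aux.Qp (m+(j:ℝ)) j x)^2
          = ((cConst ℓ m)^2 * ((1-x^2)^(m/2))^2) * (Stmt4Aux.Qp (m+(j:ℝ)) j x)^2 := by ring
        _ ≤ ((cConst ℓ m)^2 * ((1-x^2)^(m/2))^2) * (Stmt4Aux.Bc (m+(j:ℝ)) j)^2 := by
            apply mul_le_mul_of_nonneg_left hQb
            positivity
        _ = (1-x^2)^m * ((cConst ℓ m)^2 * (Stmt4Aux.Bc (m+(j:ℝ)) j)^2) := by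
            rw [hhalf]; ring
        _ ≤ (1-x^2)^m * (2 * (ℓ / Real.sqrt (m+1)) * (((j+n).choose n : ℕ) : ℝ)) := by
            exact mul_le_mul_of_nonneg_left hgf hrm
        _ = 2 * (1-x^2)^m * (ℓ / Real.sqrt (m+1)) * (((j+n).choose n : ℕ) : ℝ) := by ring
end

section
/- For every ε ∈ (0,1) there exists a constant C > 0 (depending only on ε) such that for all (ℓ,m) ∈ I with 0 < m ≤ εℓ and all x ∈ [−1,1], writing y = (1−x²)^{1/2}, one has |Y_{ℓ,m}(x)| ≤ C b_{ℓ,m}^{−(m+1/2)} (y e)^m. -/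
open Real Set

noncomputable def Ffall (p : ℝ) (i : ℕ) : ℝ := ∏ r ∈ Finset.range i, (p - r)

lemma Ffall_zero (p : ℝ) : Ffall p 0 = 1 := by simp [Ffall]

lemma Ffall_succ (p : ℝ) (i : ℕ) : Ffall p (i+1) = Ffall p i * (p - i) := by
  simp [Ffall, Finset.prod_range_succ]

noncomputable def Sfun (p : ℝ) (k : ℕ) (x : ℝ) : ℝ :=
  ∑ i ∈ Finset.range (k+1), (Nat.choose k i : ℝ) * (-1)^i * Ffall p i * Ffall p (k-i) *
    ((1-x) ^ (p - i) * (1+x) ^ (p - ((k-i : ℕ) : ℝ)))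

lemma Sfun_sum_identity (p x : ℝ) (k : ℕ) :
    Sfun p (k+1) x
    = ∑ i ∈ Finset.range (k+1), (Nat.choose k i : ℝ) * (-1)^i * Ffall p i * Ffall p (k-i) *
        (-((p - i) * (1-x) ^ (p - i - 1)) * (1+x) ^ (p - ((k-i : ℕ) : ℝ)) +
         (1-x) ^ (p - i) * ((p - ((k-i : ℕ) : ℝ)) * (1+x) ^ (p - ((k-i : ℕ) : ℝ) - 1))) := by
  rw [Sfun]
  set u : ℕ → ℝ := fun i => (1-x) ^ (p - (i:ℝ)) * (1+x) ^ (p - ((k+1-i : ℕ) : ℝ)) with hu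
  set g : ℕ → ℝ := fun i => (Nat.choose k i : ℝ) * (-1)^i * Ffall p i * Ffall p (k+1-i) * u i with hg
  have step1 : ∀ i, (Nat.choose (k+1) i : ℝ) * (-1)^i * Ffall p i * Ffall p (k+1-i) *
      ((1-x) ^ (p - i) * (1+x) ^ (p - ((k+1-i : ℕ) : ℝ))) = g i + (if i = 0 then 0 else
        (Nat.choose k (i-1) : ℝ) * (-1)^i * Ffall p i * Ffall p (k+1-i) * u i) := by
    intro i
    cases i with
    | zero => simp [hg, hu]
    | succ i =>
      have : (Nat.choose (k+1) (i+1) : ℝ) = Nat.choose k (i+1) + Nat.choose k i := by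
        rw [Nat.choose_succ_succ']; push_cast; ring
      simp only [hg, hu, this, if_neg (Nat.succ_ne_zero i), Nat.add_sub_cancel]
      ring
  rw [Finset.sum_congr rfl (fun i _ => step1 i), Finset.sum_add_distrib]
  have hgtop : g (k+1) = 0 := by simp [hg, Nat.choose_succ_self]
  have e1 : ∑ i ∈ Finset.range (k+1+1), g i = ∑ i ∈ Finset.range (k+1), g i := by
    rw [Finset.sum_range_succ, hgtop, add_zero]
  have e2 : ∑ i ∈ Finset.range (k+1+1), (if i = 0 then 0 else
        (Nat.choose k (i-1) : ℝ) * (-1)^i * Ffall p i * Ffall p (k+1-i) * u i)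
      = ∑ i ∈ Finset.range (k+1),
        (Nat.choose k i : ℝ) * (-1)^(i+1) * Ffall p (i+1) * Ffall p (k-i) * u (i+1) := by
    rw [Finset.sum_range_succ']
    simp [Nat.succ_sub_succ]
  rw [e1, e2, ← Finset.sum_add_distrib]
  refine Finset.sum_congr rfl fun i hi => ?_
  have hik : i ≤ k := Nat.lt_succ_iff.mp (Finset.mem_range.mp hi)
  have hsub : k + 1 - i = (k - i) + 1 := by omega
  have hsub2 : k + 1 - (i+1) = k - i := by omega
  have hcast : ((k+1-i : ℕ) : ℝ) = ((k-i : ℕ) : ℝ) + 1 := by rw [hsub]; push_cast; ring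
  have hF : Ffall p (k+1-i) = Ffall p (k-i) * (p - ((k-i:ℕ):ℝ)) := by
    rw [hsub, Ffall_succ]
  simp only [hg, hu, hsub2, hF, Ffall_succ, hcast]
  push_cast
  ring

lemma hasDerivAt_Sfun (p : ℝ) (k : ℕ) {x : ℝ} (hx : x ∈ Ioo (-1:ℝ) 1) :
    HasDerivAt (Sfun p k) (Sfun p (k+1) x) x := by
  obtain ⟨hx1, hx2⟩ := hx
  have h1 : (0:ℝ) < 1 - x := by linarith
  have h2 : (0:ℝ) < 1 + x := by linarith
  have hA : ∀ q : ℝ, HasDerivAt (fun y : ℝ => (1-y) ^ q) (-(q * (1-x) ^ (q-1))) x := by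
    intro q
    have := (Real.hasDerivAt_rpow_const (x := 1-x) (p := q) (Or.inl h1.ne')).comp x
      (((hasDerivAt_id x).const_sub 1))
    simpa [Function.comp_def, mul_comm, mul_assoc, mul_left_comm] using this
  have hB : ∀ q : ℝ, HasDerivAt (fun y : ℝ => (1+y) ^ q) (q * (1+x) ^ (q-1)) x := by
    intro q
    have := (Real.hasDerivAt_rpow_const (x := 1+x) (p := q) (Or.inl h2.ne')).comp x
      (((hasDerivAt_id x).const_add 1))
    simpa [Function.comp_def, mul_comm, mul_assoc, mul_left_comm] using this
  have hterm : ∀ i ∈ Finset.range (k+1),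
      HasDerivAt (fun y => (Nat.choose k i : ℝ) * (-1)^i * Ffall p i * Ffall p (k-i) *
        ((1-y) ^ (p - i) * (1+y) ^ (p - ((k-i : ℕ) : ℝ))))
        ((Nat.choose k i : ℝ) * (-1)^i * Ffall p i * Ffall p (k-i) *
          (-((p - i) * (1-x) ^ (p - i - 1)) * (1+x) ^ (p - ((k-i : ℕ) : ℝ)) +
           (1-x) ^ (p - i) * ((p - ((k-i : ℕ) : ℝ)) * (1+x) ^ (p - ((k-i : ℕ) : ℝ) - 1)))) x := by
    intro i _
    exact (((hA (p - i)).mul (hB (p - ((k-i : ℕ) : ℝ))))).const_mul _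
  have hsum := HasDerivAt.fun_sum hterm
  rw [← Sfun_sum_identity] at hsum
  exact hsum

lemma Sfun_zero (p x : ℝ) : Sfun p 0 x = (1-x) ^ p * (1+x) ^ p := by
  simp [Sfun, Ffall_zero]

/-- On (-1,1), the iterated derivative of t ↦ (1-t²)^p equals Sfun p k. -/
lemma iteratedDeriv_eq_Sfun (p : ℝ) (k : ℕ) {x : ℝ} (hx : x ∈ Ioo (-1:ℝ) 1) :
    iteratedDeriv k (fun t : ℝ => (1 - t ^ 2) ^ p) x = Sfun p k x := by
  induction k generalizing x with
  | zero =>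
    obtain ⟨hx1, hx2⟩ := hx
    have h1 : (0:ℝ) < 1 - x := by linarith
    have h2 : (0:ℝ) < 1 + x := by linarith
    rw [iteratedDeriv_zero, Sfun_zero, ← Real.mul_rpow h1.le h2.le]
    ring_nf
  | succ k ih =>
    rw [iteratedDeriv_succ]
    have hev : (iteratedDeriv k (fun t : ℝ => (1 - t ^ 2) ^ p)) =ᶠ[nhds x] Sfun p k := by
      filter_upwards [isOpen_Ioo.mem_nhds hx] with y hy
      exact ih hy
    rw [hev.deriv_eq]
    exact (hasDerivAt_Sfun p k hx).deriv

lemma rpow_split {b : ℝ} (hb : 0 < b) (q : ℝ) : b ^ q = b ^ (q-1) * b := by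
  have := Real.rpow_add_one hb.ne' (q-1)
  rw [sub_add_cancel] at this
  exact this

/-- J0 : (1-x²) S1 + 2 p x S0 = 0 on (-1,1). -/
lemma Sfun_J0 (p : ℝ) {x : ℝ} (hx : x ∈ Ioo (-1:ℝ) 1) :
    (1 - x^2) * Sfun p 1 x + 2*p*x * Sfun p 0 x = 0 := by
  obtain ⟨hx1, hx2⟩ := hx
  have h1 : (0:ℝ) < 1 - x := by linarith
  have h2 : (0:ℝ) < 1 + x := by linarith
  have e1 := rpow_split h1 p
  have e2 := rpow_split h2 p
  simp only [Sfun, Finset.sum_range_succ, Finset.sum_range_zero, Ffall_succ, Ffall_zero]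
  norm_num
  rw [e1, e2]
  simp only [Ffall_zero]
  ring

/-- K n : (1-x²) S(n+2) + 2(p-n-1) x S(n+1) + (n+1)(2p-n) S n = 0 on (-1,1). -/
lemma Sfun_rec (p : ℝ) (n : ℕ) : ∀ {x : ℝ}, x ∈ Ioo (-1:ℝ) 1 →
    (1 - x^2) * Sfun p (n+2) x + 2*(p - n - 1) * x * Sfun p (n+1) x
      + (n+1)*(2*p - n) * Sfun p n x = 0 := by
  induction n with
  | zero =>
    intro x hx
    -- differentiate J0
    have hΦD : HasDerivAt (fun y => (1 - y^2) * Sfun p 1 y + 2*p*y * Sfun p 0 y)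
        ((-2*x) * Sfun p 1 x + (1 - x^2) * Sfun p 2 x
          + 2*p * Sfun p 0 x + 2*p*x * Sfun p 1 x) x := by
      have hq : HasDerivAt (fun y : ℝ => 1 - y^2) (-2*x) x := by
        simpa using ((hasDerivAt_pow 2 x).const_sub 1)
      have hl : HasDerivAt (fun y : ℝ => 2*p*y) (2*p) x := by
        simpa using (hasDerivAt_id x).const_mul (2*p)
      have := (hq.fun_mul (hasDerivAt_Sfun p 1 hx)).fun_add (hl.fun_mul (hasDerivAt_Sfun p 0 hx))
      refine this.congr_deriv ?_ <;> norm_num <;> ring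
    have hder0 : deriv (fun y => (1 - y^2) * Sfun p 1 y + 2*p*y * Sfun p 0 y) x = 0 := by
      have hev : (fun y => (1 - y^2) * Sfun p 1 y + 2*p*y * Sfun p 0 y) =ᶠ[nhds x]
          (fun _ => (0:ℝ)) := by
        filter_upwards [isOpen_Ioo.mem_nhds hx] with y hy
        exact Sfun_J0 p hy
      rw [hev.deriv_eq, deriv_const]
    have hD0 := hΦD.deriv.symm.trans hder0
    push_cast
    linear_combination hD0
  | succ n ih =>
    intro x hx
    have hΦD : HasDerivAt (fun y => (1 - y^2) * Sfun p (n+2) y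
          + 2*(p - n - 1)*y * Sfun p (n+1) y + (n+1)*(2*p - n) * Sfun p n y)
        ((-2*x) * Sfun p (n+2) x + (1 - x^2) * Sfun p (n+3) x
          + 2*(p - n - 1) * Sfun p (n+1) x + 2*(p - n - 1)*x * Sfun p (n+2) x
          + (n+1)*(2*p - n) * Sfun p (n+1) x) x := by
      have hq : HasDerivAt (fun y : ℝ => 1 - y^2) (-2*x) x := by
        simpa using ((hasDerivAt_pow 2 x).const_sub 1)
      have hl : HasDerivAt (fun y : ℝ => 2*(p - n - 1)*y) (2*(p - n - 1)) x := by
        simpa using (hasDerivAt_id x).const_mul (2*(p - n - 1))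
      have h3 : HasDerivAt (fun y => (n+1)*(2*p - n) * Sfun p n y)
          ((n+1)*(2*p - n) * Sfun p (n+1) x) x :=
        (hasDerivAt_Sfun p n hx).const_mul _
      have := ((hq.fun_mul (hasDerivAt_Sfun p (n+2) hx)).fun_add
        (hl.fun_mul (hasDerivAt_Sfun p (n+1) hx))).fun_add h3
      refine this.congr_deriv ?_
      ring
    have hder0 : deriv (fun y => (1 - y^2) * Sfun p (n+2) y
          + 2*(p - n - 1)*y * Sfun p (n+1) y + (n+1)*(2*p - n) * Sfun p n y) x = 0 := by
      have hev : (fun y => (1 - y^2) * Sfun p (n+2) y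
          + 2*(p - n - 1)*y * Sfun p (n+1) y + (n+1)*(2*p - n) * Sfun p n y) =ᶠ[nhds x]
          (fun _ => (0:ℝ)) := by
        filter_upwards [isOpen_Ioo.mem_nhds hx] with y hy
        exact ih hy
      rw [hev.deriv_eq, deriv_const]
    have hD0 := hΦD.deriv.symm.trans hder0
    have hKn := ih hx
    push_cast
    push_cast at hD0 hKn
    simp only [show n+1+1 = n+2 from rfl, show n+1+2 = n+3 from rfl] at *
    linear_combination hD0

/-- The explicit Jacobi polynomial (as a function). -/
noncomputable def Qfun (m : ℝ) (j : ℕ) (x : ℝ) : ℝ :=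
  (1 / (2^j * (Nat.factorial j : ℝ))) * ∑ i ∈ Finset.range (j+1),
    (Nat.choose j i : ℝ) * (-1)^(j-i) * Ffall (m+j) i * Ffall (m+j) (j-i) *
      ((1-x)^(j-i) * (1+x)^i)

lemma contDiff_Qfun (m : ℝ) (j : ℕ) : ContDiff ℝ ((⊤:ℕ∞):WithTop ℕ∞) (Qfun m j) := by
  unfold Qfun
  exact contDiff_const.mul (ContDiff.sum fun i _ => by fun_prop)

lemma jacobiP_eq_Qfun (m : ℝ) (j : ℕ) {x : ℝ} (hx : x ∈ Ioo (-1:ℝ) 1) :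
    jacobiP j m x = Qfun m j x := by
  obtain ⟨hx1, hx2⟩ := hx
  have h1 : (0:ℝ) < 1 - x := by linarith
  have h2 : (0:ℝ) < 1 + x := by linarith
  have hu : (0:ℝ) < 1 - x^2 := by nlinarith
  rw [jacobiP, iteratedDeriv_eq_Sfun (m + (j:ℝ)) j ⟨hx1, hx2⟩, Sfun, Qfun,
    Finset.mul_sum, Finset.mul_sum]
  refine Finset.sum_congr rfl fun i hi => ?_
  have hij : i ≤ j := Nat.lt_succ_iff.mp (Finset.mem_range.mp hi)
  have hfact : (1 - x^2) ^ (-m) = (1-x) ^ (-m) * (1+x) ^ (-m) := by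
    rw [show (1:ℝ) - x^2 = (1-x)*(1+x) by ring, Real.mul_rpow h1.le h2.le]
  have e1 : (1-x) ^ (-m) * (1-x) ^ (m + (j:ℝ) - i) = ((1-x):ℝ) ^ ((j - i : ℕ)) := by
    rw [← Real.rpow_add h1, ← Real.rpow_natCast]
    congr 1
    have : ((j - i : ℕ) : ℝ) = (j : ℝ) - i := by
      push_cast [Nat.cast_sub hij]; ring
    rw [this]; ring
  have e2 : (1+x) ^ (-m) * (1+x) ^ (m + (j:ℝ) - ((j - i : ℕ):ℝ)) = ((1+x):ℝ) ^ i := by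
    rw [← Real.rpow_add h2, ← Real.rpow_natCast]
    congr 1
    have : ((j - i : ℕ) : ℝ) = (j : ℝ) - i := by
      push_cast [Nat.cast_sub hij]; ring
    rw [this]; ring
  have esign : ((-1:ℝ))^j * (-1)^i = (-1)^(j-i) := by
    have : (-1:ℝ)^(j-i) * (-1)^i = (-1)^j := by
      rw [← pow_add, Nat.sub_add_cancel hij]
    have h2 : ((-1:ℝ)^i)*((-1:ℝ)^i) = 1 := by
      rw [← pow_add]; exact Even.neg_one_pow ⟨i, rfl⟩
    calc ((-1:ℝ))^j * (-1)^i = (-1)^(j-i) * ((-1)^i * (-1)^i) := by rw [← this]; ring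
    _ = (-1)^(j-i) := by rw [h2, mul_one]
  calc ((-1:ℝ))^j / (2^j * j.factorial) * (1 - x^2) ^ (-m) *
        ((j.choose i : ℝ) * (-1)^i * Ffall (m+j) i * Ffall (m+j) (j-i) *
          ((1-x) ^ (m + (j:ℝ) - i) * (1+x) ^ (m + (j:ℝ) - ((j-i : ℕ):ℝ))))
      = (1 / (2^j * j.factorial)) * ((j.choose i : ℝ) * ((-1)^j * (-1)^i) * Ffall (m+j) i * Ffall (m+j) (j-i) *
          (((1-x) ^ (-m) * (1-x) ^ (m + (j:ℝ) - i)) * ((1+x) ^ (-m) * (1+x) ^ (m + (j:ℝ) - ((j-i : ℕ):ℝ))))) := by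
        rw [hfact]; ring
    _ = (1 / (2^j * j.factorial)) * ((j.choose i : ℝ) * (-1)^(j-i) * Ffall (m+j) i * Ffall (m+j) (j-i) *
          ((1-x)^((j-i : ℕ)) * (1+x)^i)) := by rw [e1, e2, esign]

lemma Qfun_ODE (m : ℝ) (j : ℕ) {x : ℝ} (hx : x ∈ Ioo (-1:ℝ) 1) :
    (1 - x^2) * deriv (deriv (Qfun m j)) x - 2*(m+1)*x * deriv (Qfun m j) x
      + (j:ℝ)*((j:ℝ)+2*m+1) * Qfun m j x = 0 := by
  have hu : (0:ℝ) < 1 - x^2 := by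
    obtain ⟨a, b⟩ := hx; nlinarith
  set κ : ℝ := ((-1:ℝ))^j * 2^j * (Nat.factorial j : ℝ) with hκdef
  have hfacne : ((2:ℝ)^j * (Nat.factorial j : ℝ)) ≠ 0 := by positivity
  have hκ : κ ≠ 0 := by
    simp only [hκdef]
    refine mul_ne_zero (mul_ne_zero ?_ (by positivity)) (by positivity)
    exact pow_ne_zero _ (by norm_num)
  have hone : ((-1:ℝ))^j * (-1)^j = 1 := by
    rw [← pow_add]; exact Even.neg_one_pow ⟨j, rfl⟩
  have hQ := contDiff_Qfun m j
  have hQd : Differentiable ℝ (Qfun m j) := hQ.differentiable (by simp)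
  have hQ' := (contDiff_infty_iff_deriv.mp hQ).2
  have hQ'd : Differentiable ℝ (deriv (Qfun m j)) := hQ'.differentiable (by simp)
  -- derivative of y ↦ (1-y²)^q at a point of Ioo
  have hrpow : ∀ q : ℝ, ∀ {y : ℝ}, y ∈ Ioo (-1:ℝ) 1 →
      HasDerivAt (fun y : ℝ => (1 - y^2) ^ q) (q * (1-y^2)^(q-1) * (-2*y)) y := by
    intro q y hy
    have huy : (0:ℝ) < 1 - y^2 := by obtain ⟨a, b⟩ := hy; nlinarith
    have hbase : HasDerivAt (fun y : ℝ => 1 - y^2) (-2*y) y := by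
      simpa using ((hasDerivAt_pow 2 y).const_sub 1)
    have := (Real.hasDerivAt_rpow_const (x := 1 - y^2) (p := q) (Or.inl huy.ne')).comp y hbase
    simpa [Function.comp_def, mul_comm, mul_assoc, mul_left_comm] using this
  -- S j = G on Ioo
  have hSG : ∀ y ∈ Ioo (-1:ℝ) 1, Sfun (m + (j:ℝ)) j y = κ * ((1 - y^2)^m * Qfun m j y) := by
    intro y hy
    have huy : (0:ℝ) < 1 - y^2 := by obtain ⟨a, b⟩ := hy; nlinarith
    have hjac := jacobiP_eq_Qfun m j hy
    rw [jacobiP, iteratedDeriv_eq_Sfun (m + (j:ℝ)) j hy] at hjac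
    rw [← hjac]
    have h0 : (1-y^2)^m * (1-y^2)^(-m) = 1 := by
      rw [← Real.rpow_add huy]; simp
    calc Sfun (m + (j:ℝ)) j y
        = (κ * ((-1:ℝ))^j / (2^j * (Nat.factorial j : ℝ)))
            * ((1-y^2)^m * (1-y^2)^(-m)) * Sfun (m + (j:ℝ)) j y := by
          have : κ * ((-1:ℝ))^j / (2^j * (Nat.factorial j : ℝ)) = 1 := by
            rw [hκdef, show ((-1:ℝ))^j * 2^j * (j.factorial:ℝ) * (-1)^j = ((-1)^j*(-1)^j) * (2^j*j.factorial) by ring, hone, one_mul, div_self hfacne]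
          rw [this, h0, one_mul, one_mul]
      _ = κ * ((1-y^2)^m * (((-1:ℝ))^j / (2^j * (Nat.factorial j : ℝ)) * (1-y^2)^(-m)
            * Sfun (m + (j:ℝ)) j y)) := by ring
  -- S (j+1) = R on Ioo
  have hG : ∀ y ∈ Ioo (-1:ℝ) 1, HasDerivAt (fun z => κ * ((1 - z^2)^m * Qfun m j z))
      (κ * (m * (1-y^2)^(m-1) * (-2*y) * Qfun m j y + (1-y^2)^m * deriv (Qfun m j) y)) y := by
    intro y hy
    exact ((hrpow m hy).mul (hQd y).hasDerivAt).const_mul κ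
  have hS1 : ∀ y ∈ Ioo (-1:ℝ) 1, Sfun (m + (j:ℝ)) (j+1) y
      = κ * (m * (1-y^2)^(m-1) * (-2*y) * Qfun m j y + (1-y^2)^m * deriv (Qfun m j) y) := by
    intro y hy
    have h1 := (hasDerivAt_Sfun (m + (j:ℝ)) j hy).deriv
    have hev : Sfun (m + (j:ℝ)) j =ᶠ[nhds y] (fun z => κ * ((1 - z^2)^m * Qfun m j z)) := by
      filter_upwards [isOpen_Ioo.mem_nhds hy] with z hz
      exact hSG z hz
    rw [← h1, hev.deriv_eq, (hG y hy).deriv]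
  -- S (j+2) = R2 at x
  have hR2 : HasDerivAt (fun y => κ * (m * (1-y^2)^(m-1) * (-2*y) * Qfun m j y
        + (1-y^2)^m * deriv (Qfun m j) y))
      (κ * (m * ((m-1) * (1-x^2)^(m-2) * (-2*x)) * (-2*x) * Qfun m j x
        + m * (1-x^2)^(m-1) * (-2) * Qfun m j x
        + m * (1-x^2)^(m-1) * (-2*x) * deriv (Qfun m j) x
        + m * (1-x^2)^(m-1) * (-2*x) * deriv (Qfun m j) x
        + (1-x^2)^m * deriv (deriv (Qfun m j)) x)) x := by
    have hB : HasDerivAt (fun y : ℝ => -2*y) (-2) x := by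
      simpa using (hasDerivAt_id x).const_mul (-2:ℝ)
    have hT1 := (((hrpow (m-1) hx).const_mul m).fun_mul hB).fun_mul (hQd x).hasDerivAt
    have hT2 := (hrpow m hx).fun_mul (hQ'd x).hasDerivAt
    have := (hT1.fun_add hT2).const_mul κ
    refine this.congr_deriv ?_
    ring
  have hS2 : Sfun (m + (j:ℝ)) (j+2) x
      = κ * (m * ((m-1) * (1-x^2)^(m-2) * (-2*x)) * (-2*x) * Qfun m j x
        + m * (1-x^2)^(m-1) * (-2) * Qfun m j x
        + m * (1-x^2)^(m-1) * (-2*x) * deriv (Qfun m j) x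
        + m * (1-x^2)^(m-1) * (-2*x) * deriv (Qfun m j) x
        + (1-x^2)^m * deriv (deriv (Qfun m j)) x) := by
    have h1 := (hasDerivAt_Sfun (m + (j:ℝ)) (j+1) hx).deriv
    have hev : Sfun (m + (j:ℝ)) (j+1) =ᶠ[nhds x] (fun y => κ * (m * (1-y^2)^(m-1) * (-2*y) * Qfun m j y
        + (1-y^2)^m * deriv (Qfun m j) y)) := by
      filter_upwards [isOpen_Ioo.mem_nhds hx] with z hz
      exact hS1 z hz
    rw [← h1, hev.deriv_eq, hR2.deriv]
  have hrec := Sfun_rec (m + (j:ℝ)) j hx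
  rw [hS2, hS1 x hx, hSG x hx] at hrec
  -- expand the rpow's in terms of w := (1-x²)^(m-2)
  have hm1 : (1-x^2)^(m-1) = (1-x^2)^(m-2) * (1-x^2) := by
    have := rpow_split hu (m-1)
    rwa [show m-1-1 = m-2 by ring] at this
  have hm0 : (1-x^2)^m = (1-x^2)^(m-2) * (1-x^2) * (1-x^2) := by
    rw [rpow_split hu m, hm1]
  rw [hm0, hm1] at hrec
  set w : ℝ := (1-x^2)^(m-2) with hwdef
  have hw : w ≠ 0 := by
    rw [hwdef]; exact (Real.rpow_pos_of_pos hu _).ne'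
  have key : κ * w * ((1-x^2) * (1-x^2)) *
      ((1 - x^2) * deriv (deriv (Qfun m j)) x - 2*(m+1)*x * deriv (Qfun m j) x
        + (j:ℝ)*((j:ℝ)+2*m+1) * Qfun m j x) = 0 := by
    linear_combination hrec
  rcases mul_eq_zero.mp key with h | h
  · exact absurd h (by
      exact mul_ne_zero (mul_ne_zero hκ hw) (mul_ne_zero hu.ne' hu.ne'))
  · exact h

lemma Qfun_one (m : ℝ) (j : ℕ) : Qfun m j 1 = Ffall (m+j) j / (Nat.factorial j : ℝ) := by
  rw [Qfun]
  rw [Finset.sum_eq_single j]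
  · simp [Ffall_zero]
    have h2 : ((2:ℝ))^j ≠ 0 := by positivity
    have hf : ((Nat.factorial j : ℝ)) ≠ 0 := by positivity
    field_simp
    ring
  · intro i hi hij
    have : j - i ≠ 0 := by
      have := Nat.lt_succ_iff.mp (Finset.mem_range.mp hi); omega
    simp [zero_pow this]
  · intro h
    exact absurd (Finset.self_mem_range_succ j) h

lemma Qfun_neg_one (m : ℝ) (j : ℕ) :
    Qfun m j (-1) = (-1)^j * Ffall (m+j) j / (Nat.factorial j : ℝ) := by
  rw [Qfun]
  rw [Finset.sum_eq_single 0]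
  · simp [Ffall_zero]
    have h2 : ((2:ℝ))^j ≠ 0 := by positivity
    have hf : ((Nat.factorial j : ℝ)) ≠ 0 := by positivity
    field_simp
    ring
  · intro i hi hij
    simp [zero_pow hij]
  · intro h
    exact absurd (Finset.mem_range.mpr (Nat.succ_pos j)) h

lemma Ffall_pos {m : ℝ} (hm : 0 < m) (j : ℕ) : 0 < Ffall (m + (j:ℝ)) j := by
  apply Finset.prod_pos
  intro r hr
  have : (r:ℝ) < (j:ℝ) := by exact_mod_cast Finset.mem_range.mp hr
  linarith

lemma abs_Qfun_le {m : ℝ} (hm : 0 < m) (j : ℕ) {x : ℝ} (hx : x ∈ Icc (-1:ℝ) 1) :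
    |Qfun m j x| ≤ Ffall (m + (j:ℝ)) j / (Nat.factorial j : ℝ) := by
  set B : ℝ := Ffall (m + (j:ℝ)) j / (Nat.factorial j : ℝ) with hB
  have hBpos : 0 < B := by
    apply div_pos (Ffall_pos hm j)
    exact_mod_cast Nat.factorial_pos j
  rcases Nat.eq_zero_or_pos j with hj | hj
  · subst hj
    have : Qfun m 0 x = 1 := by simp [Qfun, Ffall_zero]
    rw [this, hB]
    simp [Ffall_zero, Nat.factorial]
  -- j ≥ 1
  set lam : ℝ := (j:ℝ)*((j:ℝ)+2*m+1) with hlam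
  have hlampos : 0 < lam := by
    have : (0:ℝ) < (j:ℝ) := by exact_mod_cast hj
    rw [hlam]; nlinarith
  have hQ := contDiff_Qfun m j
  have hQd : Differentiable ℝ (Qfun m j) := hQ.differentiable (by simp)
  have hQ' := (contDiff_infty_iff_deriv.mp hQ).2
  have hQ'd : Differentiable ℝ (deriv (Qfun m j)) := hQ'.differentiable (by simp)
  set f : ℝ → ℝ := fun y => (Qfun m j y)^2 + (1-y^2) * (deriv (Qfun m j) y)^2 / lam with hf
  have hfc : Continuous f := by
    apply Continuous.add
    · exact (hQd.continuous.pow 2)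
    · exact (((continuous_const.sub (continuous_pow 2)).mul (hQ'd.continuous.pow 2)).div_const lam)
  have hfd : ∀ y : ℝ, HasDerivAt f
      (2 * Qfun m j y * deriv (Qfun m j) y +
        ((-2*y) * (deriv (Qfun m j) y)^2
          + (1-y^2) * (2 * deriv (Qfun m j) y * deriv (deriv (Qfun m j)) y)) / lam) y := by
    intro y
    have h1 : HasDerivAt (fun z => (Qfun m j z)^2) (2 * Qfun m j y * deriv (Qfun m j) y) y := by
      simpa using ((hQd y).hasDerivAt.fun_pow 2)
    have h2 : HasDerivAt (fun z : ℝ => 1 - z^2) (-2*y) y := by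
      simpa using ((hasDerivAt_pow 2 y).const_sub 1)
    have h3 : HasDerivAt (fun z => (deriv (Qfun m j) z)^2)
        (2 * deriv (Qfun m j) y * deriv (deriv (Qfun m j)) y) y := by
      simpa using ((hQ'd y).hasDerivAt.fun_pow 2)
    exact h1.add ((h2.mul h3).div_const lam)
  have hderiv_f : ∀ y ∈ Ioo (-1:ℝ) 1, deriv f y = ((4*m+2)/lam) * y * (deriv (Qfun m j) y)^2 := by
    intro y hy
    rw [(hfd y).deriv]
    have hode := Qfun_ODE m j hy
    field_simp
    linear_combination (2 * deriv (Qfun m j) y) * hode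
  -- monotone on [0,1]
  have hmono : MonotoneOn f (Icc (0:ℝ) 1) := by
    apply monotoneOn_of_deriv_nonneg (convex_Icc 0 1) hfc.continuousOn
    · intro y hy
      exact ((hfd y).differentiableAt).differentiableWithinAt
    · intro y hy
      rw [interior_Icc] at hy
      have hy' : y ∈ Ioo (-1:ℝ) 1 := ⟨by linarith [hy.1], hy.2⟩
      rw [hderiv_f y hy']
      have : 0 ≤ (4*m+2)/lam := by positivity
      have hy0 : 0 ≤ y := le_of_lt hy.1
      positivity
  have hanti : AntitoneOn f (Icc (-1:ℝ) 0) := by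
    apply antitoneOn_of_deriv_nonpos (convex_Icc (-1) 0) hfc.continuousOn
    · intro y hy
      exact ((hfd y).differentiableAt).differentiableWithinAt
    · intro y hy
      rw [interior_Icc] at hy
      have hy' : y ∈ Ioo (-1:ℝ) 1 := ⟨hy.1, by linarith [hy.2]⟩
      rw [hderiv_f y hy']
      have h1 : 0 ≤ (4*m+2)/lam := by positivity
      have h2 : y ≤ 0 := le_of_lt hy.2
      have h3 : 0 ≤ (deriv (Qfun m j) y)^2 := sq_nonneg _
      have h4 : (4*m+2)/lam * (deriv (Qfun m j) y)^2 * y ≤ 0 :=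
        mul_nonpos_of_nonneg_of_nonpos (mul_nonneg h1 h3) h2
      nlinarith [h4]
  have hf1 : f 1 = B^2 := by
    rw [hf]; simp [Qfun_one m j, hB]
  have hfm1 : f (-1) = B^2 := by
    rw [hf]
    simp only [Qfun_neg_one m j]
    have : ((-1:ℝ)^j * Ffall (m + (j:ℝ)) j / (Nat.factorial j : ℝ))^2 = B^2 := by
      rw [hB]
      have : ((-1:ℝ)^j)^2 = 1 := by
        rw [← pow_mul, mul_comm, pow_mul]
        norm_num
      field_simp
      linear_combination (Ffall (m + (j:ℝ)) j)^2 * this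
    rw [← this]; ring_nf
  have hfx : f x ≤ B^2 := by
    rcases le_or_gt 0 x with h0 | h0
    · have := hmono ⟨h0, hx.2⟩ ⟨zero_le_one, le_refl 1⟩ hx.2
      rwa [hf1] at this
    · have := hanti ⟨le_refl (-1), by norm_num⟩ ⟨hx.1, h0.le⟩ hx.1
      rwa [hfm1] at this
  have hQsq : (Qfun m j x)^2 ≤ B^2 := by
    have hx2 : (0:ℝ) ≤ 1 - x^2 := by nlinarith [hx.1, hx.2]
    have h1 : 0 ≤ (1-x^2) * (deriv (Qfun m j) x)^2 / lam :=
      div_nonneg (mul_nonneg hx2 (sq_nonneg _)) hlampos.le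
    calc (Qfun m j x)^2 ≤ f x := by rw [hf]; linarith [h1]
    _ ≤ B^2 := hfx
  have := abs_le_of_sq_le_sq' hQsq hBpos.le
  exact abs_le.mpr this

lemma Ffall_succ' (p : ℝ) (k : ℕ) : Ffall (p+1) (k+1) = Ffall p k * (p+1) := by
  rw [Ffall, Finset.prod_range_succ']
  simp only [Nat.cast_zero, sub_zero]
  congr 1
  rw [Ffall]
  refine Finset.prod_congr rfl fun r _ => ?_
  push_cast; ring

lemma Gamma_Ffall (b : ℝ) (hb : 0 < b) (k : ℕ) :
    Real.Gamma (b + k) = Real.Gamma b * Ffall (b + k - 1) k := by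
  induction k with
  | zero => simp [Ffall_zero]
  | succ k ih =>
    have hbk : b + (k:ℝ) ≠ 0 := by positivity
    have e1 : b + ((k+1 : ℕ):ℝ) = (b + k) + 1 := by push_cast; ring
    rw [e1, Real.Gamma_add_one hbk, ih]
    have e3 : b + (k:ℝ) + 1 - 1 = (b + (k:ℝ) - 1) + 1 := by ring
    rw [e3, Ffall_succ']
    ring

lemma gamma_lower : ∀ n : ℕ, 1 ≤ n →
    (((n:ℝ)/2) ^ ((n:ℝ)/2)) ≤ Real.exp ((n:ℝ)/2) * Real.Gamma ((n:ℝ)/2 + 1) := by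
  intro n
  induction n using Nat.strong_induction_on with
  | _ n ih =>
    intro hn
    have key1 : ((1:ℝ)/2) ^ ((1:ℝ)/2) ≤ Real.exp ((1:ℝ)/2) * Real.Gamma ((1:ℝ)/2 + 1) := by
      have hγ : Real.Gamma ((1:ℝ)/2 + 1) = Real.sqrt π / 2 := by
        rw [Real.Gamma_add_one (by norm_num), Real.Gamma_one_half_eq]
        ring
      have h1 : ((1:ℝ)/2) ^ ((1:ℝ)/2) ≤ 1 := by
        apply Real.rpow_le_one <;> norm_num
      have h2 : (3:ℝ)/2 ≤ Real.sqrt π := by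
        rw [Real.le_sqrt (by norm_num) (by positivity)]
        nlinarith [Real.pi_gt_three]
      have h3 : (3:ℝ)/2 ≤ Real.exp ((1:ℝ)/2) := by
        have := Real.add_one_le_exp ((1:ℝ)/2)
        linarith
      have h4 : (1:ℝ) ≤ Real.exp ((1:ℝ)/2) * (Real.sqrt π / 2) := by nlinarith
      rw [hγ]
      linarith
    have key2 : ((2:ℝ)/2) ^ ((2:ℝ)/2) ≤ Real.exp ((2:ℝ)/2) * Real.Gamma ((2:ℝ)/2 + 1) := by
      have h := Real.add_one_le_exp (1:ℝ)
      norm_num [Real.Gamma_two]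
      try linarith
    rcases n with _ | _ | _ | k
    · omega
    · norm_num at key1 ⊢; exact key1
    · norm_num at key2 ⊢
    · -- n = k+3
      have hIH := ih (k+1) (by omega) (by omega)
      have hcast : ((k+1+1+1:ℕ):ℝ) = (k:ℝ) + 3 := by push_cast; ring
      rw [hcast]
      set m : ℝ := ((k:ℝ)+3)/2 with hmdef
      have hm1 : ((k+1:ℕ):ℝ)/2 = m - 1 := by rw [hmdef]; push_cast; ring
      rw [hm1] at hIH
      have hk0 : (0:ℝ) ≤ (k:ℝ) := Nat.cast_nonneg k
      have hm32 : (3:ℝ)/2 ≤ m := by rw [hmdef]; linarith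
      have hmpos : (0:ℝ) < m := by linarith
      have hm1pos : (0:ℝ) < m - 1 := by linarith
      have hstep : m ^ (m-1) ≤ Real.exp 1 * (m-1) ^ (m-1) := by
        have h1 : m / (m-1) ≤ Real.exp (1/(m-1)) := by
          have := Real.add_one_le_exp (1/(m-1))
          have h2 : m / (m-1) = 1/(m-1) + 1 := by field_simp; ring
          rw [h2]; exact this
        have h3 : (m/(m-1)) ^ (m-1) ≤ (Real.exp (1/(m-1))) ^ (m-1) :=
          Real.rpow_le_rpow (by positivity) h1 hm1pos.le
        have h4 : (Real.exp (1/(m-1))) ^ (m-1) = Real.exp 1 := by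
          rw [← Real.exp_mul]
          congr 1
          field_simp
        have h5 : m ^ (m-1) = (m/(m-1)) ^ (m-1) * (m-1) ^ (m-1) := by
          rw [← Real.mul_rpow (by positivity) hm1pos.le]
          congr 1
          field_simp
        rw [h5]
        apply mul_le_mul_of_nonneg_right _ (Real.rpow_nonneg hm1pos.le _)
        rw [← h4]; exact h3
      have hmm : m ^ m = m ^ (m-1) * m := by
        rw [← Real.rpow_add_one hmpos.ne' (m-1), sub_add_cancel]
      have hgamma : Real.Gamma (m + 1) = m * Real.Gamma m := Real.Gamma_add_one hmpos.ne'
      have hgamma2 : (m-1) + 1 = m := by ring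
      rw [hgamma2] at hIH
      have hexp : Real.exp 1 * Real.exp (m-1) = Real.exp m := by
        rw [← Real.exp_add]; congr 1; ring
      have hGpos : 0 < Real.Gamma m := Real.Gamma_pos_of_pos hmpos
      calc m ^ m = m ^ (m-1) * m := hmm
        _ ≤ (Real.exp 1 * (m-1) ^ (m-1)) * m :=
            mul_le_mul_of_nonneg_right hstep hmpos.le
        _ ≤ (Real.exp 1 * (Real.exp (m-1) * Real.Gamma m)) * m := by
            have := mul_le_mul_of_nonneg_left hIH (Real.exp_pos 1).le
            exact mul_le_mul_of_nonneg_right this hmpos.le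
        _ = Real.exp m * Real.Gamma (m + 1) := by
            rw [hgamma, ← hexp]; ring

set_option maxHeartbeats 1000000 in
lemma key_ineq (ε : ℝ) (hε : ε ∈ Ioo (0:ℝ) 1) (n j : ℕ) (hn1 : 1 ≤ n) (m ℓ : ℝ)
    (hmn : m = (n:ℝ)/2) (hl : ℓ = m + (j:ℝ) + 1/2) (hme : m ≤ ε * ℓ) :
    cConst ℓ m * (Ffall (m + (j:ℝ)) j / (Nat.factorial j : ℝ))
      ≤ (1 + (Real.log (2/(1+ε)))⁻¹) * (m/ℓ) ^ (-(m+1/2)) * Real.exp 1 ^ m := by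
  obtain ⟨hε0, hε1⟩ := hε
  have hmpos : 0 < m := by
    rw [hmn]; have : (1:ℝ) ≤ (n:ℝ) := by exact_mod_cast hn1
    linarith
  have hjpos : (0:ℝ) ≤ (j:ℝ) := Nat.cast_nonneg j
  have hlpos : 0 < ℓ := by rw [hl]; linarith
  have hfacpos : (0:ℝ) < (Nat.factorial j : ℝ) := by exact_mod_cast Nat.factorial_pos j
  have hGm1 : 0 < Real.Gamma (m+1) := Real.Gamma_pos_of_pos (by linarith)
  have h2m : (0:ℝ) < (2:ℝ)^m := Real.rpow_pos_of_pos (by norm_num) m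
  have hFmj : 0 < Ffall (m + (j:ℝ)) j := Ffall_pos hmpos j
  have h2mn : 2*m = (n:ℝ) := by rw [hmn]; ring
  -- rewrite the Gamma's in cConst
  have e1 : ℓ - m + 1/2 = (j:ℝ) + 1 := by rw [hl]; ring
  have e2 : ℓ + m + 1/2 = ((j:ℝ) + 1) + (n:ℝ) := by rw [hl]; linarith [h2mn]
  have e3 : ℓ + 1/2 = (m + 1) + (j:ℝ) := by rw [hl]; ring
  have hG1 : Real.Gamma (ℓ - m + 1/2) = (Nat.factorial j : ℝ) := by
    rw [e1, Real.Gamma_nat_eq_factorial]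
  have hG2 : Real.Gamma (ℓ + m + 1/2) = (Nat.factorial j : ℝ) * Ffall ((j:ℝ) + (n:ℝ)) n := by
    rw [e2, Gamma_Ffall ((j:ℝ)+1) (by positivity) n]
    rw [show (j:ℝ) + 1 + (n:ℝ) - 1 = (j:ℝ) + (n:ℝ) by ring, Real.Gamma_nat_eq_factorial]
  have hG3 : Real.Gamma (ℓ + 1/2) = Real.Gamma (m+1) * Ffall (m + (j:ℝ)) j := by
    rw [e3, Gamma_Ffall (m+1) (by linarith) j]
    rw [show m + 1 + (j:ℝ) - 1 = m + (j:ℝ) by ring]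
  have hFjn_nonneg : (0:ℝ) ≤ (j:ℝ) + (n:ℝ) := by positivity
  -- simplify LHS
  have hsqrt : Real.sqrt (ℓ * Real.Gamma (ℓ - m + 1/2) * Real.Gamma (ℓ + m + 1/2))
      = (Nat.factorial j : ℝ) * Real.sqrt (ℓ * Ffall ((j:ℝ) + (n:ℝ)) n) := by
    rw [hG1, hG2]
    rw [show ℓ * (Nat.factorial j : ℝ) * ((Nat.factorial j : ℝ) * Ffall ((j:ℝ) + (n:ℝ)) n)
        = ((Nat.factorial j : ℝ))^2 * (ℓ * Ffall ((j:ℝ) + (n:ℝ)) n) by ring]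
    rw [Real.sqrt_mul (sq_nonneg _), Real.sqrt_sq hfacpos.le]
  have hLHS : cConst ℓ m * (Ffall (m + (j:ℝ)) j / (Nat.factorial j : ℝ))
      = Real.sqrt (ℓ * Ffall ((j:ℝ) + (n:ℝ)) n) / ((2:ℝ)^m * Real.Gamma (m+1)) := by
    rw [cConst, hsqrt, hG3]
    field_simp
  rw [hLHS]
  -- bound the product Ffall (j+n) n
  have hjn_le : (j:ℝ) + (n:ℝ) ≤ (1+ε)*ℓ := by
    have : (j:ℝ) = ℓ - m - 1/2 := by rw [hl]; ring
    rw [this]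
    have : ℓ - m - 1/2 + (n:ℝ) = ℓ + m - 1/2 := by rw [← h2mn]; ring
    rw [this]
    nlinarith
  have hFle : Ffall ((j:ℝ) + (n:ℝ)) n ≤ ((1+ε)*ℓ)^n := by
    calc Ffall ((j:ℝ) + (n:ℝ)) n ≤ ((j:ℝ) + (n:ℝ))^n := by
          rw [Ffall]
          calc ∏ r ∈ Finset.range n, ((j:ℝ) + (n:ℝ) - r)
              ≤ ∏ r ∈ Finset.range n, ((j:ℝ) + (n:ℝ)) := by
                apply Finset.prod_le_prod
                · intro r hr
                  have : (r:ℝ) < (n:ℝ) := by exact_mod_cast Finset.mem_range.mp hr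
                  linarith
                · intro r hr
                  have : (0:ℝ) ≤ (r:ℝ) := Nat.cast_nonneg r
                  linarith
            _ = ((j:ℝ) + (n:ℝ))^n := by rw [Finset.prod_const, Finset.card_range]
      _ ≤ ((1+ε)*ℓ)^n := by
          apply pow_le_pow_left₀ hFjn_nonneg hjn_le
  have hsqrt_le : Real.sqrt (ℓ * Ffall ((j:ℝ) + (n:ℝ)) n)
      ≤ Real.sqrt ℓ * ((1+ε)^m * ℓ^m) := by
    have h1 : Real.sqrt (ℓ * Ffall ((j:ℝ) + (n:ℝ)) n) ≤ Real.sqrt (ℓ * ((1+ε)*ℓ)^n) :=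
      Real.sqrt_le_sqrt (by nlinarith [hFle, hlpos])
    have h2 : Real.sqrt (ℓ * ((1+ε)*ℓ)^n) = Real.sqrt ℓ * ((1+ε)^m * ℓ^m) := by
      rw [Real.sqrt_mul hlpos.le]
      congr 1
      have hb : (0:ℝ) ≤ (1+ε)*ℓ := by positivity
      rw [Real.sqrt_eq_rpow, ← Real.rpow_natCast ((1+ε)*ℓ) n, ← Real.rpow_mul hb]
      rw [show (n:ℝ) * (1/2) = m by rw [hmn]; ring]
      rw [Real.mul_rpow (by linarith) hlpos.le]
    rw [← h2]; exact h1
  -- final comparison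
  have hRHS : (1 + (Real.log (2/(1+ε)))⁻¹) * (m/ℓ) ^ (-(m+1/2)) * Real.exp 1 ^ m
      = (1 + (Real.log (2/(1+ε)))⁻¹) * (Real.sqrt ℓ * ℓ^m) / (m^m * Real.sqrt m) * Real.exp m := by
    rw [Real.exp_one_rpow]
    congr 1
    rw [Real.rpow_neg (by positivity), ← Real.inv_rpow (by positivity),
      show (m/ℓ)⁻¹ = ℓ/m by field_simp, Real.div_rpow hlpos.le hmpos.le]
    rw [show m + 1/2 = m + 1/2 from rfl]
    rw [Real.rpow_add hlpos, Real.rpow_add hmpos]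
    rw [show (ℓ:ℝ)^((1:ℝ)/2) = Real.sqrt ℓ by rw [Real.sqrt_eq_rpow],
        show (m:ℝ)^((1:ℝ)/2) = Real.sqrt m by rw [Real.sqrt_eq_rpow]]
    ring
  rw [hRHS]
  set a := Real.log (2/(1+ε)) with hadef
  have ha : 0 < a := by
    apply Real.log_pos
    rw [lt_div_iff₀ (by linarith)]
    linarith
  set q : ℝ := (1+ε)/2 with hqdef
  have hq0 : 0 < q := by rw [hqdef]; linarith
  have hlogq : Real.log q = -a := by
    rw [show q = (2/(1+ε))⁻¹ by rw [hqdef, inv_div], Real.log_inv]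
  have hqm : q ^ m = Real.exp (-(a*m)) := by
    rw [Real.rpow_def_of_pos hq0, hlogq]
    congr 1
    ring
  have hmqm : m * q ^ m ≤ 1/a := by
    rw [hqm, Real.exp_neg]
    have h1 := Real.add_one_le_exp (a*m)
    have h2 : 0 < Real.exp (a*m) := Real.exp_pos _
    rw [inv_eq_one_div, mul_one_div, div_le_div_iff₀ h2 ha]
    linarith
  have hqm1 : q ^ m ≤ 1 := Real.rpow_le_one hq0.le (by rw [hqdef]; linarith) hmpos.le
  have hsqm : Real.sqrt m ≤ m + 1 := by
    have h1 : Real.sqrt m ≤ Real.sqrt ((m+1)^2) := Real.sqrt_le_sqrt (by nlinarith)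
    rwa [Real.sqrt_sq (by linarith)] at h1
  have hqC : Real.sqrt m * q ^ m ≤ 1 + a⁻¹ := by
    calc Real.sqrt m * q ^ m ≤ (m+1) * q ^ m :=
          mul_le_mul_of_nonneg_right hsqm (Real.rpow_nonneg hq0.le m)
      _ = m * q ^ m + q ^ m := by ring
      _ ≤ 1/a + 1 := add_le_add hmqm hqm1
      _ = 1 + a⁻¹ := by rw [one_div]; ring
  have hsplit : (1+ε) ^ m = (2:ℝ)^m * q ^ m := by
    rw [← Real.mul_rpow (by norm_num) hq0.le]
    congr 1
    rw [hqdef]; ring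
  have hgl : m ^ m ≤ Real.exp m * Real.Gamma (m+1) := by
    have := gamma_lower n hn1
    rwa [← hmn] at this
  have hfin : (1+ε) ^ m * (m ^ m * Real.sqrt m)
      ≤ (1 + a⁻¹) * Real.exp m * ((2:ℝ)^m * Real.Gamma (m+1)) := by
    rw [hsplit]
    have step : (Real.sqrt m * q ^ m) * (m ^ m)
        ≤ (1 + a⁻¹) * (Real.exp m * Real.Gamma (m+1)) := by
      apply mul_le_mul hqC hgl (Real.rpow_nonneg hmpos.le m) (by positivity)
    calc (2:ℝ)^m * q ^ m * (m ^ m * Real.sqrt m)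
        = (2:ℝ)^m * ((Real.sqrt m * q ^ m) * m ^ m) := by ring
      _ ≤ (2:ℝ)^m * ((1 + a⁻¹) * (Real.exp m * Real.Gamma (m+1))) :=
          mul_le_mul_of_nonneg_left step h2m.le
      _ = (1 + a⁻¹) * Real.exp m * ((2:ℝ)^m * Real.Gamma (m+1)) := by ring
  have hA : (0:ℝ) < Real.sqrt ℓ * ℓ ^ m :=
    mul_pos (Real.sqrt_pos.mpr hlpos) (Real.rpow_pos_of_pos hlpos m)
  have hB : (0:ℝ) < m ^ m * Real.sqrt m :=
    mul_pos (Real.rpow_pos_of_pos hmpos m) (Real.sqrt_pos.mpr hmpos)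
  have hD : (0:ℝ) < (2:ℝ)^m * Real.Gamma (m+1) := mul_pos h2m hGm1
  calc Real.sqrt (ℓ * Ffall ((j:ℝ) + (n:ℝ)) n) / ((2:ℝ)^m * Real.Gamma (m+1))
      ≤ (Real.sqrt ℓ * ((1+ε)^m * ℓ^m)) / ((2:ℝ)^m * Real.Gamma (m+1)) := by
        exact (div_le_div_iff_of_pos_right hD).mpr hsqrt_le
    _ ≤ (1 + a⁻¹) * (Real.sqrt ℓ * ℓ^m) / (m^m * Real.sqrt m) * Real.exp m := by
        rw [div_mul_eq_mul_div, div_le_div_iff₀ hD hB]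
        calc Real.sqrt ℓ * ((1+ε)^m * ℓ^m) * (m^m * Real.sqrt m)
            = (Real.sqrt ℓ * ℓ^m) * ((1+ε)^m * (m^m * Real.sqrt m)) := by ring
          _ ≤ (Real.sqrt ℓ * ℓ^m) * ((1 + a⁻¹) * Real.exp m * ((2:ℝ)^m * Real.Gamma (m+1))) :=
              mul_le_mul_of_nonneg_left hfin hA.le
          _ = (1 + a⁻¹) * (Real.sqrt ℓ * ℓ^m) * Real.exp m * ((2:ℝ)^m * Real.Gamma (m+1)) := by
              ring

theorem stmt7 (ε : ℝ) (hε : ε ∈ Set.Ioo (0:ℝ) 1) :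
    ∃ C : ℝ, 0 < C ∧ ∀ ℓ m : ℝ, memI ℓ m → 0 < m → m ≤ ε * ℓ →
      ∀ x ∈ Set.Icc (-1:ℝ) 1,
        |Yfun ℓ m x| ≤ C * bPt ℓ m ^ (-(m + 1/2)) *
          (Real.sqrt (1 - x ^ 2) * Real.exp 1) ^ m := by
  obtain ⟨hε0, hε1⟩ := hε
  have haC : 0 < Real.log (2/(1+ε)) := by
    apply Real.log_pos
    rw [lt_div_iff₀ (by linarith)]
    linarith
  refine ⟨1 + (Real.log (2/(1+ε)))⁻¹, by have := inv_pos.mpr haC; linarith, ?_⟩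
  rintro ℓ m ⟨⟨n, hn⟩, j, hj⟩ hm hme x hx
  have hn1 : 1 ≤ n := by
    rcases Nat.eq_zero_or_pos n with h | h
    · subst h; rw [hn] at hm; norm_num at hm
    · exact h
  have hl : ℓ = m + (j:ℝ) + 1/2 := by linarith [hj]
  have hlpos : 0 < ℓ := by
    rw [hl]; have := Nat.cast_nonneg (α := ℝ) j; linarith
  have hfloor : ⌊ℓ - m - 1/2⌋₊ = j := by rw [hj]; exact Nat.floor_natCast j
  rw [Yfun, hfloor]
  have h1mx : (0:ℝ) ≤ 1 - x^2 := by nlinarith [hx.1, hx.2]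
  have hGl : 0 < Real.Gamma (ℓ + 1/2) := Real.Gamma_pos_of_pos (by linarith)
  have h2m : (0:ℝ) < (2:ℝ)^m := Real.rpow_pos_of_pos (by norm_num) m
  have hc0 : 0 ≤ cConst ℓ m :=
    div_nonneg (Real.sqrt_nonneg _) (mul_pos h2m hGl).le
  have hRHSfac : (Real.sqrt (1-x^2) * Real.exp 1) ^ m = (1-x^2)^(m/2) * Real.exp 1 ^ m := by
    rw [Real.mul_rpow (Real.sqrt_nonneg _) (Real.exp_pos 1).le]
    congr 1
    rw [Real.sqrt_eq_rpow, ← Real.rpow_mul h1mx, show (1:ℝ)/2*m = m/2 by ring]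
  rcases eq_or_lt_of_le h1mx with hz | hz
  · have hm2 : m/2 ≠ 0 := (div_pos hm two_pos).ne'
    rw [hRHSfac, ← hz, Real.zero_rpow hm2]
    simp
  · have hxIoo : x ∈ Ioo (-1:ℝ) 1 := by
      constructor <;> nlinarith [hx.1, hx.2]
    rw [hRHSfac]
    have hjac : |jacobiP j m x| ≤ Ffall (m + (j:ℝ)) j / (Nat.factorial j : ℝ) := by
      rw [jacobiP_eq_Qfun m j hxIoo]
      exact abs_Qfun_le hm j ⟨hx.1, hx.2⟩
    have hkey := key_ineq ε ⟨hε0, hε1⟩ n j hn1 m ℓ hn hl hme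
    have hrp : 0 ≤ (1-x^2)^(m/2) := Real.rpow_nonneg h1mx _
    have habs : |cConst ℓ m * (1-x^2)^(m/2) * jacobiP j m x|
        = cConst ℓ m * (1-x^2)^(m/2) * |jacobiP j m x| := by
      rw [abs_mul, abs_mul, abs_of_nonneg hc0, abs_of_nonneg hrp]
    rw [habs]
    calc cConst ℓ m * (1-x^2)^(m/2) * |jacobiP j m x|
        ≤ cConst ℓ m * (1-x^2)^(m/2) * (Ffall (m + (j:ℝ)) j / (Nat.factorial j : ℝ)) :=
          mul_le_mul_of_nonneg_left hjac (mul_nonneg hc0 hrp)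
      _ = (cConst ℓ m * (Ffall (m + (j:ℝ)) j / (Nat.factorial j : ℝ))) * (1-x^2)^(m/2) := by
          ring
      _ ≤ ((1 + (Real.log (2/(1+ε)))⁻¹) * (m/ℓ) ^ (-(m+1/2)) * Real.exp 1 ^ m) * (1-x^2)^(m/2) :=
          mul_le_mul_of_nonneg_right hkey hrp
      _ = (1 + (Real.log (2/(1+ε)))⁻¹) * bPt ℓ m ^ (-(m+1/2)) * ((1-x^2)^(m/2) * Real.exp 1 ^ m) := by
          rw [bPt]; ring
end

section
/- For all (ℓ,m) ∈ I with m > 1, setting L_{ℓ,m}(x) = (1−x²)^{1/2} Y_{ℓ,m}(x) and x̄_{ℓ,m} = ((ℓ²−m²+3/4)/(ℓ²−1/4))^{1/2}, one has x̄_{ℓ,m} < 1 and L_{ℓ,m}(x) · L_{ℓ,m}'(x) < 0 for every x ∈ (x̄_{ℓ,m}, 1). -/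
open Real Set

/-- `L_{ℓ,m}(x) = (1-x²)^{1/2} Y_{ℓ,m}(x)`. -/
noncomputable def Lfun (ℓ m : ℝ) : ℝ → ℝ := fun x => Real.sqrt (1 - x ^ 2) * Yfun ℓ m x

/-- The turning point `x̄_{ℓ,m}`. -/
noncomputable def xbar (ℓ m : ℝ) : ℝ :=
  Real.sqrt ((ℓ ^ 2 - m ^ 2 + 3/4) / (ℓ ^ 2 - 1/4))

open Polynomial Filter

lemma wpos {x : ℝ} (hx : x ∈ Ioo (-1:ℝ) 1) : 0 < 1 - x ^ 2 := by
  rcases hx with ⟨h1, h2⟩; nlinarith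

lemma auxDiff {F : ℝ → ℝ} {s : Set ℝ} (hs : IsOpen s) (hF : ContDiffOn ℝ (⊤ : ℕ∞) F s)
    (k : ℕ) {x : ℝ} (hx : x ∈ s) : DifferentiableAt ℝ (iteratedDeriv k F) x := by
  have hev : iteratedDerivWithin k F s =ᶠ[nhds x] iteratedDeriv k F := by
    filter_upwards [hs.mem_nhds hx] with t ht
    rw [iteratedDerivWithin_eq_iteratedFDerivWithin, iteratedDeriv_eq_iteratedFDeriv,
      iteratedFDerivWithin_of_isOpen k hs ht]
  have h1 : DifferentiableWithinAt ℝ (iteratedDerivWithin k F s) s x :=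
    hF.differentiableOn_iteratedDerivWithin (by exact_mod_cast WithTop.coe_lt_top k)
      hs.uniqueDiffOn x hx
  exact (h1.differentiableAt (hs.mem_nhds hx)).congr_of_eventuallyEq hev.symm

lemma hasDerivAt_wpow (β : ℝ) {x : ℝ} (hx : 1 - x ^ 2 ≠ 0) :
    HasDerivAt (fun t : ℝ => (1 - t ^ 2) ^ β) ((-2 * x) * β * (1 - x ^ 2) ^ (β - 1)) x := by
  have h : HasDerivAt (fun t : ℝ => 1 - t ^ 2) (-2 * x) x := by
    simpa using ((hasDerivAt_pow 2 x).const_sub 1)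
  exact h.rpow_const (Or.inl hx)

lemma auxSmooth (β : ℝ) : ContDiffOn ℝ (⊤ : ℕ∞) (fun t : ℝ => (1 - t ^ 2) ^ β) (Ioo (-1:ℝ) 1) := by
  apply ContDiffOn.rpow_const_of_ne
  · exact (contDiff_const.sub (contDiff_id.pow 2)).contDiffOn
  · intro x hx; rcases hx with ⟨h1, h2⟩; nlinarith

lemma hasDerivAt_iteratedDeriv_wpow (β : ℝ) (k : ℕ) {x : ℝ} (hx : x ∈ Ioo (-1:ℝ) 1) :
    HasDerivAt (iteratedDeriv k (fun t : ℝ => (1 - t ^ 2) ^ β))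
      (iteratedDeriv (k+1) (fun t : ℝ => (1 - t ^ 2) ^ β) x) x := by
  have h := (auxDiff isOpen_Ioo (auxSmooth β) k hx).hasDerivAt
  rwa [← iteratedDeriv_succ] at h

lemma odeChain (β : ℝ) (k : ℕ) : ∀ x ∈ Ioo (-1:ℝ) 1,
    (1 - x ^ 2) * iteratedDeriv (k+1) (fun t : ℝ => (1 - t ^ 2) ^ β) x
      + (2*β - 2*k) * x * iteratedDeriv k (fun t : ℝ => (1 - t ^ 2) ^ β) x
      + (k * (2*β - k + 1)) * iteratedDeriv (k-1) (fun t : ℝ => (1 - t ^ 2) ^ β) x = 0 := by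
  set F : ℝ → ℝ := fun t : ℝ => (1 - t ^ 2) ^ β with hF
  induction k with
  | zero =>
    intro x hx
    have hw := wpos hx
    have h1 : iteratedDeriv 1 F x = (-2 * x) * β * (1 - x ^ 2) ^ (β - 1) := by
      rw [iteratedDeriv_one]
      exact (hasDerivAt_wpow β hw.ne').deriv
    have h0 : iteratedDeriv 0 F x = (1 - x ^ 2) ^ β := by rw [iteratedDeriv_zero]
    rw [h1]
    simp only [Nat.cast_zero, Nat.zero_sub, h0]
    have hpow : (1 - x ^ 2) * (1 - x ^ 2) ^ (β - 1) = (1 - x ^ 2) ^ β := by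
      rw [Real.rpow_sub hw, Real.rpow_one]; field_simp
    linear_combination (-2*x*β) * hpow
  | succ k ih =>
    intro x hx
    set G : ℝ → ℝ := fun t =>
      (1 - t ^ 2) * iteratedDeriv (k+1) F t + (2*β - 2*k) * t * iteratedDeriv k F t
        + (k * (2*β - k + 1)) * iteratedDeriv (k-1) F t with hG
    have hG0 : ∀ t ∈ Ioo (-1:ℝ) 1, G t = 0 := ih
    have hDG : deriv G x = 0 := by
      have hev : G =ᶠ[nhds x] fun _ => 0 := by
        filter_upwards [isOpen_Ioo.mem_nhds hx] with t ht using hG0 t ht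
      rw [hev.deriv_eq, deriv_const]
    have hq : HasDerivAt (fun t : ℝ => 1 - t ^ 2) (-2 * x) x := by
      simpa using ((hasDerivAt_pow 2 x).const_sub 1)
    have hid : HasDerivAt (fun t : ℝ => t) 1 x := hasDerivAt_id x
    have d1 := hasDerivAt_iteratedDeriv_wpow β (k+1) hx
    have d0 := hasDerivAt_iteratedDeriv_wpow β k hx
    have dm := hasDerivAt_iteratedDeriv_wpow β (k-1) hx
    have hDG2 : HasDerivAt G
        ((1 - x ^ 2) * iteratedDeriv (k+2) F x + (-2 * x) * iteratedDeriv (k+1) F x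
          + ((2*β - 2*k) * x * iteratedDeriv (k+1) F x + (2*β - 2*k) * iteratedDeriv k F x)
          + (k * (2*β - k + 1)) * iteratedDeriv (k-1+1) F x) x := by
      exact (((hq.mul d1).add (((hid.const_mul (2*β - 2*k)).mul d0))).add
        ((dm.const_mul (k * (2*β - k + 1))))).congr_deriv (by ring)
    have hkey := hDG2.deriv
    rw [hDG] at hkey
    have hkm : k - 1 + 1 = k ∨ k = 0 := by omega
    rcases hkm with h | h
    · rw [h] at hkey
      simp only [Nat.add_sub_cancel]
      push_cast
      linarith [hkey, sq_nonneg x]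
    · subst h
      norm_num [iteratedDeriv_zero] at hkey ⊢
      linarith [hkey]

lemma polyRep (β : ℝ) (k : ℕ) (hk : (k:ℝ) < β) :
    ∃ Q : Polynomial ℝ, Q.eval 1 ≠ 0 ∧ ∀ x ∈ Ioo (-1:ℝ) 1,
      iteratedDeriv k (fun t : ℝ => (1 - t ^ 2) ^ β) x = (1 - x ^ 2) ^ (β - k) * Q.eval x := by
  set F : ℝ → ℝ := fun t : ℝ => (1 - t ^ 2) ^ β with hF
  induction k with
  | zero =>
    refine ⟨1, by norm_num, fun x hx => ?_⟩
    simp [iteratedDeriv_zero]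
    rfl
  | succ k ih =>
    have hk' : (k : ℝ) < β := by push_cast at hk ⊢; linarith
    obtain ⟨Q, hQ1, hQ⟩ := ih hk'
    refine ⟨(1 - X^2) * derivative Q - C (2*(β - k)) * (X * Q), ?_, fun x hx => ?_⟩
    · simp only [eval_sub, eval_mul, eval_one, eval_pow, eval_X, eval_C, eval_sub]
      have : β - (k:ℝ) ≠ 0 := by linarith
      norm_num
      exact ⟨fun h => this (by linarith), hQ1⟩
    · have hw := wpos hx
      have hR : HasDerivAt (fun t : ℝ => (1 - t ^ 2) ^ (β - k) * Q.eval t)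
          ((-2 * x) * (β - k) * (1 - x ^ 2) ^ (β - k - 1) * Q.eval x
            + (1 - x ^ 2) ^ (β - k) * Q.derivative.eval x) x :=
        (hasDerivAt_wpow (β - k) hw.ne').mul (Q.hasDerivAt x)
      have hev : iteratedDeriv k F =ᶠ[nhds x] fun t => (1 - t ^ 2) ^ (β - k) * Q.eval t := by
        filter_upwards [isOpen_Ioo.mem_nhds hx] with t ht using hQ t ht
      have hder : iteratedDeriv (k+1) F x
          = (-2 * x) * (β - k) * (1 - x ^ 2) ^ (β - k - 1) * Q.eval x
            + (1 - x ^ 2) ^ (β - k) * Q.derivative.eval x := by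
        rw [iteratedDeriv_succ, hev.deriv_eq, hR.deriv]
      rw [hder]
      have hpow : (1 - x ^ 2) ^ (β - k) = (1 - x ^ 2) ^ (β - k - 1) * (1 - x ^ 2) := by
        rw [show β - (k:ℝ) = (β - k - 1) + 1 by ring, Real.rpow_add hw, Real.rpow_one]; ring_nf
      have hcast : β - ((k:ℝ) + 1) = β - k - 1 := by ring
      push_cast
      rw [hcast]
      simp only [eval_sub, eval_mul, eval_one, eval_pow, eval_X, eval_C]
      rw [hpow]
      ring

set_option maxHeartbeats 2000000 in
theorem stmt13 (ℓ m : ℝ) (hI : memI ℓ m) (hm : 1 < m) :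
    xbar ℓ m < 1 ∧
    ∀ x ∈ Set.Ioo (xbar ℓ m) 1, Lfun ℓ m x * deriv (Lfun ℓ m) x < 0 := by
  obtain ⟨⟨n, hn⟩, ⟨j, hj⟩⟩ := hI
  have hℓ : ℓ = (j:ℝ) + m + 1/2 := by linarith
  have hm32 : (3:ℝ)/2 ≤ m := by
    have hn3 : (3:ℕ) ≤ n := by
      by_contra h
      interval_cases n <;> (rw [hn] at hm; norm_num at hm)
    have : (3:ℝ) ≤ (n:ℝ) := by exact_mod_cast hn3
    rw [hn]; linarith
  have hℓ2 : (2:ℝ) ≤ ℓ := by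
    have : (0:ℝ) ≤ j := Nat.cast_nonneg j
    linarith
  -- turning point facts
  have hB : (0:ℝ) < ℓ^2 - 1/4 := by nlinarith
  have hA : (0:ℝ) < ℓ^2 - m^2 + 3/4 := by nlinarith [(Nat.cast_nonneg j : (0:ℝ) ≤ (j:ℝ))]
  have hAB : (ℓ^2 - m^2 + 3/4) / (ℓ^2 - 1/4) < 1 := by
    rw [div_lt_one hB]; nlinarith
  have hxbar_lt : xbar ℓ m < 1 := by
    have h := Real.sqrt_lt_sqrt (le_of_lt (div_pos hA hB)) hAB
    rwa [Real.sqrt_one] at h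
  have hxbar_nonneg : 0 ≤ xbar ℓ m := Real.sqrt_nonneg _
  have hxbar_sq : xbar ℓ m ^ 2 = (ℓ^2 - m^2 + 3/4) / (ℓ^2 - 1/4) :=
    Real.sq_sqrt (le_of_lt (div_pos hA hB))
  refine ⟨hxbar_lt, ?_⟩
  -- setup
  set F : ℝ → ℝ := fun t : ℝ => (1 - t ^ 2) ^ (m + (j:ℝ)) with hFdef
  set K : ℝ := cConst ℓ m * ((-1 : ℝ) ^ j / (2 ^ j * (Nat.factorial j : ℝ))) with hKdef
  have hc : 0 < cConst ℓ m := by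
    rw [cConst]
    apply div_pos
    · apply Real.sqrt_pos.mpr
      have h1 : 0 < Real.Gamma (ℓ - m + 1/2) := Real.Gamma_pos_of_pos (by have := (Nat.cast_nonneg j : (0:ℝ) ≤ (j:ℝ)); linarith)
      have h2 : 0 < Real.Gamma (ℓ + m + 1/2) := Real.Gamma_pos_of_pos (by nlinarith)
      have h3 : (0:ℝ) < ℓ := by linarith
      positivity
    · have h4 : 0 < Real.Gamma (ℓ + 1/2) := Real.Gamma_pos_of_pos (by linarith)
      positivity
  have hK : K ≠ 0 := by
    rw [hKdef]
    apply mul_ne_zero hc.ne'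
    apply div_ne_zero
    · exact pow_ne_zero _ (by norm_num)
    · positivity
  have hfl : ⌊ℓ - m - 1/2⌋₊ = j := by rw [hj]; exact Nat.floor_natCast j
  set γ : ℝ := (1 - m)/2 with hγdef
  -- representation of Lfun
  have hLrep : ∀ x ∈ Ioo (-1:ℝ) 1, Lfun ℓ m x
      = K * ((1 - x^2) ^ γ * iteratedDeriv j F x) := by
    intro x hx
    have hw := wpos hx
    rw [Lfun]
    simp only [Yfun, jacobiP, hfl, ← hFdef]
    have hs : Real.sqrt (1 - x^2) = (1 - x^2) ^ ((1:ℝ)/2) := Real.sqrt_eq_rpow _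
    rw [hs]
    have hcomb : (1 - x^2) ^ ((1:ℝ)/2) * (1 - x^2) ^ (m/2) * (1 - x^2) ^ (-m) = (1 - x^2) ^ γ := by
      rw [← Real.rpow_add hw, ← Real.rpow_add hw, hγdef]
      ring_nf
    calc (1 - x^2) ^ ((1:ℝ)/2) * (cConst ℓ m * (1 - x^2) ^ (m/2) *
          ((-1 : ℝ) ^ j / (2 ^ j * (Nat.factorial j : ℝ)) * (1 - x^2) ^ (-m) * iteratedDeriv j F x))
        = ((1 - x^2) ^ ((1:ℝ)/2) * (1 - x^2) ^ (m/2) * (1 - x^2) ^ (-m)) * (K * iteratedDeriv j F x) := by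
          rw [hKdef]; ring
      _ = K * ((1 - x^2) ^ γ * iteratedDeriv j F x) := by rw [hcomb]; ring
  -- the ODE satisfied by y = iteratedDeriv j F
  have hODE : ∀ x ∈ Ioo (-1:ℝ) 1,
      (1 - x^2) * iteratedDeriv (j+2) F x
        = (2 - 2*m) * x * iteratedDeriv (j+1) F x
          - ((j:ℝ)+1) * (2*m + j) * iteratedDeriv j F x := by
    intro x hx
    have h := odeChain (m + (j:ℝ)) (j+1) x hx
    rw [show j + 1 + 1 = j + 2 from rfl, Nat.add_sub_cancel] at h
    rw [← hFdef] at h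
    push_cast at h ⊢
    linarith [h]
  -- explicit first and second derivative forms
  set Lf : ℝ → ℝ := fun x => K * ((1 - x^2) ^ γ * iteratedDeriv j F x) with hLfdef
  set L1f : ℝ → ℝ := fun x => K * ((1 - x^2) ^ γ * iteratedDeriv (j+1) F x
      + γ * (-2*x) * (1 - x^2) ^ (γ-1) * iteratedDeriv j F x) with hL1fdef
  set Ef : ℝ → ℝ := fun x => K * ((1 - x^2) ^ γ * iteratedDeriv (j+2) F x
      + 2 * (γ * (-2*x) * (1 - x^2) ^ (γ-1)) * iteratedDeriv (j+1) F x
      + (γ * (-2) * (1 - x^2) ^ (γ-1) + γ * (γ-1) * (4*x^2) * (1 - x^2) ^ (γ-2))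
          * iteratedDeriv j F x) with hEfdef
  have hLf' : ∀ x ∈ Ioo (-1:ℝ) 1, HasDerivAt Lf (L1f x) x := by
    intro x hx
    have hw := wpos hx
    have h1 := (hasDerivAt_wpow γ hw.ne').mul (hasDerivAt_iteratedDeriv_wpow (m + (j:ℝ)) j hx)
    rw [← hFdef] at h1
    exact (h1.const_mul K).congr_deriv (by rw [hL1fdef]; ring)
  have hL1f' : ∀ x ∈ Ioo (-1:ℝ) 1, HasDerivAt L1f (Ef x) x := by
    intro x hx
    have hw := wpos hx
    have ha := (hasDerivAt_wpow γ hw.ne').mul (hasDerivAt_iteratedDeriv_wpow (m + (j:ℝ)) (j+1) hx)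
    have hlin : HasDerivAt (fun t : ℝ => γ * (-2*t)) (γ * (-2)) x := by
      simpa using ((hasDerivAt_id x).const_mul (-2:ℝ)).const_mul γ
    have hb := ((hlin.mul (hasDerivAt_wpow (γ-1) hw.ne')).mul
      (hasDerivAt_iteratedDeriv_wpow (m + (j:ℝ)) j hx))
    rw [← hFdef] at ha hb
    rw [show j + 1 + 1 = j + 2 from rfl] at ha
    have hc := (ha.add hb).const_mul K
    refine hc.congr_deriv ?_
    rw [hEfdef]
    have hpow : (1 - x^2) ^ (γ - 1 - 1) = (1 - x^2) ^ (γ - 2) := by rw [show γ - 1 - 1 = γ - 2 by ring]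
    rw [hpow]
    simp only [Pi.mul_apply]
    ring
  -- the second-order ODE for Lf
  have hEq : ∀ x ∈ Ioo (-1:ℝ) 1, Ef x * (1 - x^2)^2
      = -(((ℓ^2 - m^2 + 3/4) - (ℓ^2 - 1/4) * x^2)) * Lf x := by
    intro x hx
    have hw := wpos hx
    have e1 : (1 - x^2) ^ γ = (1 - x^2) ^ (γ - 2) * ((1 - x^2) * (1 - x^2)) := by
      rw [show γ = (γ - 2) + 1 + 1 by ring, Real.rpow_add hw, Real.rpow_add hw, Real.rpow_one]
      ring_nf
    have e2 : (1 - x^2) ^ (γ - 1) = (1 - x^2) ^ (γ - 2) * (1 - x^2) := by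
      rw [show γ - 1 = (γ - 2) + 1 by ring, Real.rpow_add hw, Real.rpow_one]
    have hode := hODE x hx
    rw [hEfdef, hLfdef]
    simp only [e1, e2]
    rw [hγdef] at *
    rw [hℓ]
    linear_combination (K * ((1 - x^2) ^ ((1 - m)/2 - 2)) * (1 - x^2) * (1 - x^2)^2) * hode
  have hsub : Ioo (xbar ℓ m) 1 ⊆ Ioo (-1:ℝ) 1 := by
    intro x hx; exact ⟨by linarith [hx.1, hxbar_nonneg], hx.2⟩
  have hderivL : ∀ x ∈ Ioo (-1:ℝ) 1, deriv (Lfun ℓ m) x = L1f x := by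
    intro x hx
    have hev : Lfun ℓ m =ᶠ[nhds x] Lf := by
      filter_upwards [isOpen_Ioo.mem_nhds hx] with t ht
      rw [hLfdef]; exact hLrep t ht
    rw [hev.deriv_eq, (hLf' x hx).deriv]
  have hgderiv : ∀ x ∈ Ioo (-1:ℝ) 1,
      HasDerivAt (fun t => Lfun ℓ m t * deriv (Lfun ℓ m) t)
        (L1f x * L1f x + Lf x * Ef x) x := by
    intro x hx
    have h1 : HasDerivAt (fun t => Lf t * L1f t) (L1f x * L1f x + Lf x * Ef x) x :=
      ((hLf' x hx).mul (hL1f' x hx)).congr_deriv (by ring)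
    apply h1.congr_of_eventuallyEq
    filter_upwards [isOpen_Ioo.mem_nhds hx] with t ht
    rw [hLrep t ht, hderivL t ht, hLfdef]
  have hN : ∀ x ∈ Ioo (xbar ℓ m) 1, ((ℓ^2 - m^2 + 3/4) - (ℓ^2 - 1/4) * x^2) < 0 := by
    intro x hx
    have h2 : xbar ℓ m ^ 2 < x ^ 2 := by nlinarith [hx.1, hxbar_nonneg]
    rw [hxbar_sq] at h2
    have h3 := (div_lt_iff₀ hB).mp h2
    nlinarith
  have hLfEf : ∀ x ∈ Ioo (xbar ℓ m) 1, 0 ≤ Lf x * Ef x := by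
    intro x hx
    have hx' := hsub hx
    have hw := wpos hx'
    have hE := hEq x hx'
    have hNx := hN x hx
    have h4 : Lf x * Ef x * ((1 - x^2)^2)
        = -(((ℓ^2 - m^2 + 3/4) - (ℓ^2 - 1/4) * x^2)) * Lf x ^ 2 := by
      linear_combination (Lf x) * hE
    have h5 : 0 ≤ (-(((ℓ^2 - m^2 + 3/4) - (ℓ^2 - 1/4) * x^2))) * Lf x ^ 2 :=
      mul_nonneg (by linarith) (sq_nonneg _)
    have h6 : 0 < ((1:ℝ) - x^2)^2 := by positivity
    exact (mul_nonneg_iff_of_pos_right h6).mp (by rw [h4]; exact h5)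
  have hgd : ∀ x ∈ Ioo (xbar ℓ m) 1,
      0 ≤ deriv (fun t => Lfun ℓ m t * deriv (Lfun ℓ m) t) x := by
    intro x hx
    rw [(hgderiv x (hsub hx)).deriv]
    exact add_nonneg (mul_self_nonneg _) (hLfEf x hx)
  have hmono : MonotoneOn (fun t => Lfun ℓ m t * deriv (Lfun ℓ m) t) (Ioo (xbar ℓ m) 1) := by
    apply monotoneOn_of_deriv_nonneg (convex_Ioo _ _)
    · intro x hx
      exact ((hgderiv x (hsub hx)).differentiableAt.continuousAt).continuousWithinAt
    · intro x hx
      rw [interior_Ioo] at hx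
      exact ((hgderiv x (hsub hx)).differentiableAt).differentiableWithinAt
    · intro x hx
      rw [interior_Ioo] at hx
      exact hgd x hx
  -- polynomial representations
  obtain ⟨Q, hQne, hQrep⟩ := polyRep (m + (j:ℝ)) j (by linarith)
  obtain ⟨Q1, hQ1ne, hQ1rep⟩ := polyRep (m + (j:ℝ)) (j+1) (by push_cast; linarith)
  have hLfrep2 : ∀ x ∈ Ioo (-1:ℝ) 1,
      Lf x = K * ((1 - x^2) ^ ((m+1)/2) * Q.eval x) := by
    intro x hx
    have hw := wpos hx
    have hy := hQrep x hx
    rw [← hFdef] at hy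
    rw [show m + (j:ℝ) - (j:ℝ) = m by ring] at hy
    rw [hLfdef]
    simp only
    rw [hy]
    have e : (1 - x^2) ^ γ * (1 - x^2) ^ m = (1 - x^2) ^ ((m+1)/2) := by
      rw [← Real.rpow_add hw, hγdef, show (1 - m)/2 + m = (m+1)/2 by ring]
    rw [← e]; ring
  have hL1frep2 : ∀ x ∈ Ioo (-1:ℝ) 1,
      L1f x = K * ((1 - x^2) ^ ((m-1)/2) * (Q1.eval x + γ * (-2*x) * Q.eval x)) := by
    intro x hx
    have hw := wpos hx
    have hy := hQrep x hx
    have hy1 := hQ1rep x hx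
    rw [← hFdef] at hy hy1
    rw [show m + (j:ℝ) - (j:ℝ) = m by ring] at hy
    push_cast at hy1
    rw [show m + (j:ℝ) - ((j:ℝ)+1) = m - 1 by ring] at hy1
    rw [hL1fdef]
    simp only
    rw [hy, hy1]
    have e1 : (1 - x^2) ^ γ * (1 - x^2) ^ (m - 1) = (1 - x^2) ^ ((m-1)/2) := by
      rw [← Real.rpow_add hw, hγdef, show (1 - m)/2 + (m - 1) = (m-1)/2 by ring]
    have e2 : (1 - x^2) ^ (γ - 1) * (1 - x^2) ^ m = (1 - x^2) ^ ((m-1)/2) := by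
      rw [← Real.rpow_add hw, hγdef, show (1 - m)/2 - 1 + m = (m-1)/2 by ring]
    linear_combination (K * Q1.eval x) * e1 + (K * γ * (-2*x) * Q.eval x) * e2
  -- limits at 1
  have hbase : Tendsto (fun x : ℝ => 1 - x^2) (nhdsWithin 1 (Ioo (xbar ℓ m) 1)) (nhds 0) := by
    have hcont : Continuous (fun x : ℝ => 1 - x^2) := by
      exact continuous_const.sub (continuous_pow 2)
    have h := (hcont.tendsto (1:ℝ)).mono_left
      (nhdsWithin_le_nhds (s := Ioo (xbar ℓ m) 1))
    simpa using h
  have hrp : ∀ p : ℝ, 0 < p →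
      Tendsto (fun x : ℝ => (1 - x^2) ^ p) (nhdsWithin 1 (Ioo (xbar ℓ m) 1)) (nhds 0) := by
    intro p hp
    have hc : ContinuousAt (fun u : ℝ => u ^ p) 0 :=
      Real.continuousAt_rpow_const 0 p (Or.inr hp.le)
    have h := hc.tendsto.comp hbase
    rw [Real.zero_rpow hp.ne'] at h
    exact h
  have hLf_lim : Tendsto Lf (nhdsWithin 1 (Ioo (xbar ℓ m) 1)) (nhds 0) := by
    have hQt : Tendsto (fun x : ℝ => Q.eval x) (nhdsWithin 1 (Ioo (xbar ℓ m) 1))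
        (nhds (Q.eval 1)) := ((Polynomial.continuous Q).tendsto 1).mono_left nhdsWithin_le_nhds
    have h := ((hrp ((m+1)/2) (by linarith)).mul hQt).const_mul K
    rw [show K * ((0:ℝ) * Q.eval 1) = 0 by ring] at h
    apply h.congr'
    filter_upwards [self_mem_nhdsWithin] with t ht
    exact (hLfrep2 t (hsub ht)).symm
  have hL1f_lim : Tendsto L1f (nhdsWithin 1 (Ioo (xbar ℓ m) 1)) (nhds 0) := by
    have hQt : Tendsto (fun x : ℝ => Q1.eval x + γ * (-2*x) * Q.eval x)
        (nhdsWithin 1 (Ioo (xbar ℓ m) 1))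
        (nhds (Q1.eval 1 + γ * (-2*1) * Q.eval 1)) := by
      have hcont : Continuous (fun x : ℝ => Q1.eval x + γ * (-2*x) * Q.eval x) :=
        (Polynomial.continuous Q1).add
          ((continuous_const.mul (continuous_const.mul continuous_id)).mul
            (Polynomial.continuous Q))
      exact (hcont.tendsto 1).mono_left nhdsWithin_le_nhds
    have h := ((hrp ((m-1)/2) (by linarith)).mul hQt).const_mul K
    rw [show K * ((0:ℝ) * (Q1.eval 1 + γ * (-2*1) * Q.eval 1)) = 0 by ring] at h
    apply h.congr'
    filter_upwards [self_mem_nhdsWithin] with t ht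
    exact (hL1frep2 t (hsub ht)).symm
  have hg_lim : Tendsto (fun t => Lfun ℓ m t * deriv (Lfun ℓ m) t)
      (nhdsWithin 1 (Ioo (xbar ℓ m) 1)) (nhds 0) := by
    have h := hLf_lim.mul hL1f_lim
    rw [mul_zero] at h
    apply h.congr'
    filter_upwards [self_mem_nhdsWithin] with t ht
    rw [hLrep t (hsub ht), hderivL t (hsub ht), hLfdef]
  -- g is nonpositive on the interval
  have hgle : ∀ x ∈ Ioo (xbar ℓ m) 1, Lfun ℓ m x * deriv (Lfun ℓ m) x ≤ 0 := by
    intro x hx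
    have hss : Ioo x 1 ⊆ Ioo (xbar ℓ m) 1 := fun t ht => ⟨lt_trans hx.1 ht.1, ht.2⟩
    have hNB2 : (nhdsWithin (1:ℝ) (Ioo x 1)).NeBot := by
      apply mem_closure_iff_nhdsWithin_neBot.mp
      rw [closure_Ioo hx.2.ne]
      exact ⟨hx.2.le, le_refl 1⟩
    have htd := hg_lim.mono_left (nhdsWithin_mono 1 hss)
    apply ge_of_tendsto htd
    filter_upwards [self_mem_nhdsWithin] with t ht
    exact hmono hx (hss ht) ht.1.le
  -- final strict inequality
  intro x0 hx0
  rcases lt_or_eq_of_le (hgle x0 hx0) with h | h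
  · exact h
  · exfalso
    -- g ≡ 0 on (x0, 1)
    have hss : Ioo x0 1 ⊆ Ioo (xbar ℓ m) 1 := fun t ht => ⟨lt_trans hx0.1 ht.1, ht.2⟩
    have hzero : ∀ x ∈ Ioo x0 1, Lfun ℓ m x * deriv (Lfun ℓ m) x = 0 := by
      intro x hx
      have h1 := hgle x (hss hx)
      have h2 := hmono hx0 (hss hx) hx.1.le
      simp only at h2
      linarith [h1, h2, h]
    have hLf0 : ∀ x ∈ Ioo x0 1, Q.eval x = 0 := by
      intro x hx
      have hx' := hss hx
      have hxI := hsub hx'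
      have hw := wpos hxI
      have hder0 : deriv (fun t => Lfun ℓ m t * deriv (Lfun ℓ m) t) x = 0 := by
        have hev : (fun t => Lfun ℓ m t * deriv (Lfun ℓ m) t) =ᶠ[nhds x] fun _ => 0 := by
          filter_upwards [isOpen_Ioo.mem_nhds hx] with t ht using hzero t ht
        rw [hev.deriv_eq, deriv_const]
      rw [(hgderiv x hxI).deriv] at hder0
      have h1 := hLfEf x hx'
      have h2 : Lf x * Ef x = 0 := by nlinarith [mul_self_nonneg (L1f x)]
      have hE := hEq x hxI
      have hNx := hN x hx'
      have h4 : Lf x * Ef x * ((1 - x^2)^2)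
          = -(((ℓ^2 - m^2 + 3/4) - (ℓ^2 - 1/4) * x^2)) * Lf x ^ 2 := by
        linear_combination (Lf x) * hE
      rw [h2, zero_mul] at h4
      have h5 : Lf x ^ 2 = 0 := by
        rcases mul_eq_zero.mp h4.symm with h6 | h6
        · exact absurd h6 (by intro hc; linarith)
        · exact h6
      have h7 : Lf x = 0 := by
        have := sq_eq_zero_iff.mp h5
        exact this
      rw [hLfrep2 x hxI] at h7
      have h8 : (1 - x^2) ^ ((m+1)/2) ≠ 0 := by
        exact (Real.rpow_pos_of_pos hw _).ne'
      rcases mul_eq_zero.mp h7 with h9 | h9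
      · exact absurd h9 hK
      · rcases mul_eq_zero.mp h9 with h10 | h10
        · exact absurd h10 h8
        · exact h10
    have hNB2 : (nhdsWithin (1:ℝ) (Ioo x0 1)).NeBot := by
      apply mem_closure_iff_nhdsWithin_neBot.mp
      rw [closure_Ioo hx0.2.ne]
      exact ⟨hx0.2.le, le_refl 1⟩
    have hQt : Tendsto (fun x : ℝ => Q.eval x) (nhdsWithin 1 (Ioo x0 1))
        (nhds (Q.eval 1)) := ((Polynomial.continuous Q).tendsto 1).mono_left nhdsWithin_le_nhds
    have hQ0 : Tendsto (fun x : ℝ => Q.eval x) (nhdsWithin 1 (Ioo x0 1)) (nhds 0) := by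
      apply Tendsto.congr' ?_ tendsto_const_nhds
      filter_upwards [self_mem_nhdsWithin] with t ht
      exact (hLf0 t ht).symm
    exact hQne (tendsto_nhds_unique hQt hQ0)
end
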